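/- arXiv:2111.06055 — 10 statements merged into one kernel-verified Lean document; each statement's English description precedes it below -/
import Mathlib

section
/- Let (X,f) be a dynamical system. If a pair of points x,y ∈ X is α-DC1-scrambled for some α ∈ 𝒜, then x,y is DC1-scrambled. -/
open Filter Topology MeasureTheory
open scoped ENNReal NNReal

section Chaos

variable {X : Type*} [MetricSpace X]

/-- `Φ_{xy}^{(n)}(t,f)`: the fraction of times `0 ≤ i ≤ n-1` at which the orbits of
`x` and `y` are `t`-close. -/
noncomputable def PhiN (f : X → X) (x y : X) (t : ℝ) (n : ℕ) : ℝ :=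
  ((Finset.range n).filter (fun i => dist (f^[i] x) (f^[i] y) < t)).card / n

/-- `Φ_{xy}(t,f) = liminf_n Φ_{xy}^{(n)}(t,f)`. -/
noncomputable def PhiInf (f : X → X) (x y : X) (t : ℝ) : ℝ :=
  Filter.liminf (fun n => PhiN f x y t n) Filter.atTop

/-- `Φ*_{xy}(t,f) = limsup_n Φ_{xy}^{(n)}(t,f)`. -/
noncomputable def PhiSup (f : X → X) (x y : X) (t : ℝ) : ℝ :=
  Filter.limsup (fun n => PhiN f x y t n) Filter.atTop

/-- `Φ_{xy}^{(n)}(t,f,α)`. -/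
noncomputable def PhiNA (f : X → X) (x y : X) (t : ℝ) (α : ℕ → ℝ) (n : ℕ) : ℝ :=
  ((Finset.Icc 1 n).filter
    (fun i => ∑ j ∈ Finset.range i, dist (f^[j] x) (f^[j] y) < α i * t)).card / n

/-- `Φ*_{xy}(t,f,α) = limsup_n Φ_{xy}^{(n)}(t,f,α)`. -/
noncomputable def PhiSupA (f : X → X) (x y : X) (t : ℝ) (α : ℕ → ℝ) : ℝ :=
  Filter.limsup (fun n => PhiNA f x y t α n) Filter.atTop

/-- The class `𝒜` of nondecreasing maps `α : ℕ → [0,∞)` with `α(n) → ∞` and `α(n)/n → 0`. -/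
def MemA (α : ℕ → ℝ) : Prop :=
  Monotone α ∧ (∀ n, 0 ≤ α n) ∧ Tendsto α atTop atTop ∧
    Tendsto (fun n : ℕ => α n / n) atTop (nhds 0)

/-- A pair `x, y` is DC1-scrambled. -/
def DC1Scrambled (f : X → X) (x y : X) : Prop :=
  (∃ t₀ > (0:ℝ), PhiInf f x y t₀ = 0) ∧ ∀ t > (0:ℝ), PhiSup f x y t = 1

/-- A pair `x, y` is `α`-DC1-scrambled. -/
def ADC1Scrambled (f : X → X) (α : ℕ → ℝ) (x y : X) : Prop :=
  (∃ t₀ > (0:ℝ), PhiInf f x y t₀ = 0) ∧ ∀ t > (0:ℝ), PhiSupA f x y t α = 1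

/-- A set is 1-chaotic if it contains an uncountable DC1-scrambled set. -/
def OneChaotic (f : X → X) (Y : Set X) : Prop :=
  ∃ S : Set X, S ⊆ Y ∧ ¬ S.Countable ∧
    ∀ x ∈ S, ∀ y ∈ S, x ≠ y → DC1Scrambled f x y

/-- A set is strongly distributional chaotic if, for every `α ∈ 𝒜`, it contains an
uncountable `α`-DC1-scrambled set. -/
def StronglyDistributionalChaotic (f : X → X) (Y : Set X) : Prop :=
  ∀ α : ℕ → ℝ, MemA α → ∃ S : Set X, S ⊆ Y ∧ ¬ S.Countable ∧
    ∀ x ∈ S, ∀ y ∈ S, x ≠ y → ADC1Scrambled f α x y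

end Chaos

section Aux

variable {X : Type*} [MetricSpace X]

lemma PhiN_nonneg (f : X → X) (x y : X) (t : ℝ) (n : ℕ) : 0 ≤ PhiN f x y t n := by
  unfold PhiN; positivity

lemma PhiN_le_one (f : X → X) (x y : X) (t : ℝ) (n : ℕ) : PhiN f x y t n ≤ 1 := by
  unfold PhiN
  rcases Nat.eq_zero_or_pos n with h | h
  · simp [h]
  · rw [div_le_one (by exact_mod_cast h)]
    exact_mod_cast (Finset.card_filter_le _ _).trans (by simp)

lemma PhiNA_nonneg (f : X → X) (x y : X) (t : ℝ) (α : ℕ → ℝ) (n : ℕ) :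
    0 ≤ PhiNA f x y t α n := by
  unfold PhiNA; positivity

lemma PhiNA_le_one (f : X → X) (x y : X) (t : ℝ) (α : ℕ → ℝ) (n : ℕ) :
    PhiNA f x y t α n ≤ 1 := by
  unfold PhiNA
  rcases Nat.eq_zero_or_pos n with h | h
  · simp [h]
  · rw [div_le_one (by exact_mod_cast h)]
    exact_mod_cast (Finset.card_filter_le _ _).trans (by simp [Nat.card_Icc])

lemma phiN_estimate (f : X → X) (x y : X) {s : ℝ} (hs : 0 < s) {c : ℝ} {i : ℕ}
    (hi : 1 ≤ i)
    (hsum : ∑ j ∈ Finset.range i, dist (f^[j] x) (f^[j] y) < c) :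
    1 - c / (s * i) ≤ PhiN f x y s i := by
  classical
  set d : ℕ → ℝ := fun j => dist (f^[j] x) (f^[j] y) with hd
  set B := (Finset.range i).filter (fun j => ¬ d j < s) with hB
  have hiR : (0:ℝ) < i := by exact_mod_cast hi
  have hBsum : (B.card : ℝ) * s ≤ ∑ j ∈ B, d j := by
    have := Finset.card_nsmul_le_sum B d s (fun j hj => le_of_not_gt (Finset.mem_filter.mp hj).2)
    simpa [nsmul_eq_mul] using this
  have hBsub : ∑ j ∈ B, d j ≤ ∑ j ∈ Finset.range i, d j :=
    Finset.sum_le_sum_of_subset_of_nonneg (Finset.filter_subset _ _)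
      (fun j _ _ => dist_nonneg)
  have hBlt : (B.card : ℝ) * s < c := lt_of_le_of_lt (hBsum.trans hBsub) hsum
  have hBle : (B.card : ℝ) ≤ c / s := le_of_lt ((lt_div_iff₀ hs).mpr hBlt)
  have hcards : ((Finset.range i).filter (fun j => d j < s)).card + B.card = i := by
    simpa [hB] using Finset.card_filter_add_card_filter_not
      (s := Finset.range i) (p := fun j => d j < s)
  have hA : (i : ℝ) - B.card ≤ ((Finset.range i).filter (fun j => d j < s)).card := by
    have : (((Finset.range i).filter (fun j => d j < s)).card : ℝ) + B.card = i := by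
      exact_mod_cast hcards
    linarith
  have : (i : ℝ) - c / s ≤ ((Finset.range i).filter (fun j => d j < s)).card := by
    linarith
  unfold PhiN
  rw [le_div_iff₀ hiR]
  have hcs : c / (s * i) * i = c / s := by
    field_simp
  calc (1 - c / (s * i)) * i = (i : ℝ) - c / s := by rw [sub_mul, one_mul, hcs]
  _ ≤ _ := this

end Aux


theorem alphaDC1Scrambled_imp_DC1Scrambled
    {X : Type*} [MetricSpace X] [CompactSpace X] [Nontrivial X]
    (f : X → X) (hf : Continuous f)
    (α : ℕ → ℝ) (hα : MemA α) (x y : X)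
    (h : ADC1Scrambled f α x y) :
    DC1Scrambled f x y := by
  classical
  obtain ⟨h0, h1⟩ := h
  refine ⟨h0, fun s hs => ?_⟩
  have hub : ∀ n, PhiN f x y s n ≤ 1 := PhiN_le_one f x y s
  have hlb : ∀ n, 0 ≤ PhiN f x y s n := PhiN_nonneg f x y s
  have hbdd : Filter.IsBoundedUnder (· ≤ ·) atTop (fun n => PhiN f x y s n) :=
    Filter.isBoundedUnder_of ⟨1, hub⟩
  have hbddge : Filter.IsBoundedUnder (· ≥ ·) atTop (fun n => PhiN f x y s n) :=
    Filter.isBoundedUnder_of ⟨0, hlb⟩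
  have hA := h1 1 one_pos
  -- key: arbitrarily large i with sum < α i
  have key : ∀ N : ℕ, ∃ i ≥ N, 1 ≤ i ∧
      ∑ j ∈ Finset.range i, dist (f^[j] x) (f^[j] y) < α i := by
    intro N
    have hbddA : Filter.IsBoundedUnder (· ≥ ·) atTop (fun n => PhiNA f x y 1 α n) :=
      Filter.isBoundedUnder_of ⟨0, PhiNA_nonneg f x y 1 α⟩
    have hfreq : ∃ᶠ n in atTop, (1:ℝ)/2 < PhiNA f x y 1 α n := by
      apply Filter.frequently_lt_of_lt_limsup hbddA.isCoboundedUnder_le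
      rw [show Filter.limsup (fun n => PhiNA f x y 1 α n) atTop = PhiSupA f x y 1 α from rfl,
        hA]
      norm_num
    obtain ⟨n, hn1, hn2⟩ := (hfreq.and_eventually (Filter.eventually_ge_atTop (2*N+2))).exists
    set T := (Finset.Icc 1 n).filter
      (fun i => ∑ j ∈ Finset.range i, dist (f^[j] x) (f^[j] y) < α i * 1) with hT
    have hnpos : (0:ℝ) < n := by
      have : 0 < n := by omega
      exact_mod_cast this
    have hcard : (N : ℝ) < T.card := by
      have h1 : (1:ℝ)/2 < T.card / n := hn1
      have h2 : (n:ℝ)/2 < T.card := by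
        rw [lt_div_iff₀ hnpos] at h1
        linarith
      have hNn : (2*N+2 : ℝ) ≤ n := by exact_mod_cast hn2
      linarith
    have hcardN : N < T.card := by exact_mod_cast hcard
    -- there is an element of T larger than N
    by_contra hcon
    push_neg at hcon
    have hsub : T ⊆ Finset.Icc 1 N := by
      intro i hi
      have hmem := Finset.mem_filter.mp hi
      have h1i : 1 ≤ i := (Finset.mem_Icc.mp hmem.1).1
      have hcond : ∑ j ∈ Finset.range i, dist (f^[j] x) (f^[j] y) < α i := by
        simpa [mul_one] using hmem.2
      by_contra hiIcc
      have hiN : N ≤ i := by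
        simp only [Finset.mem_Icc, not_and, not_le] at hiIcc
        omega
      exact absurd hcond (not_lt.mpr (hcon i hiN h1i))
    have := Finset.card_le_card hsub
    simp [Nat.card_Icc] at this
    omega
  -- conclude limsup = 1
  have hle : PhiSup f x y s ≤ 1 := by
    apply Filter.limsup_le_of_le hbddge.isCoboundedUnder_le
    exact Filter.Eventually.of_forall hub
  have hge : ∀ ε > (0:ℝ), 1 - ε ≤ PhiSup f x y s := by
    intro ε hε
    have htend := hα.2.2.2
    have hev : ∀ᶠ i : ℕ in atTop, α i / i < ε * s := by
      have := htend.eventually (gt_mem_nhds (by positivity : (0:ℝ) < ε * s))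
      simpa using this
    obtain ⟨N, hN⟩ := Filter.eventually_atTop.mp hev
    have hfreq : ∃ᶠ i in atTop, 1 - ε ≤ PhiN f x y s i := by
      rw [Filter.frequently_atTop]
      intro M
      obtain ⟨i, hiN, hi1, hisum⟩ := key (max M N)
      refine ⟨i, le_trans (le_max_left M N) hiN, ?_⟩
      have hest := phiN_estimate f x y hs hi1 hisum
      have hiR : (0:ℝ) < i := by exact_mod_cast hi1
      have hαi : α i / i < ε * s := hN i (le_trans (le_max_right M N) hiN)
      have : α i / (s * i) < ε := by
        rw [div_lt_iff₀ (by positivity)]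
        calc α i = α i / i * i := by field_simp
        _ < ε * s * i := by exact mul_lt_mul_of_pos_right hαi hiR
        _ = ε * (s * i) := by ring
      linarith
    exact Filter.le_limsup_of_frequently_le hfreq hbdd
  have : 1 ≤ PhiSup f x y s := by
    by_contra hcon
    push_neg at hcon
    obtain ⟨ε, hε, hlt⟩ : ∃ ε > (0:ℝ), PhiSup f x y s < 1 - ε :=
      ⟨(1 - PhiSup f x y s)/2, by linarith, by linarith⟩
    exact absurd (hge ε hε) (not_le.mpr hlt)
  linarith
end

section
/- Suppose a dynamical system (X,f) is transitive and has the shadowing property, and 𝒟 = {D_0,D_1,…,D_{n−1}} is a regular periodic decomposition for f. Then the sets D_0,…,D_{n−1} are pairwise disjoint. -/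
open Filter Topology MeasureTheory
open scoped ENNReal NNReal

section TransDef

variable {X : Type*} [MetricSpace X]

/-- Topological transitivity. -/
def TopTransitive (f : X → X) : Prop :=
  ∀ U V : Set X, IsOpen U → IsOpen V → U.Nonempty → V.Nonempty →
    ∃ n : ℕ, 1 ≤ n ∧ (U ∩ f^[n] ⁻¹' V).Nonempty

end TransDef

section Shadow

variable {X : Type*} [MetricSpace X]

/-- The shadowing property. -/
def Shadowing (f : X → X) : Prop :=
  ∀ ε > (0:ℝ), ∃ δ > (0:ℝ), ∀ x : ℕ → X,
    (∀ n, dist (x (n + 1)) (f (x n)) < δ) →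
    ∃ y : X, ∀ n, dist (f^[n] y) (x n) < ε

end Shadow

section Decomp

variable {X : Type*} [MetricSpace X]

/-- A regular periodic decomposition `D 0, …, D (n-1)` for `f`. -/
def RegPeriodicDecomp (f : X → X) (n : ℕ) (D : ℕ → Set X) : Prop :=
  (∀ i < n, f '' D i ⊆ D ((i + 1) % n)) ∧
  (∀ i < n, IsClosed (D i)) ∧
  (⋃ i ∈ Finset.range n, D i) = Set.univ ∧
  (∀ i < n, ∀ j < n, i ≠ j → IsNowhereDense (D i ∩ D j)) ∧
  (∀ i < n, D i = closure (interior (D i)))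

end Decomp

/-- A finite union of closed sets with empty interior has empty interior. -/
lemma aux_interior_biUnion_empty {X : Type*} [TopologicalSpace X]
    (F : Finset ℕ) (g : ℕ → Set X)
    (hc : ∀ l ∈ F, IsClosed (g l)) (hi : ∀ l ∈ F, interior (g l) = ∅) :
    interior (⋃ l ∈ F, g l) = ∅ := by
  classical
  induction F using Finset.induction_on with
  | empty => simp
  | @insert a s ha ih =>
    have hcs : ∀ l ∈ s, IsClosed (g l) := fun l hl => hc l (Finset.mem_insert_of_mem hl)
    have his : ∀ l ∈ s, interior (g l) = ∅ := fun l hl => hi l (Finset.mem_insert_of_mem hl)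
    have hclosed_s : IsClosed (⋃ l ∈ s, g l) :=
      Set.Finite.isClosed_biUnion s.finite_toSet (fun l hl => hcs l hl)
    have hU : (⋃ l ∈ insert a s, g l) = g a ∪ ⋃ l ∈ s, g l := by
      simp [Finset.set_biUnion_insert]
    rw [hU]
    -- interior (g a ∪ T) = ∅ when g a closed with empty interior, T closed w/ empty interior
    by_contra hne
    obtain ⟨x, hx⟩ := Set.nonempty_iff_ne_empty.mpr hne
    -- interior (g a ∪ T) \ g a is open, contained in T, hence in interior T = ∅
    have hsub : interior (g a ∪ ⋃ l ∈ s, g l) \ g a ⊆ interior (⋃ l ∈ s, g l) := by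
      apply interior_maximal
      · intro y hy
        rcases interior_subset hy.1 with h | h
        · exact absurd h hy.2
        · exact h
      · exact isOpen_interior.sdiff (hc a (Finset.mem_insert_self a s))
    rw [ih hcs his] at hsub
    have hxa : interior (g a ∪ ⋃ l ∈ s, g l) ⊆ g a := by
      intro y hy
      by_contra hya
      exact hsub ⟨hy, hya⟩
    have : x ∈ interior (g a) :=
      interior_maximal hxa isOpen_interior hx
    rw [hi a (Finset.mem_insert_self a s)] at this
    exact this

/-- In a nonempty open subset of `D j` we can find a point avoiding all other `D l`. -/
lemma aux_exists_avoid {X : Type*} [MetricSpace X] {n : ℕ} {D : ℕ → Set X}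
    (hclosed : ∀ i < n, IsClosed (D i))
    (hnwd : ∀ i < n, ∀ j < n, i ≠ j → IsNowhereDense (D i ∩ D j))
    {j : ℕ} (hj : j < n) {B : Set X} (hBo : IsOpen B) (hBne : B.Nonempty)
    (hBsub : B ⊆ D j) :
    ∃ p ∈ B, ∀ l, l < n → l ≠ j → p ∉ D l := by
  classical
  by_contra h
  push_neg at h
  -- every point of B lies in some D l with l ≠ j
  set T : Set X := ⋃ l ∈ (Finset.range n).erase j, (D j ∩ D l) with hT
  have hTc : ∀ l ∈ (Finset.range n).erase j, IsClosed (D j ∩ D l) := by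
    intro l hl
    rw [Finset.mem_erase, Finset.mem_range] at hl
    exact (hclosed j hj).inter (hclosed l hl.2)
  have hTi : ∀ l ∈ (Finset.range n).erase j, interior (D j ∩ D l) = ∅ := by
    intro l hl
    rw [Finset.mem_erase, Finset.mem_range] at hl
    have := hnwd j hj l hl.2 (Ne.symm hl.1)
    rwa [((hclosed j hj).inter (hclosed l hl.2)).isNowhereDense_iff] at this
  have hTint : interior T = ∅ :=
    aux_interior_biUnion_empty _ _ hTc hTi
  have hBT : B ⊆ T := by
    intro p hp
    obtain ⟨l, hln, hlj, hpl⟩ := h p hp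
    exact Set.mem_biUnion (Finset.mem_erase.mpr ⟨hlj, Finset.mem_range.mpr hln⟩)
      ⟨hBsub hp, hpl⟩
  obtain ⟨p, hp⟩ := hBne
  have : p ∈ interior T := interior_maximal hBT hBo hp
  rw [hTint] at this
  exact this

/-- Orbits travel cyclically through the decomposition. -/
lemma aux_orbit_mem {X : Type*} [MetricSpace X] {f : X → X} {n : ℕ} {D : ℕ → Set X}
    (hn : 0 < n) (hmap : ∀ i < n, f '' D i ⊆ D ((i + 1) % n))
    {l : ℕ} (hl : l < n) {x : X} (hx : x ∈ D l) :
    ∀ m, f^[m] x ∈ D ((l + m) % n) := by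
  intro m
  induction m with
  | zero => simpa [Nat.mod_eq_of_lt hl] using hx
  | succ m ih =>
    have hlt : (l + m) % n < n := Nat.mod_lt _ hn
    have : f (f^[m] x) ∈ D (((l + m) % n + 1) % n) :=
      hmap _ hlt ⟨f^[m] x, ih, rfl⟩
    rw [Nat.mod_add_mod] at this
    rw [Function.iterate_succ_apply', ← Nat.add_assoc]
    exact this

theorem regPeriodicDecomp_pairwise_disjoint
    {X : Type*} [MetricSpace X] [CompactSpace X] [Nontrivial X]
    (f : X → X) (hf : Continuous f)
    (htrans : TopTransitive f) (hshadow : Shadowing f)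
    (n : ℕ) (D : ℕ → Set X) (hD : RegPeriodicDecomp f n D) :
    ∀ i < n, ∀ j < n, i ≠ j → D i ∩ D j = ∅ := by
  classical
  obtain ⟨hmap, hclosed, hcover, hnwd, hreg⟩ := hD
  intro i hi j hj hij
  by_contra hne
  obtain ⟨z, hzi, hzj⟩ := Set.nonempty_iff_ne_empty.mpr hne
  have hn : 0 < n := lt_of_le_of_lt (Nat.zero_le i) hi
  -- every point is in some D l
  have hcov : ∀ x : X, ∃ l, l < n ∧ x ∈ D l := by
    intro x
    have : x ∈ ⋃ l ∈ Finset.range n, D l := by rw [hcover]; trivial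
    simpa [Finset.mem_range] using this
  -- interior of D i is nonempty
  have hint_i : (interior (D i)).Nonempty := by
    by_contra hemp
    rw [Set.not_nonempty_iff_eq_empty] at hemp
    have : D i = ∅ := by rw [hreg i hi, hemp, closure_empty]
    rw [this] at hzi
    exact hzi
  -- find p in interior of D i avoiding all other D l
  obtain ⟨p, hpint, hpavoid⟩ :=
    aux_exists_avoid hclosed hnwd hi isOpen_interior hint_i interior_subset
  -- the safe open set around p
  set A : Set X := interior (D i) \ ⋃ l ∈ (Finset.range n).erase i, D l with hA
  have hAclosed : IsClosed (⋃ l ∈ (Finset.range n).erase i, D l) := by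
    apply Set.Finite.isClosed_biUnion ((Finset.range n).erase i).finite_toSet
    intro l hl
    rw [Finset.mem_coe, Finset.mem_erase, Finset.mem_range] at hl
    exact hclosed l hl.2
  have hAopen : IsOpen A := isOpen_interior.sdiff hAclosed
  have hpA : p ∈ A := by
    refine ⟨hpint, ?_⟩
    intro hpin
    obtain ⟨l, hl, hpl⟩ := Set.mem_iUnion₂.mp hpin
    rw [Finset.mem_erase, Finset.mem_range] at hl
    exact hpavoid l hl.2 hl.1 hpl
  obtain ⟨r, hr, hball⟩ := Metric.isOpen_iff.mp hAopen p hpA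
  -- points of A avoid all other D l and lie in D i
  have hAmem : ∀ x ∈ A, x ∈ D i ∧ ∀ l, l < n → l ≠ i → x ∉ D l := by
    intro x hx
    refine ⟨interior_subset hx.1, ?_⟩
    intro l hl hli hxl
    exact hx.2 (Set.mem_biUnion (Finset.mem_erase.mpr ⟨hli, Finset.mem_range.mpr hl⟩) hxl)
  -- shadowing with ε = r/2
  obtain ⟨δ, hδ, hshad⟩ := hshadow (r / 2) (by linarith)
  have hδ2 : (0:ℝ) < δ / 2 := by linarith
  -- the target set near z inside D j, avoiding other sheets
  have hzint_j : z ∈ closure (interior (D j)) := by rw [← hreg j hj]; exact hzj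
  have hBj : (Metric.ball z (δ / 2) ∩ interior (D j)).Nonempty := by
    obtain ⟨q, hq, hqd⟩ := Metric.mem_closure_iff.mp hzint_j (δ / 2) hδ2
    exact ⟨q, Metric.mem_ball.mpr (by rwa [dist_comm]), hq⟩
  obtain ⟨q, hqmem, hqavoid⟩ :=
    aux_exists_avoid hclosed hnwd hj (Metric.isOpen_ball.inter isOpen_interior) hBj
      (fun x hx => interior_subset hx.2)
  set Wj : Set X := (Metric.ball z (δ / 2) ∩ interior (D j)) \
      ⋃ l ∈ (Finset.range n).erase j, D l with hWj
  have hWjclosed : IsClosed (⋃ l ∈ (Finset.range n).erase j, D l) := by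
    apply Set.Finite.isClosed_biUnion ((Finset.range n).erase j).finite_toSet
    intro l hl
    rw [Finset.mem_coe, Finset.mem_erase, Finset.mem_range] at hl
    exact hclosed l hl.2
  have hWjopen : IsOpen Wj := (Metric.isOpen_ball.inter isOpen_interior).sdiff hWjclosed
  have hWjne : Wj.Nonempty := by
    refine ⟨q, hqmem, ?_⟩
    intro hqin
    obtain ⟨l, hl, hql⟩ := Set.mem_iUnion₂.mp hqin
    rw [Finset.mem_erase, Finset.mem_range] at hl
    exact hqavoid l hl.2 hl.1 hql
  -- the starting set near z inside D i
  have hzint_i : z ∈ closure (interior (D i)) := by rw [← hreg i hi]; exact hzi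
  set Wi : Set X := Metric.ball z (δ / 2) ∩ interior (D i) with hWi
  have hWiopen : IsOpen Wi := Metric.isOpen_ball.inter isOpen_interior
  have hWine : Wi.Nonempty := by
    obtain ⟨q', hq', hqd'⟩ := Metric.mem_closure_iff.mp hzint_i (δ / 2) hδ2
    exact ⟨q', Metric.mem_ball.mpr (by rwa [dist_comm]), hq'⟩
  -- U = ball p (r/2)
  set U : Set X := Metric.ball p (r / 2) with hU
  have hUopen : IsOpen U := Metric.isOpen_ball
  have hUne : U.Nonempty := ⟨p, Metric.mem_ball_self (by linarith)⟩
  have hUsubA : ∀ x ∈ U, ∀ y : X, dist y x < r / 2 → y ∈ A := by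
    intro x hx y hyx
    apply hball
    rw [Metric.mem_ball] at hx ⊢
    calc dist y p ≤ dist y x + dist x p := dist_triangle _ _ _
    _ < r / 2 + r / 2 := by linarith
    _ = r := by ring
  have hUA : U ⊆ A := by
    intro x hx
    exact hUsubA x hx x (by simpa using (by linarith : (0:ℝ) < r / 2))
  -- transitivity: from U to Wj, and from Wi to U
  obtain ⟨m₁, hm₁, u, hu₁⟩ := htrans U Wj hUopen hWjopen hUne hWjne
  obtain ⟨huU, huW⟩ := hu₁
  obtain ⟨m₂, hm₂, w, hw₁⟩ := htrans Wi U hWiopen hUopen hWine hUne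
  obtain ⟨hwW, hwU⟩ := hw₁
  rw [Set.mem_preimage] at huW hwU
  -- build the pseudo-orbit
  set x : ℕ → X := fun t => if t < m₁ then f^[t] u else f^[t - m₁] w with hx
  have hpseudo : ∀ t, dist (x (t + 1)) (f (x t)) < δ := by
    intro t
    rcases lt_trichotomy (t + 1) m₁ with h | h | h
    · have ht : t < m₁ := by omega
      simp only [hx, if_pos h, if_pos ht, Function.iterate_succ_apply']
      simpa using hδ
    · have ht : t < m₁ := by omega
      have h1 : ¬ (t + 1 < m₁) := by omega
      simp only [hx, if_neg h1, if_pos ht]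
      have h0 : t + 1 - m₁ = 0 := by omega
      have hfu : f (f^[t] u) = f^[m₁] u := by
        rw [← h]; exact (Function.iterate_succ_apply' f t u).symm
      rw [h0, Function.iterate_zero_apply, hfu]
      -- dist w (f^[m₁] u) < δ
      have hw1 : dist w z < δ / 2 := Metric.mem_ball.mp hwW.1
      have hu1 : dist (f^[m₁] u) z < δ / 2 := Metric.mem_ball.mp huW.1.1
      calc dist w (f^[m₁] u) ≤ dist w z + dist z (f^[m₁] u) := dist_triangle _ _ _
      _ < δ / 2 + δ / 2 := by rw [dist_comm z]; linarith
      _ = δ := by ring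
    · have ht : ¬ (t < m₁) := by omega
      have h1 : ¬ (t + 1 < m₁) := by omega
      have h2 : t + 1 - m₁ = (t - m₁) + 1 := by omega
      simp only [hx, if_neg h1, if_neg ht, h2, Function.iterate_succ_apply']
      simpa using hδ
  obtain ⟨y, hy⟩ := hshad x hpseudo
  -- y is (r/2)-close to u ∈ U, so y ∈ A
  have hx0 : x 0 = u := by simp [hx, Nat.lt_of_lt_of_le Nat.zero_lt_one hm₁]
  have hyA : y ∈ A := by
    have := hy 0
    rw [hx0, Function.iterate_zero_apply] at this
    exact hUsubA u huU y this
  -- endpoint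
  have hxend : x (m₁ + m₂) = f^[m₂] w := by
    have : ¬ (m₁ + m₂ < m₁) := by omega
    simp [hx, this]
  have hyendA : f^[m₁ + m₂] y ∈ A := by
    have := hy (m₁ + m₂)
    rw [hxend] at this
    exact hUsubA _ hwU _ this
  -- congruences
  have hyDi : y ∈ D i := (hAmem y hyA).1
  have horb := aux_orbit_mem hn hmap hi hyDi (m₁ + m₂)
  have hend_idx : (i + (m₁ + m₂)) % n = i := by
    by_contra hne'
    exact (hAmem _ hyendA).2 _ (Nat.mod_lt _ hn) hne' horb
  -- f^[m₁] u ∈ D j sheet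
  have huDi : u ∈ D i := (hAmem u (hUA huU)).1
  have horb1 := aux_orbit_mem hn hmap hi huDi m₁
  have hm1_idx : (i + m₁) % n = j := by
    by_contra hne'
    exact huW.2 (Set.mem_biUnion
      (Finset.mem_erase.mpr ⟨hne', Finset.mem_range.mpr (Nat.mod_lt _ hn)⟩) horb1)
  -- f^[m₂] w ∈ D i sheet
  have hwDi : w ∈ D i := interior_subset hwW.2
  have horb2 := aux_orbit_mem hn hmap hi hwDi m₂
  have hm2_idx : (i + m₂) % n = i := by
    by_contra hne'
    exact (hAmem _ (hUA hwU)).2 _ (Nat.mod_lt _ hn) hne' horb2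
  -- arithmetic contradiction
  have hdvd : n ∣ m₂ := by
    have h1 : (i + m₂) % n = (i + 0) % n := by
      rw [hm2_idx, Nat.add_zero, Nat.mod_eq_of_lt hi]
    have h2 : m₂ ≡ 0 [MOD n] := Nat.ModEq.add_left_cancel' i h1
    exact Nat.modEq_zero_iff_dvd.mp h2
  have : (i + (m₁ + m₂)) % n = (i + m₁) % n := by
    obtain ⟨c, hc⟩ := hdvd
    rw [← Nat.add_assoc, hc, Nat.add_mul_mod_self_left]
  rw [hend_idx, hm1_idx] at this
  exact hij this
end

section
/- Suppose (X,f) is a dynamical system admitting a nondecreasing sequence of f-invariant compact subsets X_n ⊆ X (n ∈ ℕ+) with closure(∪_{n≥1} X_n) = X. Then, in the weak* topology on M_f(X), the closure of {μ ∈ M_f(X) : μ(∪_{n≥1} X_n) = 1} equals the closure of ∪_{n≥1} {μ ∈ M_f(X) : μ(X_n) = 1}. -/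
open Filter Topology MeasureTheory
open scoped ENNReal NNReal

section Meas

variable {X : Type*} [MetricSpace X] [MeasurableSpace X] [BorelSpace X]

/-- The set `M_f(X)` of `f`-invariant Borel probability measures (with the weak* topology
inherited from `ProbabilityMeasure X`). -/
def invMeasures (f : X → X) : Set (ProbabilityMeasure X) :=
  {μ | μ.toMeasure.map f = μ.toMeasure}

/-- The empirical measure `ℰ_{n+1}(x) = (1/(n+1)) ∑_{i=0}^{n} δ_{f^i(x)}`. -/
noncomputable def empiric (f : X → X) (x : X) (n : ℕ) : ProbabilityMeasure X :=
  ⟨((n : ℝ≥0∞) + 1)⁻¹ • ∑ i ∈ Finset.range (n + 1), Measure.dirac (f^[i] x), by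
    constructor
    rw [Measure.smul_apply, smul_eq_mul, Measure.finset_sum_apply]
    simp only [Measure.dirac_apply_of_mem, Set.mem_univ, Finset.sum_const, Finset.card_range,
      nsmul_eq_mul, mul_one]
    rw [Nat.cast_add, Nat.cast_one, ENNReal.inv_mul_cancel] <;> simp⟩

/-- `V_f(x)`: the set of weak* accumulation points of the sequence of empirical measures of `x`. -/
def Vf (f : X → X) (x : X) : Set (ProbabilityMeasure X) :=
  {μ | MapClusterPt μ atTop (empiric f x)}

/-- The saturated set `G_K = {x : V_f(x) = K}`. -/
def GK (f : X → X) (K : Set (ProbabilityMeasure X)) : Set X :=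
  {x | Vf f x = K}

/-- The support `S_μ` of a measure: points all of whose neighborhoods have
positive measure. -/
def measSupport (μ : Measure X) : Set X :=
  {x | ∀ U : Set X, IsOpen U → x ∈ U → 0 < μ U}

end Meas


lemma restrict_map_inv {X : Type*} [MetricSpace X] [MeasurableSpace X] [BorelSpace X]
    (f : X → X) (hf : Continuous f) (μ : Measure X) [IsFiniteMeasure μ]
    (hμ : μ.map f = μ) (s : Set X) (hs : MeasurableSet s) (hinv : Set.MapsTo f s s) :
    (μ.restrict s).map f = μ.restrict s := by
  have hsub : s ⊆ f ⁻¹' s := fun x hx => hinv hx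
  have hpre : μ (f ⁻¹' s) = μ s := by
    conv_rhs => rw [← hμ]
    rw [Measure.map_apply hf.measurable hs]
  have h0 : μ (f ⁻¹' s \ s) = 0 := by
    rw [measure_diff hsub hs.nullMeasurableSet (measure_ne_top μ s), hpre, tsub_self]
  ext A hA
  rw [Measure.map_apply hf.measurable hA, Measure.restrict_apply hA,
    Measure.restrict_apply (hf.measurable hA)]
  have key : μ (f ⁻¹' A ∩ s) = μ (f ⁻¹' A ∩ f ⁻¹' s) := by
    refine le_antisymm (measure_mono (Set.inter_subset_inter_right _ hsub)) ?_
    have : f ⁻¹' A ∩ f ⁻¹' s ⊆ (f ⁻¹' A ∩ s) ∪ (f ⁻¹' s \ s) := by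
      intro x hx
      by_cases hxs : x ∈ s
      · exact Or.inl ⟨hx.1, hxs⟩
      · exact Or.inr ⟨hx.2, hxs⟩
    calc μ (f ⁻¹' A ∩ f ⁻¹' s) ≤ μ ((f ⁻¹' A ∩ s) ∪ (f ⁻¹' s \ s)) := measure_mono this
      _ ≤ μ (f ⁻¹' A ∩ s) + μ (f ⁻¹' s \ s) := measure_union_le _ _
      _ = μ (f ⁻¹' A ∩ s) := by rw [h0, add_zero]
  rw [key, ← Set.preimage_inter]
  conv_rhs => rw [← hμ]
  rw [Measure.map_apply hf.measurable (hA.inter hs)]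

theorem closure_invMeasures_union_eq'
    {X : Type*} [MetricSpace X] [CompactSpace X] [Nontrivial X]
    [MeasurableSpace X] [BorelSpace X]
    (f : X → X) (hf : Continuous f)
    (Xn : ℕ → Set X) (hmono : Monotone Xn)
    (hcomp : ∀ n, IsCompact (Xn n)) (hinv : ∀ n, Set.MapsTo f (Xn n) (Xn n))
    (hdense : closure (⋃ n, Xn n) = Set.univ) :
    closure {μ : ProbabilityMeasure X | μ.toMeasure.map f = μ.toMeasure ∧ μ.toMeasure (⋃ n, Xn n) = 1} =
      closure (⋃ n : ℕ,
        {μ : ProbabilityMeasure X | μ.toMeasure.map f = μ.toMeasure ∧ μ.toMeasure (Xn n) = 1}) := by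
  have hXnMeas : ∀ n, MeasurableSet (Xn n) := fun n => (hcomp n).isClosed.measurableSet
  have hUMeas : MeasurableSet (⋃ n, Xn n) := MeasurableSet.iUnion hXnMeas
  refine subset_antisymm (closure_minimal ?_ isClosed_closure)
    (closure_mono (Set.iUnion_subset fun n μ hμ => ⟨hμ.1, ?_⟩))
  swap
  · exact le_antisymm prob_le_one (hμ.2 ▸ measure_mono (Set.subset_iUnion Xn n))
  intro μ hμ
  obtain ⟨hμinv, hμ1⟩ := hμ
  have hc : Tendsto (fun n => μ.toMeasure (Xn n)) atTop (𝓝 1) := by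
    have := tendsto_measure_iUnion_atTop (μ := μ.toMeasure) hmono
    rwa [hμ1] at this
  have hev : ∀ᶠ n in atTop, μ.toMeasure (Xn n) ≠ 0 := by
    filter_upwards [hc.eventually (eventually_gt_nhds (by norm_num : (0:ℝ≥0∞) < 1))] with n h
    exact h.ne'
  set ν : ℕ → ProbabilityMeasure X := fun n =>
    if h : μ.toMeasure (Xn n) = 0 then μ else
      ⟨(μ.toMeasure (Xn n))⁻¹ • μ.toMeasure.restrict (Xn n), by
        constructor
        rw [Measure.smul_apply, Measure.restrict_apply_univ, smul_eq_mul,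
          ENNReal.inv_mul_cancel h (measure_ne_top _ _)]⟩ with hν
  have hνcoe : ∀ n, μ.toMeasure (Xn n) ≠ 0 →
      (ν n).toMeasure = (μ.toMeasure (Xn n))⁻¹ • μ.toMeasure.restrict (Xn n) := by
    intro n h
    simp only [hν, dif_neg h]
    exact congrArg ProbabilityMeasure.toMeasure (dif_neg h)
  have hmem : ∀ᶠ n in atTop, ν n ∈ ⋃ n : ℕ,
      {μ : ProbabilityMeasure X | μ.toMeasure.map f = μ.toMeasure ∧ μ.toMeasure (Xn n) = 1} := by
    filter_upwards [hev] with n h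
    refine Set.mem_iUnion.mpr ⟨n, ?_, ?_⟩
    · rw [hνcoe n h, Measure.map_smul,
        restrict_map_inv f hf μ.toMeasure hμinv (Xn n) (hXnMeas n) (hinv n)]
    · rw [hνcoe n h, Measure.smul_apply, Measure.restrict_apply_self, smul_eq_mul,
        ENNReal.inv_mul_cancel h (measure_ne_top _ _)]
  -- convergence
  have htend : Tendsto ν atTop (𝓝 μ) := by
    rw [ProbabilityMeasure.tendsto_iff_forall_lintegral_tendsto]
    intro g
    set G : X → ℝ≥0∞ := fun x => (g x : ℝ≥0∞) with hG
    have hGmeas : Measurable G := measurable_coe_nnreal_ennreal.comp g.continuous.measurable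
    set I : ℕ → ℝ≥0∞ := fun n => ∫⁻ x in Xn n, G x ∂μ.toMeasure with hI
    have hae : ∀ᵐ x ∂μ.toMeasure, x ∈ ⋃ n, Xn n := by
      rw [ae_iff]
      have hcompl : {x | ¬ x ∈ ⋃ n, Xn n} = (⋃ n, Xn n)ᶜ := rfl
      rw [hcompl, measure_compl hUMeas (measure_ne_top _ _), hμ1, measure_univ, tsub_self]
    have hLeq : ∫⁻ x, (⋃ n, Xn n).indicator G x ∂μ.toMeasure = ∫⁻ x, G x ∂μ.toMeasure := by
      refine lintegral_congr_ae ?_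
      filter_upwards [hae] with x hx
      rw [Set.indicator_of_mem hx]
    have hItend : Tendsto I atTop (𝓝 (∫⁻ x, G x ∂μ.toMeasure)) := by
      have hIeq : ∀ n, I n = ∫⁻ x, (Xn n).indicator G x ∂μ.toMeasure := fun n =>
        (lintegral_indicator (hXnMeas n) G).symm
      have hmonoI : Monotone I := by
        intro n m hnm
        rw [hIeq n, hIeq m]
        exact lintegral_mono fun x =>
          Set.indicator_le_indicator_of_subset (hmono hnm) (fun _ => zero_le) x
      have := tendsto_atTop_iSup hmonoI
      have hsup : (⨆ n, I n) = ∫⁻ x, G x ∂μ.toMeasure := by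
        simp_rw [hIeq]
        rw [← lintegral_iSup (fun n => hGmeas.indicator (hXnMeas n))
          (fun n m hnm x => Set.indicator_le_indicator_of_subset (hmono hnm) (fun _ => zero_le) x)]
        rw [← hLeq]
        congr 1
        funext x
        by_cases hx : x ∈ ⋃ n, Xn n
        · obtain ⟨n, hn⟩ := Set.mem_iUnion.mp hx
          rw [Set.indicator_of_mem hx]
          refine le_antisymm (iSup_le fun m => Set.indicator_le_self _ _ x) ?_
          calc G x = (Xn n).indicator G x := (Set.indicator_of_mem hn G).symm
            _ ≤ ⨆ m, (Xn m).indicator G x := le_iSup (fun m => (Xn m).indicator G x) n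
        · have hnot : ∀ n, x ∉ Xn n := fun n hn => hx (Set.mem_iUnion.mpr ⟨n, hn⟩)
          simp [Set.indicator_of_notMem, hx, hnot]
      rwa [hsup] at this
    have hcinv : Tendsto (fun n => (μ.toMeasure (Xn n))⁻¹) atTop (𝓝 1) := by
      have := ENNReal.tendsto_inv_iff.mpr hc
      rwa [inv_one] at this
    have hmul := ENNReal.Tendsto.mul hcinv (Or.inl one_ne_zero) hItend
      (Or.inr ENNReal.one_ne_top)
    rw [one_mul] at hmul
    refine hmul.congr' ?_
    filter_upwards [hev] with n h
    rw [hνcoe n h, lintegral_smul_measure]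
    rfl
  exact mem_closure_of_tendsto htend hmem

theorem closure_invMeasures_union_eq
    {X : Type*} [MetricSpace X] [CompactSpace X] [Nontrivial X]
    [MeasurableSpace X] [BorelSpace X]
    (f : X → X) (hf : Continuous f)
    (Xn : ℕ → Set X) (hmono : Monotone Xn)
    (hcomp : ∀ n, IsCompact (Xn n)) (hinv : ∀ n, Set.MapsTo f (Xn n) (Xn n))
    (hdense : closure (⋃ n, Xn n) = Set.univ) :
    closure {μ : ProbabilityMeasure X | μ ∈ invMeasures f ∧ μ.toMeasure (⋃ n, Xn n) = 1} =
      closure (⋃ n : ℕ,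
        {μ : ProbabilityMeasure X | μ ∈ invMeasures f ∧ μ.toMeasure (Xn n) = 1}) := by
  exact closure_invMeasures_union_eq' f hf Xn hmono hcomp hinv hdense
end

section
/- Let (X,f) be a dynamical system and let μ be an ergodic f-invariant Borel probability measure whose support S_μ is minimal and is not periodic. Then for every Q ∈ ℕ+ there exist x, y ∈ G_μ such that (x, f^j(y)) is a distal pair for every 0 ≤ j ≤ Q−1. -/
open Filter Topology MeasureTheory
open scoped ENNReal NNReal

section TransPts

variable {X : Type*} [MetricSpace X]

/-- `Trans`: the set of points with dense forward orbit. -/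
def TransPts (f : X → X) : Set X :=
  {x | Dense (Set.range fun n : ℕ => f^[n] x)}

/-- A distal pair: `liminf_i d(f^i(p), f^i(q)) > 0`. -/
def DistalPair (f : X → X) (p q : X) : Prop :=
  0 < Filter.liminf (fun i : ℕ => dist (f^[i] p) (f^[i] q)) Filter.atTop

end TransPts

section Minimal

variable {X : Type*} [MetricSpace X]

/-- A minimal set. -/
def MinimalSet (f : X → X) (S : Set X) : Prop :=
  S.Nonempty ∧ IsClosed S ∧ Set.MapsTo f S S ∧
    ∀ T : Set X, T ⊆ S → T.Nonempty → IsClosed T → Set.MapsTo f T T → T = S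

/-- A periodic set: the orbit of a periodic point. -/
def PeriodicSet (f : X → X) (S : Set X) : Prop :=
  ∃ x : X, (∃ p : ℕ, 0 < p ∧ f^[p] x = x) ∧ S = Set.range fun i : ℕ => f^[i] x

end Minimal

open Function BoundedContinuousFunction TopologicalSpace


set_option maxHeartbeats 1000000

section AuxLimsup

open Function

lemma myIsBddLe {u : ℕ → ℝ} {C : ℝ} (h : ∀ n, |u n| ≤ C) :
    IsBoundedUnder (· ≤ ·) atTop u :=
  ⟨C, eventually_map.2 <| Eventually.of_forall fun n => (abs_le.1 (h n)).2⟩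

lemma myIsBddGe {u : ℕ → ℝ} {C : ℝ} (h : ∀ n, |u n| ≤ C) :
    IsBoundedUnder (· ≥ ·) atTop u :=
  ⟨-C, eventually_map.2 <| Eventually.of_forall fun n => (abs_le.1 (h n)).1⟩

lemma myLimsupAddLe {u v : ℕ → ℝ} {C : ℝ} (hC : ∀ n, |u n| ≤ C)
    (hv : Tendsto v atTop (𝓝 0)) :
    limsup (fun n => u n + v n) atTop ≤ limsup u atTop := by
  refine le_of_forall_pos_le_add fun ε hε => ?_
  have h1 : ∀ᶠ n in atTop, u n < limsup u atTop + ε / 2 :=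
    eventually_lt_of_limsup_lt (lt_add_of_pos_right _ (half_pos hε)) (myIsBddLe hC)
  have h2 : ∀ᶠ n in atTop, v n < ε / 2 := hv.eventually (gt_mem_nhds (half_pos hε))
  have hcb : IsBoundedUnder (· ≥ ·) atTop (fun n => u n + v n) := by
    have h3 : ∀ᶠ n in atTop, (-1 : ℝ) < v n := hv.eventually (lt_mem_nhds (by norm_num))
    exact ⟨-C + -1, eventually_map.2 <| h3.mono fun n hn => by
      have := (abs_le.1 (hC n)).1; simp only; linarith⟩
  refine limsup_le_of_le hcb.isCoboundedUnder_le ?_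
  filter_upwards [h1, h2] with n hn1 hn2
  linarith

lemma myLeLiminfAdd {u v : ℕ → ℝ} {C : ℝ} (hC : ∀ n, |u n| ≤ C)
    (hv : Tendsto v atTop (𝓝 0)) :
    liminf u atTop ≤ liminf (fun n => u n + v n) atTop := by
  have key : ∀ ε > (0:ℝ), liminf u atTop - ε ≤ liminf (fun n => u n + v n) atTop := by
    intro ε hε
    have h1 : ∀ᶠ n in atTop, liminf u atTop - ε / 2 < u n :=
      eventually_lt_of_lt_liminf (by linarith [half_pos hε]) (myIsBddGe hC)
    have h2 : ∀ᶠ n in atTop, -(ε / 2) < v n := hv.eventually (lt_mem_nhds (by linarith))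
    have hcb : IsBoundedUnder (· ≤ ·) atTop (fun n => u n + v n) := by
      have h3 : ∀ᶠ n in atTop, v n < 1 := hv.eventually (gt_mem_nhds (by norm_num))
      exact ⟨C + 1, eventually_map.2 <| h3.mono fun n hn => by
        have := (abs_le.1 (hC n)).2; simp only; linarith⟩
    refine le_liminf_of_le hcb.isCoboundedUnder_ge ?_
    filter_upwards [h1, h2] with n hn1 hn2
    linarith
  by_contra h
  push_neg at h
  have : liminf u atTop - (liminf u atTop - liminf (fun n => u n + v n) atTop) / 2
      ≤ liminf (fun n => u n + v n) atTop := key _ (by linarith)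
  linarith

lemma myLimsupAddEq {u v : ℕ → ℝ} {C : ℝ} (hC : ∀ n, |u n| ≤ C)
    (hv : Tendsto v atTop (𝓝 0)) :
    limsup (fun n => u n + v n) atTop = limsup u atTop := by
  refine le_antisymm (myLimsupAddLe hC hv) ?_
  have : ∀ᶠ n in atTop, |v n| < 1 := by
    have := hv.eventually (Metric.ball_mem_nhds (0:ℝ) one_pos)
    simpa [Real.dist_eq] using this
  obtain ⟨N, hN⟩ := eventually_atTop.1 this
  have hC' : ∀ n, |u (n + N) + v (n + N)| ≤ C + 1 := fun n => by
    have h1 := hC (n + N); have h2 := le_of_lt (hN (n + N) (Nat.le_add_left _ _))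
    calc |u (n + N) + v (n + N)| ≤ |u (n + N)| + |v (n + N)| := abs_add_le _ _
      _ ≤ C + 1 := by linarith
  have e1 : limsup u atTop = limsup (fun n => u (n + N)) atTop :=
    (limsup_nat_add u N).symm
  have e2 : limsup (fun n => u n + v n) atTop
      = limsup (fun n => u (n + N) + v (n + N)) atTop := (limsup_nat_add _ N).symm
  rw [e1, e2]
  have : limsup (fun n => (u (n + N) + v (n + N)) + (- v (n + N))) atTop
      ≤ limsup (fun n => u (n + N) + v (n + N)) atTop :=
    myLimsupAddLe hC' (by simpa using ((hv.comp (tendsto_add_atTop_nat N)).neg))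
  simpa using this

lemma myLiminfAddEq {u v : ℕ → ℝ} {C : ℝ} (hC : ∀ n, |u n| ≤ C)
    (hv : Tendsto v atTop (𝓝 0)) :
    liminf (fun n => u n + v n) atTop = liminf u atTop := by
  refine le_antisymm ?_ (myLeLiminfAdd hC hv)
  have : ∀ᶠ n in atTop, |v n| < 1 := by
    have := hv.eventually (Metric.ball_mem_nhds (0:ℝ) one_pos)
    simpa [Real.dist_eq] using this
  obtain ⟨N, hN⟩ := eventually_atTop.1 this
  have hC' : ∀ n, |u (n + N) + v (n + N)| ≤ C + 1 := fun n => by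
    have h1 := hC (n + N); have h2 := le_of_lt (hN (n + N) (Nat.le_add_left _ _))
    calc |u (n + N) + v (n + N)| ≤ |u (n + N)| + |v (n + N)| := abs_add_le _ _
      _ ≤ C + 1 := by linarith
  have e1 : liminf u atTop = liminf (fun n => u (n + N)) atTop :=
    (liminf_nat_add u N).symm
  have e2 : liminf (fun n => u n + v n) atTop
      = liminf (fun n => u (n + N) + v (n + N)) atTop := (liminf_nat_add _ N).symm
  rw [e1, e2]
  have : liminf (fun n => u (n + N) + v (n + N)) atTop
      ≤ liminf (fun n => (u (n + N) + v (n + N)) + (- v (n + N))) atTop :=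
    myLeLiminfAdd hC' (by simpa using ((hv.comp (tendsto_add_atTop_nat N)).neg))
  simpa using this

lemma myIntegrableOfBound {X : Type*} [MeasurableSpace X] (m : Measure X)
    [IsProbabilityMeasure m] {h : X → ℝ} (hm : Measurable h) {C : ℝ}
    (hC : ∀ x, |h x| ≤ C) : Integrable h m :=
  (integrable_const C).mono' hm.aestronglyMeasurable
    (Eventually.of_forall fun x => by simpa [Real.norm_eq_abs] using hC x)

lemma kw_core {X : Type*} [MeasurableSpace X] (m : Measure X) [IsProbabilityMeasure m]
    {f : X → X} (hfm : MeasurePreserving f m m) {g : X → ℝ} (hgm : Measurable g)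
    {B : ℝ} (hB0 : 0 ≤ B) (hB : ∀ x, |g x| ≤ B) (c : ℝ)
    (hc : ∀ᵐ x ∂m, ∀ ε : ℝ, 0 < ε → ∃ n : ℕ, 1 ≤ n ∧ (c - ε) * n ≤ birkhoffSum f g n x) :
    c ≤ ∫ x, g x ∂m := by
  classical
  set B' : ℝ := B + |c| + 1 with hB'def
  have hB'0 : 0 ≤ B' := by positivity
  have hfim : ∀ i : ℕ, Measurable (f^[i]) := fun i => hfm.measurable.iterate i
  have hSm : ∀ n : ℕ, Measurable fun x => birkhoffSum f g n x := fun n =>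
    Finset.measurable_sum _ fun i _ => hgm.comp (hfim i)
  -- main estimate for each small ε
  have main : ∀ ε : ℝ, 0 < ε → ε ≤ 1 → c ≤ (∫ x, g x ∂m) + ε * (1 + B' + B) := by
    intro ε hε hε1
    -- the bad sets
    set E : ℕ → Set X := fun N =>
      ⋂ n, ⋂ (_ : 1 ≤ n), ⋂ (_ : n ≤ N), {x | birkhoffSum f g n x < (c - ε) * n} with hEdef
    have hEm : ∀ N, MeasurableSet (E N) := fun N =>
      MeasurableSet.iInter fun n => MeasurableSet.iInter fun _ => MeasurableSet.iInter fun _ =>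
        measurableSet_lt (hSm n) measurable_const
    have hmemE : ∀ N x, x ∈ E N ↔ ∀ n, 1 ≤ n → n ≤ N → birkhoffSum f g n x < (c - ε) * n := by
      intro N x; simp [hEdef, Set.mem_iInter]
    have hanti : Antitone E := by
      intro N N' hNN' x hx
      rw [hmemE] at hx ⊢
      exact fun n h1 h2 => hx n h1 (h2.trans hNN')
    have hnull : m (⋂ N, E N) = 0 := by
      refine measure_mono_null ?_ hc
      intro x hx
      simp only [Set.mem_iInter] at hx
      simp only [Set.mem_compl_iff, Set.mem_setOf_eq]
      intro hall
      obtain ⟨n, hn1, hnS⟩ := hall ε hε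
      have := (hmemE n x).1 (hx n) n hn1 le_rfl
      linarith
    have htend : Tendsto (fun N => m (E N)) atTop (𝓝 0) := by
      have := tendsto_measure_iInter_atTop (μ := m) (s := E)
        (fun N => (hEm N).nullMeasurableSet) hanti ⟨0, measure_ne_top _ _⟩
      rwa [hnull] at this
    obtain ⟨N0, hN0⟩ : ∃ N, m (E N) < ENNReal.ofReal ε :=
      (htend.eventually (gt_mem_nhds (ENNReal.ofReal_pos.2 hε))).exists
    set N : ℕ := max N0 1 with hNdef
    have hN1 : 1 ≤ N := le_max_right _ _
    have hEε : (m (E N)).toReal ≤ ε := by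
      have h1 : m (E N) ≤ m (E N0) := measure_mono (hanti (le_max_left _ _))
      have h2 : m (E N) ≤ ENNReal.ofReal ε := h1.trans hN0.le
      calc (m (E N)).toReal ≤ (ENNReal.ofReal ε).toReal :=
            ENNReal.toReal_mono ENNReal.ofReal_ne_top h2
        _ = ε := ENNReal.toReal_ofReal hε.le
    -- the modified function
    set gt : X → ℝ := fun x => if x ∈ E N then max (g x) (c - ε) else g x with hgtdef
    have hgtm : Measurable gt := Measurable.ite (hEm N) (hgm.max measurable_const) hgm
    have hgt_ge : ∀ x, g x ≤ gt x := by
      intro x; by_cases hx : x ∈ E N <;> simp [hgtdef, hx, le_max_left]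
    have hcε_abs : c - ε ≤ |c| + 1 := by
      have := le_abs_self c; linarith
    have hgtB : ∀ x, |gt x| ≤ B' := by
      intro x
      have h1 := abs_le.1 (hB x)
      have h3 : -|c| ≤ c := neg_abs_le c
      have h4 : c ≤ |c| := le_abs_self c
      have h5 : (0:ℝ) ≤ |c| := abs_nonneg c
      rw [abs_le]
      by_cases hx : x ∈ E N
      · simp only [hgtdef, if_pos hx]
        constructor
        · refine le_trans ?_ (le_max_left (g x) (c - ε))
          simp only [hB'def]; linarith [h1.1]
        · refine max_le ?_ ?_ <;> simp only [hB'def] <;> linarith [h1.2]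
      · simp only [hgtdef, if_neg hx]
        constructor <;> simp only [hB'def] <;> linarith [h1.1, h1.2]
    have hE_lb : ∀ x ∈ E N, c - ε ≤ gt x := by
      intro x hx; simp [hgtdef, hx, le_max_right]
    have hnE : ∀ x, x ∉ E N → ∃ n, 1 ≤ n ∧ n ≤ N ∧ (c - ε) * n ≤ birkhoffSum f g n x := by
      intro x hx
      rw [hmemE] at hx
      push_neg at hx
      obtain ⟨n, h1, h2, h3⟩ := hx
      exact ⟨n, h1, h2, h3⟩
    -- key pointwise estimate by strong induction
    set D : ℝ := N * (B' + |c| + 1) with hDdef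
    have key : ∀ M : ℕ, ∀ x, (c - ε) * M - D ≤ birkhoffSum f gt M x := by
      intro M
      induction M using Nat.strong_induction_on with
      | _ M ih =>
        intro x
        by_cases hM : M < N
        · -- crude bound
          have hsum : (M : ℝ) * (-B') ≤ birkhoffSum f gt M x := by
            have h := Finset.card_nsmul_le_sum (Finset.range M)
              (fun i => gt (f^[i] x)) (-B') (fun i _ => (abs_le.1 (hgtB _)).1)
            simpa [birkhoffSum, nsmul_eq_mul] using h
          have hMN : (M : ℝ) ≤ N := Nat.cast_le.2 hM.le
          have hM0 : (0:ℝ) ≤ M := Nat.cast_nonneg M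
          have hN0' : (0:ℝ) ≤ N := Nat.cast_nonneg N
          have h1 : (c - ε) * M ≤ (|c| + 1) * M :=
            mul_le_mul_of_nonneg_right hcε_abs hM0
          have h2 : ((|c| + 1) + B') * (M:ℝ) ≤ ((|c| + 1) + B') * (N:ℝ) :=
            mul_le_mul_of_nonneg_left hMN (by positivity)
          simp only [hDdef]
          nlinarith [hsum, h1, h2]
        · push_neg at hM
          have hM1 : 1 ≤ M := hN1.trans hM
          by_cases hx : x ∈ E N
          · have hdec : M = 1 + (M - 1) := by omega
            rw [hdec, birkhoffSum_add, birkhoffSum_one]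
            have hih := ih (M - 1) (by omega) (f^[1] x)
            have hlb := hE_lb x hx
            have hcast : ((M - 1 : ℕ) : ℝ) = (M : ℝ) - 1 := by
              rw [Nat.cast_sub hM1]; norm_num
            rw [hcast] at hih
            have : ((1 + (M-1) : ℕ) : ℝ) = (M:ℝ) := by rw [← hdec]
            rw [this]
            linarith
          · obtain ⟨n, hn1, hnN, hnS⟩ := hnE x hx
            have hnM : n ≤ M := hnN.trans hM
            have hdec : M = n + (M - n) := by omega
            rw [hdec, birkhoffSum_add]
            have hih := ih (M - n) (by omega) (f^[n] x)
            have hSn : (c - ε) * n ≤ birkhoffSum f gt n x := by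
              refine hnS.trans ?_
              exact Finset.sum_le_sum fun i _ => hgt_ge _
            have hcast : ((M - n : ℕ) : ℝ) = (M : ℝ) - n := by
              rw [Nat.cast_sub hnM]
            rw [hcast] at hih
            have : ((n + (M-n) : ℕ) : ℝ) = (M:ℝ) := by rw [← hdec]
            rw [this]
            linarith
    -- integrate
    have hIg : Integrable g m := myIntegrableOfBound m hgm hB
    have hIgt : Integrable gt m := myIntegrableOfBound m hgtm hgtB
    have hIcomp : ∀ i : ℕ, Integrable (fun x => gt (f^[i] x)) m := fun i =>
      myIntegrableOfBound m (hgtm.comp (hfim i)) (fun x => hgtB _)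
    have hint_comp : ∀ i : ℕ, ∫ x, gt (f^[i] x) ∂m = ∫ x, gt x ∂m := by
      intro i
      have hmap := (hfm.iterate i).map_eq
      calc ∫ x, gt (f^[i] x) ∂m = ∫ y, gt y ∂(m.map f^[i]) :=
            (integral_map (hfim i).aemeasurable
              (by rw [hmap]; exact hgtm.aestronglyMeasurable)).symm
        _ = ∫ y, gt y ∂m := by rw [hmap]
    have hSL : ∀ L : ℕ, ∫ x, birkhoffSum f gt L x ∂m = L * ∫ x, gt x ∂m := by
      intro L
      have : (fun x => birkhoffSum f gt L x)
          = fun x => ∑ i ∈ Finset.range L, gt (f^[i] x) := rfl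
      rw [this, integral_finset_sum _ fun i _ => hIcomp i]
      simp only [hint_comp]
      simp [Finset.sum_const, Finset.card_range, nsmul_eq_mul]
    have hISgt : ∀ L : ℕ, Integrable (fun x => birkhoffSum f gt L x) m := fun L =>
      integrable_finset_sum _ fun i _ => hIcomp i
    have key2 : ∀ L : ℕ, (c - ε) * L - D ≤ L * ∫ x, gt x ∂m := by
      intro L
      rw [← hSL L]
      have := integral_mono (integrable_const ((c - ε) * L - D)) (hISgt L)
        (fun x => key L x)
      simpa using this
    have hgtlb : c - ε ≤ ∫ x, gt x ∂m := by
      have htend2 : Tendsto (fun L : ℕ => c - ε - D / L) atTop (𝓝 (c - ε)) := by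
        have := tendsto_const_div_atTop_nhds_zero_nat D
        have h2 := (tendsto_const_nhds (x := c - ε) (f := atTop (α := ℕ))).sub this
        simpa using h2
      refine le_of_tendsto htend2 ?_
      filter_upwards [eventually_ge_atTop 1] with L hL
      have hL0 : (0:ℝ) < L := by exact_mod_cast hL
      have h5 : ((c - ε) * L - D) / L ≤ ∫ x, gt x ∂m :=
        (div_le_iff₀ hL0).2 (by linarith [key2 L])
      have h6 : c - ε - D / L = ((c - ε) * L - D) / L := by field_simp
      rw [h6]; exact h5
    have hgtub : ∫ x, gt x ∂m ≤ (∫ x, g x ∂m) + (B' + B) * (m (E N)).toReal := by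
      have hple : ∀ x, gt x ≤ g x + (E N).indicator (fun _ => B' + B) x := by
        intro x
        by_cases hx : x ∈ E N
        · have h1 := (abs_le.1 (hgtB x)).2
          have h2 := (abs_le.1 (hB x)).1
          simp [Set.indicator_of_mem hx]
          linarith
        · simp [hgtdef, hx, Set.indicator_of_notMem hx]
      have hIind : Integrable ((E N).indicator fun _ => B' + B) m :=
        (integrable_const (B' + B)).indicator (hEm N)
      have := integral_mono hIgt (hIg.add hIind) hple
      simp only [Pi.add_apply] at this
      rwa [integral_add hIg hIind, integral_indicator_const _ (hEm N), smul_eq_mul,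
        mul_comm] at this
    have : c - ε ≤ (∫ x, g x ∂m) + (B' + B) * ε := by
      have h4 : (B' + B) * (m (E N)).toReal ≤ (B' + B) * ε :=
        mul_le_mul_of_nonneg_left hEε (by linarith)
      linarith
    nlinarith
  -- conclude
  refine le_of_forall_pos_le_add fun δ hδ => ?_
  have hK : (0:ℝ) < 1 + B' + B := by positivity
  set ε : ℝ := min 1 (δ / (1 + B' + B)) with hεdef
  have hε : 0 < ε := lt_min one_pos (div_pos hδ hK)
  have hε1 : ε ≤ 1 := min_le_left _ _
  have h := main ε hε hε1
  have h2 : ε * (1 + B' + B) ≤ δ := by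
    have : ε ≤ δ / (1 + B' + B) := min_le_right _ _
    calc ε * (1 + B' + B) ≤ (δ / (1 + B' + B)) * (1 + B' + B) :=
          mul_le_mul_of_nonneg_right this hK.le
      _ = δ := div_mul_cancel₀ δ hK.ne'
  linarith

end AuxLimsup

section AuxBirkhoff

open Function BoundedContinuousFunction

variable {X : Type*} [MetricSpace X] [CompactSpace X]
  [MeasurableSpace X] [BorelSpace X]

-- from c1/c2 (assumed):
-- myIsBddLe, myIsBddGe, kw_core



lemma myBirkhoff (f : X → X) (hf : Continuous f) (m : Measure X)
    [IsProbabilityMeasure m] (herg : Ergodic f m) (g : X →ᵇ ℝ) :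
    ∀ᵐ x ∂m, Tendsto (fun n => birkhoffAverage ℝ f (⇑g) n x) atTop
      (𝓝 (∫ x, g x ∂m)) := by
  set B : ℝ := ‖g‖ with hBdef
  have hB0 : 0 ≤ B := norm_nonneg g
  have hB : ∀ x, |g x| ≤ B := fun x => by
    have := g.norm_coe_le_norm x; rwa [Real.norm_eq_abs] at this
  -- sums and averages
  have hSbd : ∀ (n : ℕ) x, |birkhoffSum f (⇑g) n x| ≤ n * B := by
    intro n x
    calc |birkhoffSum f (⇑g) n x| ≤ ∑ i ∈ Finset.range n, |g (f^[i] x)| :=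
          Finset.abs_sum_le_sum_abs _ _
      _ ≤ ∑ _i ∈ Finset.range n, B := Finset.sum_le_sum fun i _ => hB _
      _ = n * B := by simp [Finset.sum_const, nsmul_eq_mul]
  have habs : ∀ x (n : ℕ), |birkhoffAverage ℝ f (⇑g) n x| ≤ B := by
    intro x n
    rcases Nat.eq_zero_or_pos n with h0 | hp
    · subst h0; simp [birkhoffAverage, birkhoffSum]; exact hB0
    · have hn0 : (0:ℝ) < n := by exact_mod_cast hp
      rw [birkhoffAverage, smul_eq_mul, abs_mul, abs_inv, Nat.abs_cast]
      calc ((n:ℝ))⁻¹ * |birkhoffSum f (⇑g) n x|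
          ≤ ((n:ℝ))⁻¹ * (n * B) := by
            exact mul_le_mul_of_nonneg_left (hSbd n x) (by positivity)
        _ = B := by field_simp
  -- shift identity
  have hshift : ∀ x (n : ℕ), birkhoffAverage ℝ f (⇑g) n (f x)
      = birkhoffAverage ℝ f (⇑g) n x + (n:ℝ)⁻¹ * (g (f^[n] x) - g x) := by
    intro x n
    have h1 : birkhoffSum f (⇑g) n (f x)
        = birkhoffSum f (⇑g) n x + g (f^[n] x) - g x := by
      have h2 := birkhoffSum_succ' f (⇑g) n x
      have h3 := birkhoffSum_succ f (⇑g) n x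
      linarith
    simp only [birkhoffAverage, h1, smul_eq_mul]
    ring
  have hv0 : ∀ x, Tendsto (fun n : ℕ => (n:ℝ)⁻¹ * (g (f^[n] x) - g x)) atTop (𝓝 0) := by
    intro x
    refine squeeze_zero_norm (a := fun n : ℕ => (2*B) / n) (fun n => ?_) ?_
    · show ‖(n:ℝ)⁻¹ * (g (f^[n] x) - g x)‖ ≤ 2 * B / (n:ℝ)
      rw [Real.norm_eq_abs, abs_mul, abs_inv, Nat.abs_cast, div_eq_mul_inv, mul_comm (2*B)]
      refine mul_le_mul_of_nonneg_left ?_ (by positivity)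
      have h1 := abs_le.1 (hB (f^[n] x)); have h2 := abs_le.1 (hB x)
      exact abs_le.2 ⟨by linarith [h1.1, h2.2], by linarith [h1.2, h2.1]⟩
    · exact tendsto_const_div_atTop_nhds_zero_nat (2*B)
  -- limsup and liminf are invariant
  set φ : X → ℝ := fun x => limsup (fun n => birkhoffAverage ℝ f (⇑g) n x) atTop with hφdef
  set ψ : X → ℝ := fun x => liminf (fun n => birkhoffAverage ℝ f (⇑g) n x) atTop with hψdef
  have hAc : ∀ n : ℕ, Continuous fun x => birkhoffAverage ℝ f (⇑g) n x := by
    intro n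
    exact (continuous_finset_sum _ fun i _ => g.continuous.comp (hf.iterate i)).const_smul ((n : ℝ)⁻¹)
  have hφm : Measurable φ := Measurable.limsup fun n => (hAc n).measurable
  have hψm : Measurable ψ := Measurable.liminf fun n => (hAc n).measurable
  have hφf : φ ∘ f = φ := by
    funext x
    simp only [Function.comp_apply, hφdef]
    have := myLimsupAddEq (u := fun n => birkhoffAverage ℝ f (⇑g) n x)
      (v := fun n => (n:ℝ)⁻¹ * (g (f^[n] x) - g x)) (habs x) (hv0 x)
    rw [← this]
    congr 1
    funext n
    exact hshift x n
  have hψf : ψ ∘ f = ψ := by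
    funext x
    simp only [Function.comp_apply, hψdef]
    have := myLiminfAddEq (u := fun n => birkhoffAverage ℝ f (⇑g) n x)
      (v := fun n => (n:ℝ)⁻¹ * (g (f^[n] x) - g x)) (habs x) (hv0 x)
    rw [← this]
    congr 1
    funext n
    exact hshift x n
  obtain ⟨c, hc⟩ := herg.toPreErgodic.ae_eq_const_of_ae_eq_comp hφm hφf
  obtain ⟨c', hc'⟩ := herg.toPreErgodic.ae_eq_const_of_ae_eq_comp hψm hψf
  haveI : (ae m).NeBot := ae_neBot.2 (IsProbabilityMeasure.ne_zero m)
  -- c ≤ ∫ g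
  have hcle : c ≤ ∫ x, g x ∂m := by
    refine kw_core m herg.toMeasurePreserving g.continuous.measurable hB0 hB c ?_
    filter_upwards [hc] with x hx ε hε
    by_contra hcon
    push_neg at hcon
    have hev : ∀ᶠ n : ℕ in atTop, birkhoffAverage ℝ f (⇑g) n x ≤ c - ε := by
      filter_upwards [eventually_ge_atTop 1] with n hn
      have hn0 : (0:ℝ) < n := by exact_mod_cast hn
      have := hcon n hn
      rw [birkhoffAverage, smul_eq_mul]
      rw [inv_mul_le_iff₀ hn0, mul_comm]
      exact this.le
    have hls : limsup (fun n => birkhoffAverage ℝ f (⇑g) n x) atTop ≤ c - ε :=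
      limsup_le_of_le (myIsBddGe (habs x)).isCoboundedUnder_le hev
    have hxc : limsup (fun n => birkhoffAverage ℝ f (⇑g) n x) atTop = c := hx
    rw [hxc] at hls
    linarith
  -- ∫ g ≤ c'
  have hc'ge : ∫ x, g x ∂m ≤ c' := by
    have hneg : ∀ (n : ℕ) x, birkhoffSum f (fun y => -(g y)) n x
        = -birkhoffSum f (⇑g) n x := by
      intro n x; simp [birkhoffSum, Finset.sum_neg_distrib]
    have key : -c' ≤ ∫ x, -(g x) ∂m := by
      refine kw_core m herg.toMeasurePreserving (g.continuous.measurable.neg)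
        (B := B) hB0 (fun x => by rw [Pi.neg_apply, abs_neg]; exact hB x) (-c') ?_
      filter_upwards [hc'] with x hx ε hε
      by_contra hcon
      push_neg at hcon
      have hev : ∀ᶠ n : ℕ in atTop, c' + ε ≤ birkhoffAverage ℝ f (⇑g) n x := by
        filter_upwards [eventually_ge_atTop 1] with n hn
        have hn0 : (0:ℝ) < n := by exact_mod_cast hn
        have h1 := hcon n hn
        rw [show (-⇑g : X → ℝ) = (fun y => -g y) from rfl, hneg n x] at h1
        have h2 : (c' + ε) * n ≤ birkhoffSum f (⇑g) n x := by linarith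
        have h3 : c' + ε = (n:ℝ)⁻¹ * ((c' + ε) * n) := by field_simp
        rw [birkhoffAverage, smul_eq_mul, h3]
        exact mul_le_mul_of_nonneg_left h2 (by positivity)
      have hls : c' + ε ≤ liminf (fun n => birkhoffAverage ℝ f (⇑g) n x) atTop :=
        le_liminf_of_le (myIsBddLe (habs x)).isCoboundedUnder_ge hev
      have hxc : liminf (fun n => birkhoffAverage ℝ f (⇑g) n x) atTop = c' := hx
      rw [hxc] at hls
      linarith
    rw [integral_neg] at key
    linarith
  -- c' ≤ c
  have hcc : c' ≤ c := by
    obtain ⟨x, hx1, hx2⟩ := (hc.and hc').exists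
    have h5 : ψ x ≤ φ x :=
      liminf_le_limsup (myIsBddLe (habs x)) (myIsBddGe (habs x))
    have h6 : φ x = c := hx1
    have h7 : ψ x = c' := hx2
    rw [h6, h7] at h5
    exact h5
  have hceq : c = ∫ x, g x ∂m := le_antisymm hcle (by linarith)
  have hc'eq : c' = ∫ x, g x ∂m := by linarith
  filter_upwards [hc, hc'] with x hx1 hx2
  refine tendsto_of_liminf_eq_limsup ?_ ?_ (myIsBddLe (habs x)) (myIsBddGe (habs x))
  · have h7 : liminf (fun n => birkhoffAverage ℝ f (⇑g) n x) atTop = c' := hx2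
    rw [h7, hc'eq]
  · have h6 : limsup (fun n => birkhoffAverage ℝ f (⇑g) n x) atTop = c := hx1
    rw [h6, hceq]


end AuxBirkhoff

section AuxMain

open Function BoundedContinuousFunction TopologicalSpace

variable {X : Type*} [MetricSpace X] [CompactSpace X] [MeasurableSpace X] [BorelSpace X]

lemma myAvgShift (f : X → X) (g : X →ᵇ ℝ) (x : X) (n : ℕ) :
    birkhoffAverage ℝ f (⇑g) n (f x)
      = birkhoffAverage ℝ f (⇑g) n x + (n:ℝ)⁻¹ * (g (f^[n] x) - g x) := by
  have h1 : birkhoffSum f (⇑g) n (f x)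
      = birkhoffSum f (⇑g) n x + g (f^[n] x) - g x := by
    have h2 := birkhoffSum_succ' f (⇑g) n x
    have h3 := birkhoffSum_succ f (⇑g) n x
    linarith
  simp only [birkhoffAverage, h1, smul_eq_mul]
  ring

lemma myVTendsto (f : X → X) (g : X →ᵇ ℝ) (x : X) :
    Tendsto (fun n : ℕ => (n:ℝ)⁻¹ * (g (f^[n] x) - g x)) atTop (𝓝 0) := by
  have hB : ∀ y, |g y| ≤ ‖g‖ := fun y => by
    have := g.norm_coe_le_norm y; rwa [Real.norm_eq_abs] at this
  refine squeeze_zero_norm (a := fun n : ℕ => (2 * ‖g‖) / n) (fun n => ?_) ?_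
  · show ‖(n:ℝ)⁻¹ * (g (f^[n] x) - g x)‖ ≤ 2 * ‖g‖ / (n:ℝ)
    rw [Real.norm_eq_abs, abs_mul, abs_inv, Nat.abs_cast, div_eq_mul_inv,
      mul_comm (2 * ‖g‖)]
    refine mul_le_mul_of_nonneg_left ?_ (by positivity)
    have h1 := abs_le.1 (hB (f^[n] x)); have h2 := abs_le.1 (hB x)
    exact abs_le.2 ⟨by linarith [h1.1, h2.2], by linarith [h1.2, h2.1]⟩
  · exact tendsto_const_div_atTop_nhds_zero_nat _

lemma myShiftTendsto (f : X → X) (g : X →ᵇ ℝ) (x : X) (r : ℝ)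
    (h : Tendsto (fun n => birkhoffAverage ℝ f (⇑g) n x) atTop (𝓝 r)) :
    Tendsto (fun n => birkhoffAverage ℝ f (⇑g) n (f x)) atTop (𝓝 r) := by
  have heq : (fun n => birkhoffAverage ℝ f (⇑g) n (f x))
      = fun n => birkhoffAverage ℝ f (⇑g) n x + (n:ℝ)⁻¹ * (g (f^[n] x) - g x) :=
    funext fun n => myAvgShift f g x n
  rw [heq]
  simpa using h.add (myVTendsto f g x)

lemma myEmpiricIntegral (f : X → X) (x : X) (n : ℕ) (g : X →ᵇ ℝ) :
    ∫ y, g y ∂((empiric f x n : ProbabilityMeasure X) : Measure X)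
      = birkhoffAverage ℝ f (⇑g) (n + 1) x := by
  have hval : ((empiric f x n : ProbabilityMeasure X) : Measure X)
      = ((n : ℝ≥0∞) + 1)⁻¹ • ∑ i ∈ Finset.range (n + 1), Measure.dirac (f^[i] x) := rfl
  rw [hval, integral_smul_measure,
    integral_finset_sum_measure (fun i _ => g.integrable _)]
  simp only [integral_dirac]
  rw [birkhoffAverage, birkhoffSum]
  congr 1
  rw [ENNReal.toReal_inv]
  congr 1
  rw [ENNReal.toReal_add (by simp) (by simp)]
  push_cast
  simp

lemma myGenericAE (f : X → X) (hf : Continuous f) (μ : ProbabilityMeasure X)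
    (herg : Ergodic f μ.toMeasure) :
    ∀ᵐ x ∂μ.toMeasure, ∀ g : X →ᵇ ℝ,
      Tendsto (fun n => birkhoffAverage ℝ f (⇑g) n x) atTop
        (𝓝 (∫ y, g y ∂μ.toMeasure)) := by
  haveI : SecondCountableTopology (X →ᵇ ℝ) :=
    (ContinuousMap.isometryEquivBoundedOfCompact X ℝ).toHomeomorph.symm.isEmbedding.secondCountableTopology
  obtain ⟨u, hu⟩ := TopologicalSpace.exists_dense_seq (X →ᵇ ℝ)
  have hae : ∀ᵐ x ∂μ.toMeasure, ∀ k : ℕ,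
      Tendsto (fun n => birkhoffAverage ℝ f (⇑(u k)) n x) atTop
        (𝓝 (∫ y, (u k) y ∂μ.toMeasure)) :=
    ae_all_iff.2 fun k => myBirkhoff f hf _ herg (u k)
  filter_upwards [hae] with x hx g
  rw [Metric.tendsto_atTop]
  intro ε hε
  obtain ⟨k, hk⟩ := hu.exists_dist_lt g (show (0:ℝ) < ε/4 by linarith)
  have hcoe : ∀ y : X, |g y - u k y| ≤ ε/4 := fun y => by
    have h1 : dist (g y) ((u k) y) ≤ dist g (u k) :=
      BoundedContinuousFunction.dist_coe_le_dist y
    rw [Real.dist_eq] at h1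
    linarith [hk]
  have havg : ∀ m : ℕ,
      |birkhoffAverage ℝ f (⇑g) m x - birkhoffAverage ℝ f (⇑(u k)) m x| ≤ ε/4 := by
    intro m
    rcases Nat.eq_zero_or_pos m with h0 | hp
    · subst h0; simp [birkhoffAverage]; linarith
    · have hm0 : (0:ℝ) < m := by exact_mod_cast hp
      have heq : birkhoffAverage ℝ f (⇑g) m x - birkhoffAverage ℝ f (⇑(u k)) m x
          = (m:ℝ)⁻¹ * ∑ i ∈ Finset.range m, (g (f^[i] x) - u k (f^[i] x)) := by
        simp only [birkhoffAverage, birkhoffSum, smul_eq_mul, Finset.sum_sub_distrib]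
        ring
      rw [heq, abs_mul, abs_inv, Nat.abs_cast]
      have hsum : |∑ i ∈ Finset.range m, (g (f^[i] x) - u k (f^[i] x))| ≤ m * (ε/4) := by
        calc |∑ i ∈ Finset.range m, (g (f^[i] x) - u k (f^[i] x))|
            ≤ ∑ i ∈ Finset.range m, |g (f^[i] x) - u k (f^[i] x)| :=
              Finset.abs_sum_le_sum_abs _ _
          _ ≤ ∑ _i ∈ Finset.range m, (ε/4) := Finset.sum_le_sum fun i _ => hcoe _
          _ = m * (ε/4) := by simp [Finset.sum_const, nsmul_eq_mul]
      calc (m:ℝ)⁻¹ * |∑ i ∈ Finset.range m, (g (f^[i] x) - u k (f^[i] x))|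
          ≤ (m:ℝ)⁻¹ * (m * (ε/4)) := mul_le_mul_of_nonneg_left hsum (by positivity)
        _ = ε/4 := by field_simp
  have hint : |(∫ y, g y ∂μ.toMeasure) - ∫ y, u k y ∂μ.toMeasure| ≤ ε/4 := by
    rw [← integral_sub (g.integrable _) ((u k).integrable _)]
    have hni := norm_integral_le_of_norm_le_const (μ := μ.toMeasure)
      (f := fun y => g y - u k y) (C := ε/4)
      (Eventually.of_forall fun y => by rw [Real.norm_eq_abs]; exact hcoe y)
    simpa [measure_univ, Real.norm_eq_abs] using hni
  obtain ⟨N, hN⟩ := Metric.tendsto_atTop.1 (hx k) (ε/4) (by linarith)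
  refine ⟨N, fun m hm => ?_⟩
  have h2 := hN m hm
  rw [Real.dist_eq] at h2 ⊢
  have h3 := havg m
  have h4 : |birkhoffAverage ℝ f (⇑g) m x - ∫ y, g y ∂μ.toMeasure|
      ≤ |birkhoffAverage ℝ f (⇑g) m x - birkhoffAverage ℝ f (⇑(u k)) m x|
        + |birkhoffAverage ℝ f (⇑(u k)) m x - ∫ y, u k y ∂μ.toMeasure|
        + |(∫ y, u k y ∂μ.toMeasure) - ∫ y, g y ∂μ.toMeasure| := by
    have t1 := abs_sub_le (birkhoffAverage ℝ f (⇑g) m x)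
      (birkhoffAverage ℝ f (⇑(u k)) m x) (∫ y, g y ∂μ.toMeasure)
    have t2 := abs_sub_le (birkhoffAverage ℝ f (⇑(u k)) m x)
      (∫ y, u k y ∂μ.toMeasure) (∫ y, g y ∂μ.toMeasure)
    linarith
  rw [abs_sub_comm] at hint
  linarith

lemma myEmpiricTendsto (f : X → X) (μ : ProbabilityMeasure X) {x : X}
    (hx : ∀ g : X →ᵇ ℝ, Tendsto (fun n => birkhoffAverage ℝ f (⇑g) n x) atTop
      (𝓝 (∫ y, g y ∂μ.toMeasure))) :
    Tendsto (empiric f x) atTop (𝓝 μ) := by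
  rw [ProbabilityMeasure.tendsto_iff_forall_integral_tendsto]
  intro g
  have h1 : (fun n => ∫ ω, g ω ∂((empiric f x n : ProbabilityMeasure X) : Measure X))
      = fun n => birkhoffAverage ℝ f (⇑g) (n + 1) x :=
    funext fun n => myEmpiricIntegral f x n g
  show Tendsto (fun n => ∫ ω, g ω ∂((empiric f x n : ProbabilityMeasure X) : Measure X))
    atTop (𝓝 (∫ ω, g ω ∂(μ : Measure X)))
  rw [h1]
  exact (tendsto_add_atTop_iff_nat 1).2 (hx g)

lemma myMemGK (f : X → X) (μ : ProbabilityMeasure X) {x : X}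
    (hx : Tendsto (empiric f x) atTop (𝓝 μ)) : x ∈ GK f {μ} := by
  show Vf f x = {μ}
  ext ν
  simp only [Vf, Set.mem_setOf_eq, Set.mem_singleton_iff]
  constructor
  · intro hν
    exact eq_of_nhds_neBot (ClusterPt.mono hν hx)
  · rintro rfl
    have : (Filter.map (empiric f x) atTop).NeBot := Filter.map_neBot
    exact ClusterPt.of_le_nhds hx

lemma mySuppConull (m : Measure X) : m (measSupport m)ᶜ = 0 := by
  haveI : SeparableSpace X := by infer_instance
  set U : Set (Set X) := {V ∈ countableBasis X | m V = 0} with hUdef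
  have hcount : U.Countable := (countable_countableBasis X).mono (Set.sep_subset _ _)
  have hsub : (measSupport m)ᶜ ⊆ ⋃₀ U := by
    intro x hx
    simp only [Set.mem_compl_iff, measSupport, Set.mem_setOf_eq] at hx
    push_neg at hx
    obtain ⟨V, hVopen, hxV, hV0⟩ := hx
    obtain ⟨W, hW, hxW, hWV⟩ :=
      (isBasis_countableBasis X).exists_subset_of_mem_open hxV hVopen
    refine ⟨W, ⟨hW, ?_⟩, hxW⟩
    exact measure_mono_null hWV (le_zero_iff.1 hV0)
  refine measure_mono_null hsub ?_
  exact (measure_sUnion_null_iff hcount).2 fun s hs => hs.2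

lemma myNoPeriodicPt (f : X → X) {S : Set X} (hmin : MinimalSet f S)
    (hnper : ¬ PeriodicSet f S) :
    ∀ p : ℕ, 0 < p → ∀ z ∈ S, f^[p] z ≠ z := by
  intro p hp z hz hfix
  apply hnper
  refine ⟨z, ⟨p, hp, hfix⟩, ?_⟩
  set T : Set X := Set.range fun i : ℕ => f^[i] z with hTdef
  suffices hTS : T = S by exact hTS.symm
  have hcomm : ∀ r : ℕ, f^[p] (f^[r] z) = f^[r] z := fun r => by
    rw [← Function.iterate_add_apply, add_comm, Function.iterate_add_apply, hfix]
  have hk : ∀ k r : ℕ, f^[p * k + r] z = f^[r] z := by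
    intro k
    induction k with
    | zero => simp
    | succ k ih =>
      intro r
      have h1 : p * (k + 1) + r = p * k + (p + r) := by ring
      rw [h1, Function.iterate_add_apply, Function.iterate_add_apply f p r z,
        hcomm r, ← Function.iterate_add_apply]
      exact ih r
  refine hmin.2.2.2 T ?_ ?_ ?_ ?_
  · rintro _ ⟨i, rfl⟩
    exact (hmin.2.2.1.iterate i) hz
  · exact ⟨z, ⟨0, rfl⟩⟩
  · refine Set.Finite.isClosed ?_
    refine Set.Finite.subset ((Finset.range p).finite_toSet.image fun i => f^[i] z) ?_
    rintro _ ⟨i, rfl⟩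
    have hmod : f^[i] z = f^[i % p] z := by
      conv_lhs => rw [← Nat.div_add_mod i p]
      exact hk (i / p) (i % p)
    show f^[i] z ∈ (fun i => f^[i] z) '' ↑(Finset.range p)
    rw [hmod]
    exact ⟨i % p, by simp [Finset.mem_range, Nat.mod_lt i hp], rfl⟩
  · rintro _ ⟨i, rfl⟩
    exact ⟨i + 1, by simp [Function.iterate_succ_apply']⟩

lemma myDistalBound (f : X → X) (hf : Continuous f) {S : Set X} (hS : IsClosed S)
    (hne : S.Nonempty) (p : ℕ) (hfree : ∀ z ∈ S, f^[p] z ≠ z) :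
    ∃ ε > (0:ℝ), ∀ z ∈ S, ε ≤ dist z (f^[p] z) := by
  have hcomp : IsCompact S := hS.isCompact
  have hcont : ContinuousOn (fun z => dist z (f^[p] z)) S :=
    (continuous_id.dist (hf.iterate p)).continuousOn
  obtain ⟨z0, hz0, hmin⟩ := hcomp.exists_isMinOn hne hcont
  exact ⟨dist z0 (f^[p] z0), dist_pos.2 fun h => hfree z0 hz0 h.symm,
    fun z hz => hmin hz⟩

end AuxMain

theorem exists_distal_pair_in_generic_points
    {X : Type*} [MetricSpace X] [CompactSpace X] [Nontrivial X]
    [MeasurableSpace X] [BorelSpace X]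
    (f : X → X) (hf : Continuous f)
    (μ : ProbabilityMeasure X) (herg : Ergodic f μ.toMeasure)
    (hmin : MinimalSet f (measSupport μ.toMeasure))
    (hnper : ¬ PeriodicSet f (measSupport μ.toMeasure)) :
    ∀ Q : ℕ, 1 ≤ Q → ∃ x y : X, x ∈ GK f {μ} ∧ y ∈ GK f {μ} ∧
      ∀ j < Q, DistalPair f x (f^[j] y) := by
  intro Q hQ
  have hSclosed : IsClosed (measSupport μ.toMeasure) := hmin.2.1
  have hSne : (measSupport μ.toMeasure).Nonempty := hmin.1
  have hmaps : Set.MapsTo f (measSupport μ.toMeasure) (measSupport μ.toMeasure) :=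
    hmin.2.2.1
  -- a generic point inside the support
  have haeS : ∀ᵐ x ∂μ.toMeasure, x ∈ measSupport μ.toMeasure := by
    rw [MeasureTheory.ae_iff]
    exact mySuppConull (X := X) μ.toMeasure
  haveI : (MeasureTheory.ae μ.toMeasure).NeBot :=
    MeasureTheory.ae_neBot.2 (IsProbabilityMeasure.ne_zero μ.toMeasure)
  obtain ⟨x, hxT, hxS⟩ := ((myGenericAE f hf μ herg).and haeS).exists
  have hyT : ∀ g : X →ᵇ ℝ,
      Tendsto (fun n => birkhoffAverage ℝ f (⇑g) n (f x)) atTop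
        (𝓝 (∫ y, g y ∂μ.toMeasure)) := fun g => myShiftTendsto f g x _ (hxT g)
  refine ⟨x, f x, myMemGK f μ (myEmpiricTendsto f μ hxT),
    myMemGK f μ (myEmpiricTendsto f μ hyT), ?_⟩
  intro j hj
  obtain ⟨ε, hε, hlb⟩ := myDistalBound f hf hSclosed hSne (j + 1)
    (myNoPeriodicPt f hmin hnper (j + 1) (Nat.succ_pos j))
  show 0 < Filter.liminf (fun i : ℕ => dist (f^[i] x) (f^[i] (f^[j] (f x)))) Filter.atTop
  obtain ⟨C, hC⟩ : ∃ C : ℝ, ∀ p q : X, dist p q ≤ C := by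
    obtain ⟨C, hC⟩ := Metric.isBounded_iff.1 (isCompact_univ (X := X)).isBounded
    exact ⟨C, fun p q => hC (Set.mem_univ p) (Set.mem_univ q)⟩
  have hbd : Filter.IsBoundedUnder (· ≤ ·) Filter.atTop
      (fun i : ℕ => dist (f^[i] x) (f^[i] (f^[j] (f x)))) :=
    ⟨C, Filter.eventually_map.2 <| Filter.Eventually.of_forall fun i => hC _ _⟩
  refine lt_of_lt_of_le hε (Filter.le_liminf_of_le hbd.isCoboundedUnder_ge ?_)
  refine Filter.Eventually.of_forall fun i => ?_
  have hrw : f^[i] (f^[j] (f x)) = f^[j+1] (f^[i] x) := by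
    rw [← Function.iterate_succ_apply f j x, ← Function.iterate_add_apply,
      add_comm, Function.iterate_add_apply]
  rw [hrw]
  exact hlb _ ((hmaps.iterate i) hxS)
end

section
/- Suppose a dynamical system (X,f) with at least one periodic point is transitive and has the shadowing property. If X is not periodic, then the topological entropy of (X,f) is strictly positive: h_top(f) > 0. -/
open Filter Topology MeasureTheory
open scoped ENNReal NNReal

/-! ### Auxiliary material -/

set_option linter.unusedSectionVars false

open Dynamics Uniformity in
/-- If the maximal net cardinality grows at exponential speed `2^k` along times `k * L`,
then the cover entropy is positive. -/
lemma entropy_pos_of_netMaxcard_growth {X : Type*} [MetricSpace X]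
    (f : X → X) {U : Set (X × X)} (hU : U ∈ 𝓤 X) {L : ℕ} (hL : 1 ≤ L)
    (h : ∀ k : ℕ, (2^k : ℕ∞) ≤ netMaxcard f Set.univ U (k * L)) :
    0 < coverEntropy f (Set.univ : Set X) := by
  have hL' : (0:ℝ) < L := by exact_mod_cast hL
  have hc : (0:EReal) < ↑(Real.log 2 / L) :=
    EReal.coe_pos.2 (div_pos (Real.log_pos one_lt_two) hL')
  have key : (↑(Real.log 2 / L) : EReal) ≤ netEntropyEntourage f Set.univ U := by
    apply le_limsup_of_frequently_le (hu_le := isBounded_le_of_top)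
    rw [frequently_atTop]
    intro N
    refine ⟨(N+1) * L, by nlinarith [hL], ?_⟩
    set k := N + 1 with hk
    have hcard : ((2:ℝ≥0∞))^k ≤ (netMaxcard f Set.univ U (k * L) : ℝ≥0∞) := by
      have := h k
      exact_mod_cast ENat.toENNReal_mono this
    have hlog : (↑(k * Real.log 2) : EReal) ≤ ENNReal.log (netMaxcard f Set.univ U (k * L)) := by
      refine le_trans ?_ (ENNReal.log_monotone hcard)
      rw [ENNReal.log_pow]
      have h2 : ENNReal.log 2 = (Real.log 2 : EReal) := by
        rw [show (2:ℝ≥0∞) = ENNReal.ofReal 2 by simp, ENNReal.log_ofReal_of_pos (by norm_num)]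
      rw [h2]
      norm_cast
    rw [EReal.le_div_iff_mul_le (by exact_mod_cast Nat.pos_of_ne_zero (by positivity))
      (EReal.natCast_ne_top _)]
    refine le_trans ?_ hlog
    rw [show ((k*L : ℕ) : EReal) = ((k*L : ℕ) : ℝ) by norm_cast, ← EReal.coe_mul]
    apply EReal.coe_le_coe_iff.2
    push_cast
    rw [div_mul_eq_mul_div, mul_comm (Real.log 2)]
    rw [mul_assoc, mul_div_assoc]
    rw [mul_div_cancel_left₀ _ (ne_of_gt hL')]
  calc (0:EReal) < ↑(Real.log 2 / L) := hc
    _ ≤ netEntropyEntourage f Set.univ U := key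
    _ ≤ coverEntropy f Set.univ := netEntropyEntourage_le_coverEntropy f Set.univ hU

/-- In a transitive system on a compact metric space, between any two points there is
a `δ`-chain. -/
lemma chain_exists {X : Type*} [MetricSpace X] [CompactSpace X]
    {f : X → X} (hf : Continuous f) (htrans : TopTransitive f)
    {δ : ℝ} (hδ : 0 < δ) (u v : X) :
    ∃ n : ℕ, 1 ≤ n ∧ ∃ c : ℕ → X, c 0 = u ∧ c n = v ∧
      ∀ k < n, dist (c (k+1)) (f (c k)) < δ := by
  obtain ⟨δ₁, hδ₁, hδ₁'⟩ := Metric.uniformContinuous_iff.1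
    (CompactSpace.uniformContinuous_of_continuous hf) (δ/2) (by linarith)
  set η := min δ₁ (δ/2) with hηdef
  have hη0 : 0 < η := lt_min hδ₁ (by linarith)
  obtain ⟨n, hn1, w, hw1, hw2⟩ := htrans (Metric.ball u η) (Metric.ball v η)
    Metric.isOpen_ball Metric.isOpen_ball ⟨u, Metric.mem_ball_self hη0⟩
    ⟨v, Metric.mem_ball_self hη0⟩
  rw [Set.mem_preimage, Metric.mem_ball] at hw2
  rw [Metric.mem_ball] at hw1
  have hfw : dist (f w) (f u) < δ/2 := hδ₁' (lt_of_lt_of_le hw1 (min_le_left _ _))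
  refine ⟨n, hn1, fun k => if k = 0 then u else if n ≤ k then v else f^[k] w, rfl, ?_, ?_⟩
  · simp [Nat.one_le_iff_ne_zero.1 hn1]
  · intro k hk
    rcases Nat.eq_zero_or_pos k with rfl | hk0
    · rcases eq_or_lt_of_le hn1 with h1 | h2
      · -- n = 1
        have : dist v (f w) < η := by
          have := hw2; rw [← h1] at this; simpa [dist_comm] using this
        simp only [if_pos rfl, ← h1, if_neg one_ne_zero, if_pos le_rfl]
        calc dist v (f u) ≤ dist v (f w) + dist (f w) (f u) := dist_triangle _ _ _
          _ < η + δ/2 := add_lt_add this hfw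
          _ ≤ δ/2 + δ/2 := by have := min_le_right δ₁ (δ/2); linarith
          _ = δ := by ring
      · -- n ≥ 2
        simp only [if_pos rfl, if_neg one_ne_zero, if_neg (not_le.2 h2)]
        calc dist (f^[1] w) (f u) = dist (f w) (f u) := by rw [Function.iterate_one]
          _ < δ/2 := hfw
          _ < δ := by linarith
    · have hkne : k ≠ 0 := hk0.ne'
      have hknle : ¬ n ≤ k := not_le.2 hk
      rcases eq_or_lt_of_le (Nat.succ_le_of_lt hk) with h1 | h2
      · -- k+1 = n
        have : dist (f^[n] w) v < η := hw2
        simp only [if_neg (Nat.succ_ne_zero k), if_pos (le_of_eq h1.symm), if_neg hkne,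
          if_neg hknle]
        rw [← Function.iterate_succ_apply' f k w, h1]
        calc dist v (f^[n] w) < η := by rw [dist_comm]; exact this
          _ ≤ δ/2 := min_le_right _ _
          _ < δ := by linarith
      · -- k+1 < n
        simp only [if_neg (Nat.succ_ne_zero k), if_neg (not_le.2 h2), if_neg hkne, if_neg hknle]
        rw [Function.iterate_succ_apply' f k w]
        simp [hδ]

lemma iterate_mul_period {X : Type*} {f : X → X} {x : X} {p : ℕ}
    (hx : f^[p] x = x) (m : ℕ) : f^[m * p] x = x := by
  have h : Function.IsPeriodicPt f p x := hx
  exact (h.const_mul m : Function.IsPeriodicPt f (m*p) x)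

/-- Building block pseudo-orbits. -/
def Blk {X : Type*} (f : X → X) (x : X) (cA cB : ℕ → X) (p a b : ℕ) : Bool → ℕ → X :=
  fun s t =>
    if s then
      (if t < (a+1)*p then f^[t] x
       else if t < (a+1)*p + a then cA (t - (a+1)*p)
       else cB (t - ((a+1)*p + a)))
    else
      (if t < a then cA t else if t < a + b then cB (t - a) else f^[t - (a+b)] x)

section BlkLemmas

variable {X : Type*} [MetricSpace X] {f : X → X} {x z : X} {cA cB : ℕ → X} {p a b : ℕ}
  {δ : ℝ}

variable (hδ : 0 < δ) (hp : 0 < p) (ha : 1 ≤ a) (hb : 1 ≤ b)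
  (hx : f^[p] x = x)
  (hcA0 : cA 0 = x) (hcAa : cA a = z) (hcA : ∀ k < a, dist (cA (k+1)) (f (cA k)) < δ)
  (hcB0 : cB 0 = z) (hcBb : cB b = x) (hcB : ∀ k < b, dist (cB (k+1)) (f (cB k)) < δ)

local notation "L" => (a+1)*p + a + b
local notation "blk" => Blk f x cA cB p a b

include hδ hp ha hb hx hcA0 hcAa hcA hcB0 hcBb hcB

lemma blk_start : ∀ s, blk s 0 = x := by
  have h1 : 0 < a := ha
  have h2 : 0 < (a+1)*p := by positivity
  intro s
  cases s
  · simp [Blk, h1, hcA0]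
  · simp [Blk, h2]

lemma blk_false_a : blk false a = z := by
  have h3 : a < a + b := by omega
  simp [Blk, h3, hcB0]

lemma blk_true_a : blk true a = f^[a] x := by
  have h4 : a < (a+1)*p := by nlinarith
  simp [Blk, h4]

lemma blk_false_le_a : ∀ t ≤ a, blk false t = cA t := by
  intro t ht
  rcases lt_or_eq_of_le ht with h | rfl
  · simp [Blk, h]
  · rw [blk_false_a hδ hp ha hb hx hcA0 hcAa hcA hcB0 hcBb hcB, hcAa]

lemma blk_false_mid : ∀ t, a ≤ t → t ≤ a + b → blk false t = cB (t - a) := by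
  intro t h1 h2
  rcases lt_or_eq_of_le h2 with h | rfl
  · simp [Blk, h, Nat.not_lt.2 h1]
  · have h5 : ¬ (a + b < a + b) := lt_irrefl _
    simp only [Blk, Bool.false_eq_true, if_false, if_neg (show ¬ (a+b<a) by omega), if_neg h5]
    rw [Nat.sub_self, Function.iterate_zero_apply, Nat.add_sub_cancel_left, hcBb]

lemma blk_true_le : ∀ t ≤ (a+1)*p, blk true t = f^[t] x := by
  intro t ht
  rcases lt_or_eq_of_le ht with h | rfl
  · simp [Blk, h]
  · have h6 : (a+1)*p < (a+1)*p + a := by omega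
    simp only [Blk, if_true, if_neg (lt_irrefl _), if_pos h6, Nat.sub_self, hcA0]
    rw [iterate_mul_period hx (a+1)]

lemma blk_true_mid : ∀ t, (a+1)*p ≤ t → t ≤ (a+1)*p + a → blk true t = cA (t - (a+1)*p) := by
  intro t h1 h2
  rcases lt_or_eq_of_le h2 with h | rfl
  · simp [Blk, h, Nat.not_lt.2 h1]
  · simp only [Blk, if_true, if_neg (show ¬ ((a+1)*p + a < (a+1)*p) by omega),
      if_neg (lt_irrefl _), Nat.sub_self, Nat.add_sub_cancel_left, hcB0, hcAa]

lemma blk_true_hi : ∀ t, (a+1)*p + a ≤ t → blk true t = cB (t - ((a+1)*p + a)) := by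
  intro t h1
  have e1 : ¬ (t < (a+1)*p) := by omega
  have e2 : ¬ (t < (a+1)*p + a) := by omega
  simp [Blk, e1, e2]

lemma blk_false_hi : ∀ t, a + b ≤ t → blk false t = f^[t - (a+b)] x := by
  intro t h1
  have e1 : ¬ (t < a) := by omega
  have e2 : ¬ (t < a + b) := by omega
  simp [Blk, e1, e2]

lemma blk_step : ∀ s t, t + 1 < L → dist (blk s (t+1)) (f (blk s t)) < δ := by
  intro s t htL
  have B0 := blk_false_le_a hδ hp ha hb hx hcA0 hcAa hcA hcB0 hcBb hcB
  have B1 := blk_false_mid hδ hp ha hb hx hcA0 hcAa hcA hcB0 hcBb hcB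
  have B2 := blk_false_hi hδ hp ha hb hx hcA0 hcAa hcA hcB0 hcBb hcB
  have B3 := blk_true_le hδ hp ha hb hx hcA0 hcAa hcA hcB0 hcBb hcB
  have B4 := blk_true_mid hδ hp ha hb hx hcA0 hcAa hcA hcB0 hcBb hcB
  have B5 := blk_true_hi hδ hp ha hb hx hcA0 hcAa hcA hcB0 hcBb hcB
  cases s
  · rcases lt_or_ge t a with h | h
    · rw [B0 (t+1) h, B0 t (le_of_lt h)]
      exact hcA t h
    · rcases lt_or_ge t (a+b) with h2 | h2
      · rw [B1 (t+1) (by omega) (by omega), B1 t h (le_of_lt h2)]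
        have : t + 1 - a = (t - a) + 1 := by omega
        rw [this]
        exact hcB (t-a) (by omega)
      · rw [B2 (t+1) (by omega), B2 t h2]
        have : t + 1 - (a+b) = (t - (a+b)) + 1 := by omega
        rw [this, Function.iterate_succ_apply']
        simpa using hδ
  · rcases lt_or_ge t ((a+1)*p) with h | h
    · rw [B3 (t+1) (by omega), B3 t (le_of_lt h), Function.iterate_succ_apply']
      simpa using hδ
    · rcases lt_or_ge t ((a+1)*p + a) with h2 | h2
      · rw [B4 (t+1) (by omega) (by omega), B4 t h (le_of_lt h2)]
        have : t + 1 - (a+1)*p = (t - (a+1)*p) + 1 := by omega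
        rw [this]
        exact hcA (t - (a+1)*p) (by omega)
      · rw [B5 (t+1) (by omega), B5 t h2]
        have : t + 1 - ((a+1)*p + a) = (t - ((a+1)*p + a)) + 1 := by omega
        rw [this]
        exact hcB (t - ((a+1)*p + a)) (by omega)

lemma blk_seam : ∀ s, dist x (f (blk s (L - 1))) < δ := by
  intro s
  have hp1 : 0 < (a+1)*p := by positivity
  cases s
  · rw [blk_false_hi hδ hp ha hb hx hcA0 hcAa hcA hcB0 hcBb hcB (L-1) (by omega)]
    have h1 : L - 1 - (a+b) = (a+1)*p - 1 := by omega
    rw [h1, ← Function.iterate_succ_apply' f ((a+1)*p - 1) x,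
      show ((a+1)*p - 1).succ = (a+1)*p by omega,
      iterate_mul_period hx (a+1)]
    simpa using hδ
  · rw [blk_true_hi hδ hp ha hb hx hcA0 hcAa hcA hcB0 hcBb hcB (L-1) (by omega)]
    have h1 : L - 1 - ((a+1)*p + a) = b - 1 := by omega
    rw [h1, ← hcBb, show b = (b-1) + 1 by omega]
    have := hcB (b-1) (by omega)
    rw [show b - 1 + 1 - 1 = b - 1 by omega]
    exact this

end BlkLemmas

theorem entropy_pos_of_transitive_shadowing
    {X : Type*} [MetricSpace X] [CompactSpace X] [Nontrivial X]
    (f : X → X) (hf : Continuous f)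
    (hper : ∃ x : X, ∃ p : ℕ, 0 < p ∧ f^[p] x = x)
    (htrans : TopTransitive f) (hshadow : Shadowing f)
    (hnper : ¬ PeriodicSet f (Set.univ : Set X)) :
    0 < Dynamics.coverEntropy f (Set.univ : Set X) := by
  classical
  obtain ⟨x, p, hp, hx⟩ := hper
  set O : Set X := Set.range (fun i : ℕ => f^[i] x) with hO
  have hOx : x ∈ O := ⟨0, rfl⟩
  have hOfin : O.Finite := by
    have hsub : O ⊆ (fun i : ℕ => f^[i] x) '' (Set.Iio p) := by
      rintro y ⟨i, rfl⟩
      refine ⟨i % p, Nat.mod_lt _ hp, ?_⟩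
      show f^[i % p] x = f^[i] x
      conv_rhs => rw [← Nat.mod_add_div i p]
      rw [Function.iterate_add_apply]
      congr 1
      rw [mul_comm]
      exact (iterate_mul_period hx (i / p)).symm
    exact ((Set.finite_Iio p).image _).subset hsub
  have hzex : ∃ z, z ∉ O := by
    by_contra h
    push_neg at h
    exact hnper ⟨x, ⟨p, hp, hx⟩, (Set.eq_univ_of_forall h).symm⟩
  obtain ⟨z, hz⟩ := hzex
  have hd : 0 < Metric.infDist z O := (hOfin.isClosed.notMem_iff_infDist_pos ⟨x, hOx⟩).1 hz
  set ε := Metric.infDist z O / 7 with hεdef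
  have hε0 : 0 < ε := by positivity
  have hfar : ∀ o ∈ O, 7 * ε ≤ dist z o := by
    intro o ho
    have := Metric.infDist_le_dist_of_mem (x := z) ho
    rw [hεdef]; linarith
  obtain ⟨δ₀, hδ₀, hshad⟩ := hshadow ε hε0
  obtain ⟨a, ha1, cA, hcA0, hcAa, hcA⟩ := chain_exists hf htrans hδ₀ x z
  obtain ⟨b, hb1, cB, hcB0, hcBb, hcB⟩ := chain_exists hf htrans hδ₀ z x
  set L := (a+1)*p + a + b with hLdef
  have hL0 : 0 < L := by positivity
  have haL : a < L := by
    have hpos : 0 < (a+1)*p := by positivity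
    rw [hLdef]; omega
  -- the pseudo-orbits indexed by binary sequences
  set c : (ℕ → Bool) → ℕ → X := fun ω n => Blk f x cA cB p a b (ω (n / L)) (n % L) with hcdef
  have hpseudo : ∀ ω n, dist (c ω (n+1)) (f (c ω n)) < δ₀ := by
    intro ω n
    have hmod : n % L < L := Nat.mod_lt _ hL0
    have hdm : L * (n / L) + n % L = n := Nat.div_add_mod n L
    rcases lt_or_eq_of_le (Nat.succ_le_of_lt hmod) with hlt | heq
    · -- inside a block
      have h1 : n + 1 = L * (n / L) + (n % L + 1) := by omega
      have e1 : (n+1) / L = n / L := by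
        rw [h1, Nat.mul_add_div hL0, Nat.div_eq_of_lt hlt, add_zero]
      have e2 : (n+1) % L = n % L + 1 := by
        rw [h1, Nat.mul_add_mod, Nat.mod_eq_of_lt hlt]
      show dist (Blk f x cA cB p a b (ω ((n+1) / L)) ((n+1) % L))
        (f (Blk f x cA cB p a b (ω (n / L)) (n % L))) < δ₀
      rw [e1, e2]
      exact blk_step hδ₀ hp ha1 hb1 hx hcA0 hcAa hcA hcB0 hcBb hcB _ _ hlt
    · -- seam between blocks
      have h1 : n + 1 = L * (n / L + 1) := by rw [Nat.mul_succ]; omega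
      have e1 : (n+1) / L = n / L + 1 := by rw [h1, Nat.mul_div_cancel_left _ hL0]
      have e2 : (n+1) % L = 0 := by rw [h1, Nat.mul_mod_right]
      have e3 : n % L = L - 1 := by omega
      show dist (Blk f x cA cB p a b (ω ((n+1) / L)) ((n+1) % L))
        (f (Blk f x cA cB p a b (ω (n / L)) (n % L))) < δ₀
      rw [e1, e2, e3, blk_start hδ₀ hp ha1 hb1 hx hcA0 hcAa hcA hcB0 hcBb hcB _]
      exact blk_seam hδ₀ hp ha1 hb1 hx hcA0 hcAa hcA hcB0 hcBb hcB _
  have hy : ∀ ω, ∃ y, ∀ n, dist (f^[n] y) (c ω n) < ε := fun ω => hshad (c ω) (hpseudo ω)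
  choose y hy using hy
  have hidx1 : ∀ i : ℕ, (L * i + a) / L = i := fun i => by
    rw [Nat.mul_add_div hL0, Nat.div_eq_of_lt haL, add_zero]
  have hidx2 : ∀ i : ℕ, (L * i + a) % L = a := fun i => by
    rw [Nat.mul_add_mod, Nat.mod_eq_of_lt haL]
  -- separation at the marked times
  have hsep : ∀ ω ω' : ℕ → Bool, ∀ i, ω i ≠ ω' i →
      4 * ε < dist (f^[L * i + a] (y ω)) (f^[L * i + a] (y ω')) := by
    have key : ∀ ω ω' : ℕ → Bool, ∀ i, ω i = false → ω' i = true →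
        4 * ε < dist (f^[L * i + a] (y ω)) (f^[L * i + a] (y ω')) := by
      intro ω ω' i h0 h1
      have hcz : c ω (L * i + a) = z := by
        show Blk f x cA cB p a b (ω ((L * i + a) / L)) ((L * i + a) % L) = z
        rw [hidx1 i, hidx2 i, h0]
        exact blk_false_a hδ₀ hp ha1 hb1 hx hcA0 hcAa hcA hcB0 hcBb hcB
      have hco : c ω' (L * i + a) = f^[a] x := by
        show Blk f x cA cB p a b (ω' ((L * i + a) / L)) ((L * i + a) % L) = f^[a] x
        rw [hidx1 i, hidx2 i, h1]
        exact blk_true_a hδ₀ hp ha1 hb1 hx hcA0 hcAa hcA hcB0 hcBb hcB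
      have d1 := hy ω (L * i + a)
      rw [hcz] at d1
      have d2 := hy ω' (L * i + a)
      rw [hco] at d2
      have hfzo : 7 * ε ≤ dist z (f^[a] x) := hfar _ ⟨a, rfl⟩
      have tri : dist z (f^[a] x) ≤ dist z (f^[L*i+a] (y ω))
          + dist (f^[L*i+a] (y ω)) (f^[L*i+a] (y ω'))
          + dist (f^[L*i+a] (y ω')) (f^[a] x) := dist_triangle4 _ _ _ _
      have e1 : dist z (f^[L*i+a] (y ω)) < ε := by rw [dist_comm]; exact d1
      linarith
    intro ω ω' i hne
    cases h0 : ω i <;> cases h1 : ω' i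
    · rw [h0, h1] at hne; exact absurd rfl hne
    · exact key ω ω' i h0 h1
    · rw [dist_comm]; exact key ω' ω i h1 h0
    · rw [h0, h1] at hne; exact absurd rfl hne
  -- the entourage
  set U : Set (X × X) := {q | dist q.1 q.2 ≤ 2 * ε} with hUdef
  have hUuni : U ∈ uniformity X :=
    Filter.mem_of_superset (Metric.dist_mem_uniformity (by positivity : (0:ℝ) < 2*ε))
      (fun q hq => le_of_lt (show dist q.1 q.2 < 2*ε from hq))
  apply entropy_pos_of_netMaxcard_growth f hUuni hL0
  intro k
  -- build a (k*L, U)-net of cardinality 2^k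
  set ext : (Fin k → Bool) → (ℕ → Bool) :=
    fun v i => if h : i < k then v ⟨i, h⟩ else false with hext
  set g : (Fin k → Bool) → X := fun v => y (ext v) with hg
  have hextne : ∀ (v v' : Fin k → Bool) (i : Fin k), v i ≠ v' i →
      ext v i.val ≠ ext v' i.val := by
    intro v v' i hi
    simpa [hext, i.isLt] using hi
  have hg_inj : Function.Injective g := by
    intro v v' hgv
    by_contra hne
    obtain ⟨i, hi⟩ := Function.ne_iff.1 hne
    have hs := hsep (ext v) (ext v') i.val (hextne v v' i hi)
    have : y (ext v) = y (ext v') := hgv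
    rw [this, dist_self] at hs
    linarith
  set s : Finset X := Finset.image g Finset.univ with hs
  have hcard : s.card = 2^k := by
    rw [hs, Finset.card_image_of_injective _ hg_inj, Finset.card_univ]
    simp
  have htlt : ∀ i : Fin k, L * i.val + a < k * L := by
    intro i
    calc L * i.val + a < L * i.val + L := by omega
      _ = L * (i.val + 1) := by ring
      _ ≤ L * k := Nat.mul_le_mul_left L i.isLt
      _ = k * L := mul_comm _ _
  have hnet : Dynamics.IsDynNetIn f Set.univ U (k * L) ↑s := by
    refine ⟨Set.subset_univ _, ?_⟩
    intro w1 h1 w2 h2 hne12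
    simp only [hs, Finset.coe_image, Finset.coe_univ, Set.image_univ, Set.mem_range] at h1 h2
    obtain ⟨v1, rfl⟩ := h1
    obtain ⟨v2, rfl⟩ := h2
    have hvne : v1 ≠ v2 := fun h => hne12 (by rw [h])
    obtain ⟨i, hi⟩ := Function.ne_iff.1 hvne
    have hs' := hsep (ext v1) (ext v2) i.val (hextne v1 v2 i hi)
    simp only [Function.onFun]
    rw [Set.disjoint_left]
    intro w hw1 hw2
    have d1 := (Dynamics.mem_dynEntourage.1 hw1) (L * i.val + a) (htlt i)
    have d2 := (Dynamics.mem_dynEntourage.1 hw2) (L * i.val + a) (htlt i)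
    rw [hUdef] at d1 d2
    simp only [Set.mem_setOf_eq] at d1 d2
    have tri : dist (f^[L*i.val+a] (g v1)) (f^[L*i.val+a] (g v2))
        ≤ dist (f^[L*i.val+a] (g v1)) (f^[L*i.val+a] w)
          + dist (f^[L*i.val+a] w) (f^[L*i.val+a] (g v2)) := dist_triangle _ _ _
    rw [dist_comm (f^[L*i.val+a] w)] at tri
    have : dist (f^[L*i.val+a] (g v1)) (f^[L*i.val+a] (g v2)) ≤ 4 * ε := by linarith
    have hgv : 4 * ε < dist (f^[L*i.val+a] (g v1)) (f^[L*i.val+a] (g v2)) := hs'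
    linarith
  have hle := hnet.card_le_netMaxcard
  rw [hcard] at hle
  exact_mod_cast hle
end

section
/- Suppose a dynamical system (X,f) has the specification property. Then the set of almost periodic points of f is dense in X. -/
open Filter Topology MeasureTheory
open scoped ENNReal NNReal

section Spec

variable {X : Type*} [MetricSpace X]

/-- The specification property (without the periodicity condition). -/
def Specification (f : X → X) : Prop :=
  ∀ ε > (0:ℝ), ∃ K : ℕ, ∀ s : ℕ, 2 ≤ s → ∀ y : Fin s → X, ∀ a b : Fin s → ℕ,
    (∀ h : 0 < s, a ⟨0, h⟩ = 0) → (∀ m, a m ≤ b m) →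
    (∀ m : Fin s, ∀ h : m.val + 1 < s, b m + K ≤ a ⟨m.val + 1, h⟩) →
    ∃ x : X, ∀ m : Fin s, ∀ i : ℕ, a m ≤ i → i ≤ b m →
      dist (f^[i] x) (f^[i - a m] (y m)) < ε

end Spec

section AlmostPeriodic

variable {X : Type*} [MetricSpace X]

/-- An almost periodic point. -/
def AlmostPeriodicPt (f : X → X) (x : X) : Prop :=
  ∀ U : Set X, IsOpen U → x ∈ U →
    ∃ N : ℕ, ∀ n : ℕ, ∃ k : ℕ, n ≤ k ∧ k ≤ n + N ∧ f^[k] x ∈ U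

end AlmostPeriodic

section Aux

variable {X : Type*} [MetricSpace X]

lemma iterate_mem_invariant {f : X → X} {M : Set X} (hinv : f '' M ⊆ M) {w : X}
    (hw : w ∈ M) : ∀ n : ℕ, f^[n] w ∈ M := by
  intro n
  induction n with
  | zero => simpa using hw
  | succ n ih =>
      rw [Function.iterate_succ_apply']
      exact hinv ⟨f^[n] w, ih, rfl⟩

/-- Every point of a minimal (nonempty closed invariant) set is almost periodic. -/
lemma almostPeriodicPt_of_minimal [CompactSpace X] (f : X → X) (hf : Continuous f)
    (M : Set X) (hcl : IsClosed M) (hinv : f '' M ⊆ M)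
    (hmin : ∀ A : Set X, A.Nonempty → IsClosed A → f '' A ⊆ A → A ⊆ M → A = M)
    {w : X} (hw : w ∈ M) : AlmostPeriodicPt f w := by
  intro U hU hwU
  -- the set of points of M that never enter U must be empty
  have hAempty : ∀ p ∈ M, ∃ k : ℕ, f^[k] p ∈ U := by
    by_contra h
    push_neg at h
    obtain ⟨p, hpM, hp⟩ := h
    set A : Set X := M ∩ ⋂ k : ℕ, (f^[k] ⁻¹' U)ᶜ with hA
    have hAne : A.Nonempty := ⟨p, hpM, by simpa using hp⟩
    have hAcl : IsClosed A :=
      hcl.inter (isClosed_iInter fun k => (hU.preimage (hf.iterate k)).isClosed_compl)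
    have hAinv : f '' A ⊆ A := by
      rintro _ ⟨q, ⟨hqM, hq⟩, rfl⟩
      refine ⟨hinv ⟨q, hqM, rfl⟩, ?_⟩
      simp only [Set.mem_iInter, Set.mem_compl_iff, Set.mem_preimage] at hq ⊢
      intro k
      rw [← Function.iterate_succ_apply]
      exact hq (k + 1)
    have := hmin A hAne hAcl hAinv Set.inter_subset_left
    have hwA : w ∈ A := this ▸ hw
    have := hwA.2
    simp only [Set.mem_iInter, Set.mem_compl_iff, Set.mem_preimage] at this
    exact this 0 (by simpa using hwU)
  -- finite subcover
  have hMc : IsCompact M := hcl.isCompact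
  have hcover : M ⊆ ⋃ k : ℕ, f^[k] ⁻¹' U := by
    intro p hp
    obtain ⟨k, hk⟩ := hAempty p hp
    exact Set.mem_iUnion.2 ⟨k, hk⟩
  obtain ⟨t, ht⟩ := hMc.elim_finite_subcover (fun k : ℕ => f^[k] ⁻¹' U)
    (fun k => hU.preimage (hf.iterate k)) hcover
  classical
  refine ⟨t.sup id, fun n => ?_⟩
  have hn : f^[n] w ∈ M := iterate_mem_invariant hinv hw n
  obtain ⟨k, hkt, hk⟩ := Set.mem_iUnion₂.1 (ht hn)
  refine ⟨n + k, Nat.le_add_right _ _, Nat.add_le_add_left (Finset.le_sup (f := id) hkt) n, ?_⟩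
  rw [add_comm, Function.iterate_add_apply]
  exact hk

/-- Every nonempty closed invariant set contains a minimal one. -/
lemma exists_minimal_invariant [CompactSpace X] (f : X → X) (hf : Continuous f)
    (C : Set X) (hne : C.Nonempty) (hcl : IsClosed C) (hinv : f '' C ⊆ C) :
    ∃ M : Set X, M ⊆ C ∧ M.Nonempty ∧ IsClosed M ∧ f '' M ⊆ M ∧
      ∀ A : Set X, A.Nonempty → IsClosed A → f '' A ⊆ A → A ⊆ M → A = M := by
  set S : Set (Set X) := {A | A.Nonempty ∧ IsClosed A ∧ f '' A ⊆ A ∧ A ⊆ C} with hS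
  have H : ∀ c ⊆ S, IsChain (· ⊆ ·) c → c.Nonempty → ∃ lb ∈ S, ∀ s ∈ c, lb ⊆ s := by
    intro c hcS hchain hcne
    refine ⟨⋂₀ c, ⟨?_, ?_, ?_, ?_⟩, fun s hs => Set.sInter_subset_of_mem hs⟩
    · haveI : Nonempty c := hcne.to_subtype
      refine IsCompact.nonempty_sInter_of_directed_nonempty_isCompact_isClosed ?_
        (fun A hA => (hcS hA).1) (fun A hA => (hcS hA).2.1.isCompact)
        (fun A hA => (hcS hA).2.1)
      intro A hA B hB
      rcases hchain.total hA hB with h | h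
      · exact ⟨A, hA, Set.Subset.rfl, h⟩
      · exact ⟨B, hB, h, Set.Subset.rfl⟩
    · exact isClosed_sInter fun A hA => (hcS hA).2.1
    · intro x hx
      rcases hx with ⟨q, hq, rfl⟩
      refine Set.mem_sInter.2 fun A hA => ?_
      exact (hcS hA).2.2.1 ⟨q, Set.mem_sInter.1 hq A hA, rfl⟩
    · obtain ⟨A, hA⟩ := hcne
      exact (Set.sInter_subset_of_mem hA).trans (hcS hA).2.2.2
  obtain ⟨M, -, hMS, hMmin⟩ := zorn_superset_nonempty S H C ⟨hne, hcl, hinv, Set.Subset.rfl⟩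
  refine ⟨M, hMS.2.2.2, hMS.1, hMS.2.1, hMS.2.2.1, fun A hAne hAcl hAinv hAM => ?_⟩
  exact Set.Subset.antisymm hAM (hMmin ⟨hAne, hAcl, hAinv, hAM.trans hMS.2.2.2⟩ hAM)

end Aux

theorem dense_almostPeriodic_of_specification
    {X : Type*} [MetricSpace X] [CompactSpace X] [Nontrivial X]
    (f : X → X) (hf : Continuous f) (hspec : Specification f) :
    Dense {x : X | AlmostPeriodicPt f x} := by
  rw [Metric.dense_iff]
  intro y ε hε
  set δ : ℝ := ε / 2 with hδ
  have hδpos : 0 < δ := by positivity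
  obtain ⟨K, hK⟩ := hspec δ hδpos
  set P : ℕ := K + 1 with hP
  -- Step 1: a point z visiting closedBall y δ at all multiples of P.
  have hz : ∃ z : X, ∀ j : ℕ, dist (f^[j * P] z) y ≤ δ := by
    -- for every s, a point shadowing y at times 0, P, 2P, ..., (s+1)P
    have hzs : ∀ s : ℕ, ∃ z : X, ∀ j : ℕ, j < s + 2 → dist (f^[j * P] z) y < δ := by
      intro s
      obtain ⟨x, hx⟩ := hK (s + 2) (by omega) (fun _ => y) (fun m => m.val * P)
        (fun m => m.val * P) (fun h => by simp) (fun m => le_rfl)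
        (fun m h => by
          show m.val * P + K ≤ (m.val + 1) * P
          rw [Nat.succ_mul]
          exact Nat.add_le_add_left (Nat.le_succ K) _)
      refine ⟨x, fun j hj => ?_⟩
      have := hx ⟨j, hj⟩ (j * P) le_rfl le_rfl
      simpa using this
    choose u hu using hzs
    obtain ⟨z, φ, hφ, hlim⟩ := CompactSpace.tendsto_subseq u
    refine ⟨z, fun j => ?_⟩
    have hcont : Continuous (f^[j * P]) := hf.iterate _
    have hlim' : Tendsto (fun i => f^[j * P] (u (φ i))) atTop (𝓝 (f^[j * P] z)) :=
      (hcont.tendsto z).comp hlim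
    have hev : ∀ᶠ i in atTop, dist (f^[j * P] (u (φ i))) y ≤ δ := by
      filter_upwards [eventually_ge_atTop j] with i hi
      have h2 : i ≤ φ i := hφ.le_apply
      exact le_of_lt (hu (φ i) j (by omega))
    exact le_of_tendsto ((hlim'.dist tendsto_const_nhds)) hev
  obtain ⟨z, hz⟩ := hz
  -- Step 2: orbit closure of z, and a minimal subset
  set C : Set X := closure {p | ∃ n : ℕ, f^[n] z = p} with hC
  have hCne : C.Nonempty := ⟨z, subset_closure ⟨0, rfl⟩⟩
  have hCcl : IsClosed C := isClosed_closure
  have hCinv : f '' C ⊆ C := by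
    intro x hx
    rcases hx with ⟨q, hq, rfl⟩
    have : f '' C ⊆ closure (f '' {p | ∃ n : ℕ, f^[n] z = p}) :=
      (image_closure_subset_closure_image hf)
    refine closure_mono ?_ (this ⟨q, hq, rfl⟩)
    rintro _ ⟨p, ⟨n, rfl⟩, rfl⟩
    exact ⟨n + 1, by rw [Function.iterate_succ_apply']⟩
  -- every point of C has an iterate (within P steps) in the closed ball
  have hCV : ∀ p ∈ C, ∃ j : ℕ, j < P ∧ f^[j] p ∈ Metric.closedBall y δ := by
    have hVcl : IsClosed (⋃ j ∈ Finset.range P, f^[j] ⁻¹' Metric.closedBall y δ) := by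
      apply Set.Finite.isClosed_biUnion (Finset.finite_toSet _)
      intro j _
      exact Metric.isClosed_closedBall.preimage (hf.iterate j)
    intro p hp
    have hsub : {p | ∃ n : ℕ, f^[n] z = p} ⊆
        ⋃ j ∈ Finset.range P, f^[j] ⁻¹' Metric.closedBall y δ := by
      rintro _ ⟨n, rfl⟩
      have hPpos : 0 < P := Nat.succ_pos K
      obtain ⟨q, r, hrP, hn⟩ : ∃ q r : ℕ, r < P ∧ n = P * q + r :=
        ⟨n / P, n % P, Nat.mod_lt _ hPpos, (Nat.div_add_mod n P).symm⟩
      by_cases hr : r = 0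
      · refine Set.mem_biUnion (Finset.mem_range.2 hPpos) ?_
        simp only [Set.mem_preimage, Function.iterate_zero_apply]
        have hn' : n = q * P := by rw [hn, hr, Nat.add_zero, Nat.mul_comm]
        rw [hn']
        exact Metric.mem_closedBall.2 (hz q)
      · refine Set.mem_biUnion (Finset.mem_range.2 (show P - r < P by omega)) ?_
        simp only [Set.mem_preimage, ← Function.iterate_add_apply]
        have h1 : P - r + n = (q + 1) * P := by
          have h2 : (q + 1) * P = P * q + P := by ring
          set t := P * q with ht
          omega
        rw [h1]
        exact Metric.mem_closedBall.2 (hz (q + 1))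
    have := closure_minimal hsub hVcl hp
    obtain ⟨j, hjr, hjp⟩ := Set.mem_iUnion₂.1 this
    exact ⟨j, Finset.mem_range.1 hjr, hjp⟩
  obtain ⟨M, hMC, hMne, hMcl, hMinv, hMmin⟩ :=
    exists_minimal_invariant f hf C hCne hCcl hCinv
  obtain ⟨w, hwM⟩ := hMne
  obtain ⟨j, hjP, hjball⟩ := hCV w (hMC hwM)
  refine ⟨f^[j] w, Set.mem_inter ?_ ?_⟩
  · have : dist (f^[j] w) y ≤ δ := Metric.mem_closedBall.1 hjball
    exact Metric.mem_ball.2 (lt_of_le_of_lt this (by rw [hδ]; linarith))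
  · exact almostPeriodicPt_of_minimal f hf M hMcl hMinv hMmin
      (iterate_mem_invariant hMinv hwM j)
end

section
/- Suppose (X,f) is a dynamical system admitting a nondecreasing sequence of f-invariant compact subsets X_n ⊆ X (n ∈ ℕ+) with closure(∪_{n≥1} X_n) = X, such that every subsystem (X_n, f|_{X_n}) has the shadowing property and is transitive, and f|_{X_1} has a periodic point. Then there exists ν ∈ M_f(X) with full support, i.e. S_ν = X. Moreover, the set of fully supported measures is dense in the weak*-closure of {μ ∈ M_f(X) : μ(∪_{n≥1} X_n) = 1}. -/
open Filter Topology MeasureTheory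
open scoped ENNReal NNReal

section TransOn

variable {X : Type*} [MetricSpace X]

/-- Transitivity of the subsystem `(A, f|_A)` (open sets of `A` are traces of open
sets of `X`). -/
def TransitiveOn (f : X → X) (A : Set X) : Prop :=
  ∀ U V : Set X, IsOpen U → IsOpen V → (U ∩ A).Nonempty → (V ∩ A).Nonempty →
    ∃ n : ℕ, 1 ≤ n ∧ (U ∩ A ∩ f^[n] ⁻¹' V).Nonempty

end TransOn

section ShadowOn

variable {X : Type*} [MetricSpace X]

/-- The shadowing property of the subsystem `(A, f|_A)`. -/
def ShadowingOn (f : X → X) (A : Set X) : Prop :=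
  ∀ ε > (0:ℝ), ∃ δ > (0:ℝ), ∀ x : ℕ → X, (∀ n, x n ∈ A) →
    (∀ n, dist (x (n + 1)) (f (x n)) < δ) →
    ∃ y ∈ A, ∀ n, dist (f^[n] y) (x n) < ε

end ShadowOn


section AuxDev

open Metric

section DynAux
variable {X : Type*} [MetricSpace X]

/-- Core dynamical lemma: there is a point whose orbit visits a small ball
around `x` with period `p`. -/
lemma exists_periodic_visits (f : X → X) {A : Set X} (hinv : Set.MapsTo f A A)
    (hsh : ShadowingOn f A) (htr : TransitiveOn f A) {x : X} (hx : x ∈ A)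
    {ε : ℝ} (hε : 0 < ε) :
    ∃ y ∈ A, ∃ p : ℕ, 1 ≤ p ∧ ∀ i : ℕ, f^[i * p] y ∈ closedBall x (2 * ε) := by
  obtain ⟨δ, hδ, hδsh⟩ := hsh ε hε
  set δ' := min δ ε with hδ'def
  have hδ' : 0 < δ' := lt_min hδ hε
  -- transitivity with U = V = ball x (δ'/2)
  obtain ⟨p, hp1, z, hz⟩ := htr (ball x (δ'/2)) (ball x (δ'/2)) isOpen_ball isOpen_ball
    ⟨x, mem_ball_self (by positivity), hx⟩ ⟨x, mem_ball_self (by positivity), hx⟩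
  obtain ⟨⟨hzball, hzA⟩, hzp⟩ := hz
  -- pseudo-orbit
  set w : ℕ → X := fun n => f^[n % p] z with hw
  have hwA : ∀ n, w n ∈ A := fun n => Set.MapsTo.iterate hinv (n % p) hzA
  have hwd : ∀ n, dist (w (n + 1)) (f (w n)) < δ := by
    intro n
    have h1 : f (w n) = f^[n % p + 1] z := by
      simp only [hw, Function.iterate_succ_apply']
    rcases lt_or_ge (n % p + 1) p with h | h
    · have hdm := Nat.div_add_mod n p
      have h2 : (n + 1) % p = n % p + 1 := by
        have e : n + 1 = (n % p + 1) + p * (n / p) := by omega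
        rw [e, Nat.add_mul_mod_self_left, Nat.mod_eq_of_lt h]
      have : w (n + 1) = f (w n) := by rw [h1]; simp only [hw, h2]
      rw [this, dist_self]; exact hδ
    · -- n % p = p - 1, so (n+1) % p = 0 and f (w n) = f^[p] z
      have hlt : n % p < p := Nat.mod_lt _ (by omega)
      have hnp : n % p + 1 = p := by omega
      have hdm := Nat.div_add_mod n p
      have h2 : (n + 1) % p = 0 := by
        have e2 : p * (n / p + 1) = p * (n / p) + p := by ring
        have e : n + 1 = p * (n / p + 1) := by omega
        rw [e, Nat.mul_mod_right]
      have : w (n + 1) = z := by simp only [hw, h2, Function.iterate_zero_apply]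
      rw [this, h1, hnp]
      have d1 : dist z x < δ' / 2 := mem_ball.mp hzball
      have d2 : dist (f^[p] z) x < δ' / 2 := mem_ball.mp hzp
      calc dist z (f^[p] z) ≤ dist z x + dist (f^[p] z) x := dist_triangle_right _ _ _
        _ < δ' / 2 + δ' / 2 := by linarith
        _ = δ' := by ring
        _ ≤ δ := min_le_left _ _
  obtain ⟨y, hyA, hy⟩ := hδsh w hwA hwd
  refine ⟨y, hyA, p, hp1, fun i => ?_⟩
  have h0 : (i * p) % p = 0 := Nat.mul_mod_left i p
  have hwip : w (i * p) = z := by simp only [hw, h0, Function.iterate_zero_apply]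
  have := hy (i * p)
  rw [hwip] at this
  have d1 : dist z x < δ' / 2 := mem_ball.mp hzball
  have hδε : δ' ≤ ε := min_le_right _ _
  have : dist (f^[i * p] y) x ≤ dist (f^[i * p] y) z + dist z x := dist_triangle _ _ _
  rw [mem_closedBall]
  have hy' := hy (i * p); rw [hwip] at hy'
  nlinarith [hy', d1, this, hδ'.le, hδε]



end DynAux

lemma geom_aux : ∀ M : ℕ, (∑ k ∈ Finset.range M, (2⁻¹:ℝ≥0∞)^(k+1)) + (2⁻¹)^M = 1 := by
  intro M; induction M with
  | zero => simp
  | succ M ih =>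
    rw [Finset.sum_range_succ, add_assoc]
    have h2 : (2⁻¹:ℝ≥0∞)^(M+1) + (2⁻¹)^(M+1) = (2⁻¹)^M := by
      rw [pow_succ, ← mul_add]
      have : (2⁻¹:ℝ≥0∞) + 2⁻¹ = 1 := by
        rw [← two_mul, ENNReal.mul_inv_cancel] <;> norm_num
      rw [this, mul_one]
    rw [h2, ih]

lemma enn_eq_of_le_of_le {a b c d : ℝ≥0∞} (hac : a ≤ c) (hbd : b ≤ d)
    (h : a + b = c + d) (hfin : c + d ≠ ∞) : a = c := by
  have hd : d ≠ ∞ := by intro h'; exact hfin (by simp [h'])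
  have h1 : c + d ≤ a + d := by
    rw [← h]; exact add_le_add_right hbd a
  exact le_antisymm hac (by
    have := (ENNReal.add_le_add_iff_right hd).mp h1
    exact this)

lemma count_mult {p M : ℕ} (hp : 1 ≤ p) (hM : 1 ≤ M) :
    M ≤ ((Finset.range M).filter (fun i => p ∣ i)).card * p := by
  have hcard : (M - 1) / p + 1 ≤ ((Finset.range M).filter (fun i => p ∣ i)).card := by
    have : (Finset.range ((M - 1) / p + 1)).card ≤
        ((Finset.range M).filter (fun i => p ∣ i)).card := by
      apply Finset.card_le_card_of_injOn (fun j => j * p)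
      · intro j hj
        simp only [Finset.mem_coe, Finset.mem_range] at hj
        simp only [Finset.mem_coe, Finset.mem_filter, Finset.mem_range]
        constructor
        · have : j * p ≤ ((M - 1) / p) * p := Nat.mul_le_mul_right _ (by omega)
          have h2 : ((M - 1) / p) * p ≤ M - 1 := Nat.div_mul_le_self _ _
          omega
        · exact ⟨j, (mul_comm j p)⟩
      · intro a _ b _ hab
        exact Nat.eq_of_mul_eq_mul_right (by omega) hab
    simpa using this
  have hlt : M - 1 < ((M - 1) / p + 1) * p := by
    have h := (Nat.div_lt_iff_lt_mul (by omega : 0 < p)).mp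
      (Nat.lt_succ_self ((M - 1) / p))
    calc M - 1 < ((M - 1) / p).succ * p := h
      _ = ((M - 1) / p + 1) * p := rfl
  calc M ≤ ((M - 1) / p + 1) * p := by omega
    _ ≤ _ := Nat.mul_le_mul_right _ hcard

section MeasAux
variable {X : Type*} [MetricSpace X] [CompactSpace X] [MeasurableSpace X] [BorelSpace X]

lemma exists_inv_measure (f : X → X) (hf : Continuous f) (y : ℕ → X) (p : ℕ → ℕ)
    (hp : ∀ k, 1 ≤ p k) (C : ℕ → Set X) (hC : ∀ k, IsClosed (C k))
    (hvisit : ∀ k i, f^[i * p k] (y k) ∈ C k) :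
    ∃ μ : Measure X, IsProbabilityMeasure μ ∧ μ.map f = μ ∧ ∀ k, 0 < μ (C k) := by
  classical
  -- empirical measures
  set E : ℕ → ℕ → Measure X := fun N k =>
    ((N + 1 : ℕ) : ℝ≥0∞)⁻¹ • ∑ i ∈ Finset.range (N + 1), Measure.dirac (f^[i] (y k)) with hE
  have hEapp : ∀ N k (S : Set X),
      E N k S = ((N + 1 : ℕ) : ℝ≥0∞)⁻¹ * ∑ i ∈ Finset.range (N + 1),
        Measure.dirac (f^[i] (y k)) S := by
    intro N k S
    rw [hE]
    simp [Measure.smul_apply, Measure.finset_sum_apply, smul_eq_mul]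
  have hM0 : ∀ N : ℕ, ((N + 1 : ℕ) : ℝ≥0∞) ≠ 0 := by intro N; simp
  have hMt : ∀ N : ℕ, ((N + 1 : ℕ) : ℝ≥0∞) ≠ ∞ := by intro N; simp
  have hEuniv : ∀ N k, E N k Set.univ = 1 := by
    intro N k
    rw [hEapp]
    simp only [Measure.dirac_apply_of_mem (Set.mem_univ _), Finset.sum_const,
      Finset.card_range, nsmul_eq_mul, mul_one]
    exact ENNReal.inv_mul_cancel (hM0 N) (hMt N)
  have hEC : ∀ N k, ((p k : ℕ) : ℝ≥0∞)⁻¹ ≤ E N k (C k) := by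
    intro N k
    set c := ((Finset.range (N + 1)).filter (fun i => p k ∣ i)).card with hc
    have hcount : (N + 1 : ℕ) ≤ c * p k := count_mult (hp k) (Nat.succ_le_succ (Nat.zero_le N))
    have hsum : (c : ℝ≥0∞) ≤ ∑ i ∈ Finset.range (N + 1), Measure.dirac (f^[i] (y k)) (C k) := by
      calc (c : ℝ≥0∞) = ∑ _i ∈ (Finset.range (N + 1)).filter (fun i => p k ∣ i), 1 := by
            simp [hc]
        _ = ∑ i ∈ (Finset.range (N + 1)).filter (fun i => p k ∣ i),
              Measure.dirac (f^[i] (y k)) (C k) := by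
            apply Finset.sum_congr rfl
            intro i hi
            simp only [Finset.mem_filter] at hi
            obtain ⟨j, hj⟩ := hi.2
            rw [Measure.dirac_apply_of_mem]
            have := hvisit k j
            rwa [← mul_comm (p k) j, ← hj] at this
        _ ≤ _ := Finset.sum_le_sum_of_subset (Finset.filter_subset _ _)
    rw [hEapp]
    have hpk0 : ((p k : ℕ) : ℝ≥0∞) ≠ 0 := by
      have : p k ≠ 0 := Nat.one_le_iff_ne_zero.mp (hp k)
      simpa using this
    have hpkt : ((p k : ℕ) : ℝ≥0∞) ≠ ∞ := by simp
    have hle : ((N + 1 : ℕ) : ℝ≥0∞) ≤ (c : ℝ≥0∞) * (p k : ℕ) := by exact_mod_cast hcount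
    calc ((p k : ℕ) : ℝ≥0∞)⁻¹
        = ((N + 1 : ℕ) : ℝ≥0∞)⁻¹ * (((N + 1 : ℕ) : ℝ≥0∞) * ((p k : ℕ) : ℝ≥0∞)⁻¹) := by
          rw [← mul_assoc, ENNReal.inv_mul_cancel (hM0 N) (hMt N), one_mul]
      _ ≤ ((N + 1 : ℕ) : ℝ≥0∞)⁻¹ * ((c : ℝ≥0∞) * ((p k : ℕ)) * ((p k : ℕ) : ℝ≥0∞)⁻¹) := by
          gcongr
      _ = ((N + 1 : ℕ) : ℝ≥0∞)⁻¹ * (c : ℝ≥0∞) := by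
          rw [mul_assoc, ENNReal.mul_inv_cancel hpk0 hpkt, mul_one]
      _ ≤ _ := by gcongr
  have hEinv : ∀ N k (S : Set X), MeasurableSet S →
      E N k S ≤ E N k (f ⁻¹' S) + ((N + 1 : ℕ) : ℝ≥0∞)⁻¹ := by
    intro N k S hS
    set g : ℕ → ℝ≥0∞ := fun i => Measure.dirac (f^[i] (y k)) S with hg
    have hkey : ∀ i, Measure.dirac (f^[i] (y k)) (f ⁻¹' S) = g (i + 1) := by
      intro i
      rw [hg]
      show _ = Measure.dirac (f^[i+1] (y k)) S
      rw [Measure.dirac_apply' _ (hS.preimage hf.measurable), Measure.dirac_apply' _ hS]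
      simp only [Set.indicator_apply, Set.mem_preimage, Function.iterate_succ_apply',
        Pi.one_apply]
    have hg1 : ∀ i, g i ≤ 1 := by
      intro i
      rw [hg]
      calc Measure.dirac (f^[i] (y k)) S ≤ Measure.dirac (f^[i] (y k)) Set.univ :=
            measure_mono (Set.subset_univ _)
        _ = 1 := by simp
    have hsum : ∑ i ∈ Finset.range (N + 1), g i
        ≤ (∑ i ∈ Finset.range (N + 1), g (i + 1)) + 1 := by
      rw [Finset.sum_range_succ' g N]
      have h1 : ∑ i ∈ Finset.range N, g (i + 1) ≤ ∑ i ∈ Finset.range (N + 1), g (i + 1) :=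
        Finset.sum_le_sum_of_subset (Finset.range_subset_range.mpr (Nat.le_succ N))
      exact add_le_add h1 (hg1 0)
    rw [hEapp, hEapp]
    have : ∑ i ∈ Finset.range (N + 1), Measure.dirac (f^[i] (y k)) (f ⁻¹' S)
        = ∑ i ∈ Finset.range (N + 1), g (i + 1) := by
      apply Finset.sum_congr rfl; intro i _; exact hkey i
    rw [this]
    calc ((N + 1 : ℕ) : ℝ≥0∞)⁻¹ * ∑ i ∈ Finset.range (N + 1), g i
        ≤ ((N + 1 : ℕ) : ℝ≥0∞)⁻¹ * ((∑ i ∈ Finset.range (N + 1), g (i + 1)) + 1) := by gcongr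
      _ = ((N + 1 : ℕ) : ℝ≥0∞)⁻¹ * (∑ i ∈ Finset.range (N + 1), g (i + 1))
            + ((N + 1 : ℕ) : ℝ≥0∞)⁻¹ := by rw [mul_add, mul_one]
  -- the combined measures
  set ν : ℕ → Measure X := fun N =>
    (2⁻¹:ℝ≥0∞)^(N+1) • E N 0 + ∑ k ∈ Finset.range (N+1), (2⁻¹:ℝ≥0∞)^(k+1) • E N k with hν
  have hνapp : ∀ N (S : Set X), ν N S = (2⁻¹:ℝ≥0∞)^(N+1) * E N 0 S
      + ∑ k ∈ Finset.range (N+1), (2⁻¹:ℝ≥0∞)^(k+1) * E N k S := by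
    intro N S
    rw [hν]
    simp [Measure.add_apply, Measure.smul_apply, Measure.finset_sum_apply, smul_eq_mul]
  have hνuniv : ∀ N, ν N Set.univ = 1 := by
    intro N
    rw [hνapp]
    simp only [hEuniv, mul_one]
    rw [add_comm]
    exact geom_aux (N+1)
  have hνC : ∀ N k, k < N + 1 → (2⁻¹:ℝ≥0∞)^(k+1) * ((p k : ℕ) : ℝ≥0∞)⁻¹ ≤ ν N (C k) := by
    intro N k hk
    rw [hνapp]
    have h1 : (2⁻¹:ℝ≥0∞)^(k+1) * ((p k : ℕ) : ℝ≥0∞)⁻¹ ≤ (2⁻¹:ℝ≥0∞)^(k+1) * E N k (C k) := by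
      gcongr; exact hEC N k
    calc (2⁻¹:ℝ≥0∞)^(k+1) * ((p k : ℕ) : ℝ≥0∞)⁻¹
        ≤ (2⁻¹:ℝ≥0∞)^(k+1) * E N k (C k) := h1
      _ ≤ ∑ j ∈ Finset.range (N+1), (2⁻¹:ℝ≥0∞)^(j+1) * E N j (C k) :=
          Finset.single_le_sum (f := fun j => (2⁻¹:ℝ≥0∞)^(j+1) * E N j (C k))
            (fun i _ => zero_le) (Finset.mem_range.mpr hk)
      _ ≤ _ := le_add_self
  have hνinv : ∀ N (S : Set X), MeasurableSet S →
      ν N S ≤ ν N (f ⁻¹' S) + ((N + 1 : ℕ) : ℝ≥0∞)⁻¹ := by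
    intro N S hS
    rw [hνapp, hνapp]
    calc (2⁻¹:ℝ≥0∞)^(N+1) * E N 0 S + ∑ k ∈ Finset.range (N+1), (2⁻¹:ℝ≥0∞)^(k+1) * E N k S
        ≤ (2⁻¹:ℝ≥0∞)^(N+1) * (E N 0 (f ⁻¹' S) + ((N + 1 : ℕ) : ℝ≥0∞)⁻¹)
          + ∑ k ∈ Finset.range (N+1), (2⁻¹:ℝ≥0∞)^(k+1) * (E N k (f ⁻¹' S)
            + ((N + 1 : ℕ) : ℝ≥0∞)⁻¹) := by
          gcongr with k hk
          · exact hEinv N 0 S hS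
          · exact hEinv N k S hS
      _ = ((2⁻¹:ℝ≥0∞)^(N+1) * E N 0 (f ⁻¹' S)
            + ∑ k ∈ Finset.range (N+1), (2⁻¹:ℝ≥0∞)^(k+1) * E N k (f ⁻¹' S))
          + ((2⁻¹:ℝ≥0∞)^(N+1) + ∑ k ∈ Finset.range (N+1), (2⁻¹:ℝ≥0∞)^(k+1))
            * ((N + 1 : ℕ) : ℝ≥0∞)⁻¹ := by
          simp only [mul_add, Finset.sum_add_distrib, add_mul, Finset.sum_mul]
          ring
      _ = _ := by
          rw [add_comm ((2⁻¹:ℝ≥0∞)^(N+1)) _, geom_aux (N+1), one_mul]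
  -- ultrafilter limit
  obtain ⟨𝒰, h𝒰⟩ : ∃ 𝒰 : Ultrafilter ℕ, ↑𝒰 ≤ (atTop : Filter ℕ) :=
    Ultrafilter.exists_le _
  have hlim : ∀ g : ℕ → ℝ≥0∞, ∃ l, Tendsto g 𝒰 (𝓝 l) := by
    intro g
    obtain ⟨l, -, h⟩ := isCompact_univ.ultrafilter_le_nhds (𝒰.map g)
      (by simp [Filter.le_principal_iff])
    exact ⟨l, h⟩
  choose L hL using fun S : Set X => hlim (fun N => ν N S)
  have hinv0 : Tendsto (fun N : ℕ => ((N + 1 : ℕ) : ℝ≥0∞)⁻¹) (↑𝒰) (𝓝 0) := by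
    apply Tendsto.mono_left _ h𝒰
    exact ENNReal.tendsto_inv_nat_nhds_zero.comp (tendsto_add_atTop_nat 1)
  have Lmono : ∀ S T : Set X, S ⊆ T → L S ≤ L T := fun S T h =>
    le_of_tendsto_of_tendsto' (hL S) (hL T) (fun N => measure_mono h)
  have Luniv : L Set.univ = 1 := by
    refine tendsto_nhds_unique (hL _) ?_
    simpa only [hνuniv] using (tendsto_const_nhds : Tendsto (fun _ : ℕ => (1:ℝ≥0∞)) ↑𝒰 _)
  have Lunion : ∀ S T : Set X, Disjoint S T → MeasurableSet T → L (S ∪ T) = L S + L T := by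
    intro S T hd hT
    refine tendsto_nhds_unique (hL _) ?_
    have : (fun N => ν N (S ∪ T)) = fun N => ν N S + ν N T := by
      funext N; exact measure_union hd hT
    rw [this]
    exact (hL S).add (hL T)
  have Lshift : ∀ S T : Set X, MeasurableSet S → f ⁻¹' S ⊆ T → L S ≤ L T := by
    intro S T hS hST
    have h1 : ∀ N, ν N S ≤ ν N T + ((N + 1 : ℕ) : ℝ≥0∞)⁻¹ := fun N =>
      (hνinv N S hS).trans (add_le_add_left (measure_mono hST) _)
    have h2 : Tendsto (fun N => ν N T + ((N + 1 : ℕ) : ℝ≥0∞)⁻¹) ↑𝒰 (𝓝 (L T + 0)) :=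
      (hL T).add hinv0
    rw [add_zero] at h2
    exact le_of_tendsto_of_tendsto' (hL S) h2 h1
  have LC : ∀ k (S : Set X), C k ⊆ S →
      (2⁻¹:ℝ≥0∞)^(k+1) * ((p k : ℕ) : ℝ≥0∞)⁻¹ ≤ L S := by
    intro k S hCS
    refine ge_of_tendsto (hL S) ?_
    have : ∀ᶠ N in (atTop : Filter ℕ), k < N + 1 := by
      filter_upwards [eventually_ge_atTop k] with N hN; omega
    filter_upwards [h𝒰 this] with N hN
    exact (hνC N k hN).trans (measure_mono hCS)
  -- content
  set lam : Set X → ℝ≥0∞ := fun K => ⨅ (U : Set X) (_ : IsOpen U) (_ : K ⊆ U), L U with hlam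
  have lam_le : ∀ (K U : Set X), IsOpen U → K ⊆ U → lam K ≤ L U := by
    intro K U hU hKU
    exact iInf_le_of_le U (iInf_le_of_le hU (iInf_le _ hKU))
  have lam_ge : ∀ (K : Set X) (c : ℝ≥0∞), (∀ U : Set X, IsOpen U → K ⊆ U → c ≤ L U) →
      c ≤ lam K := by
    intro K c h
    exact le_iInf fun U => le_iInf fun hU => le_iInf fun hKU => h U hU hKU
  have lam_le_one : ∀ K : Set X, lam K ≤ 1 := fun K =>
    (lam_le K Set.univ isOpen_univ (Set.subset_univ _)).trans_eq Luniv
  have lam_ne_top : ∀ K : Set X, lam K ≠ ∞ := fun K =>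
    ((lam_le_one K).trans_lt ENNReal.one_lt_top).ne
  have lam_mono : ∀ K₁ K₂ : Set X, K₁ ⊆ K₂ → lam K₁ ≤ lam K₂ := by
    intro K₁ K₂ h
    exact lam_ge _ _ fun U hU hKU => lam_le _ U hU (h.trans hKU)
  have lam_exists : ∀ (K : Set X) (ε : ℝ≥0∞), ε ≠ 0 →
      ∃ U : Set X, IsOpen U ∧ K ⊆ U ∧ L U < lam K + ε := by
    intro K ε hε
    by_contra hcon
    push_neg at hcon
    have : lam K + ε ≤ lam K := lam_ge _ _ fun U hU hKU => hcon U hU hKU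
    exact absurd this (by
      simp only [not_le]
      exact ENNReal.lt_add_right (lam_ne_top K) hε)
  have lam_union_le : ∀ K₁ K₂ : Set X, lam (K₁ ∪ K₂) ≤ lam K₁ + lam K₂ := by
    intro K₁ K₂
    refine ENNReal.le_of_forall_pos_le_add fun ε hε hfin => ?_
    have hε2 : ((ε : ℝ≥0∞) / 2) ≠ 0 := by
      simp only [ne_eq, ENNReal.div_eq_zero_iff]
      push_neg
      exact ⟨by exact_mod_cast hε.ne', by norm_num⟩
    obtain ⟨U₁, hU₁, hKU₁, hLU₁⟩ := lam_exists K₁ (ε/2) hε2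
    obtain ⟨U₂, hU₂, hKU₂, hLU₂⟩ := lam_exists K₂ (ε/2) hε2
    have h1 : lam (K₁ ∪ K₂) ≤ L (U₁ ∪ U₂) :=
      lam_le _ _ (hU₁.union hU₂) (Set.union_subset_union hKU₁ hKU₂)
    have h2 : L (U₁ ∪ U₂) ≤ L U₁ + L U₂ :=
      le_of_tendsto_of_tendsto' (hL _) ((hL U₁).add (hL U₂)) (fun N => measure_union_le _ _)
    calc lam (K₁ ∪ K₂) ≤ L U₁ + L U₂ := h1.trans h2
      _ ≤ (lam K₁ + ε/2) + (lam K₂ + ε/2) := add_le_add hLU₁.le hLU₂.le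
      _ = lam K₁ + lam K₂ + (ε/2 + ε/2) := by ring
      _ = lam K₁ + lam K₂ + ε := by rw [ENNReal.add_halves]
  have lam_disj : ∀ K₁ K₂ : Set X, IsCompact K₁ → IsCompact K₂ → Disjoint K₁ K₂ →
      lam (K₁ ∪ K₂) = lam K₁ + lam K₂ := by
    intro K₁ K₂ hc₁ hc₂ hd
    refine le_antisymm (lam_union_le K₁ K₂) ?_
    obtain ⟨V₁, V₂, hV₁, hV₂, hKV₁, hKV₂, hVd⟩ := SeparatedNhds.of_isCompact_isCompact hc₁ hc₂ hd
    refine lam_ge _ _ fun W hW hKW => ?_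
    have h1 : lam K₁ ≤ L (W ∩ V₁) := lam_le _ _ (hW.inter hV₁)
      (Set.subset_inter (Set.subset_union_left.trans hKW) hKV₁)
    have h2 : lam K₂ ≤ L (W ∩ V₂) := lam_le _ _ (hW.inter hV₂)
      (Set.subset_inter (Set.subset_union_right.trans hKW) hKV₂)
    have hdisj : Disjoint (W ∩ V₁) (W ∩ V₂) :=
      hVd.mono Set.inter_subset_right Set.inter_subset_right
    calc lam K₁ + lam K₂ ≤ L (W ∩ V₁) + L (W ∩ V₂) := add_le_add h1 h2
      _ = L ((W ∩ V₁) ∪ (W ∩ V₂)) := (Lunion _ _ hdisj (hW.inter hV₂).measurableSet).symm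
      _ ≤ L W := Lmono _ _ (by
          intro x hx
          rcases hx with h | h
          exacts [h.1, h.1])
  -- the content and its measure
  set con : Content X :=
    { toFun := fun K => (lam K).toNNReal
      mono' := fun K₁ K₂ h => ENNReal.toNNReal_mono (lam_ne_top _) (lam_mono _ _ h)
      sup_disjoint' := by
        intro K₁ K₂ hd _ _
        have := lam_disj K₁ K₂ K₁.2 K₂.2 hd
        simp only [TopologicalSpace.Compacts.coe_sup]
        rw [← ENNReal.toNNReal_add (lam_ne_top _) (lam_ne_top _), ← this]
      sup_le' := by
        intro K₁ K₂
        simp only [TopologicalSpace.Compacts.coe_sup]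
        rw [← ENNReal.toNNReal_add (lam_ne_top _) (lam_ne_top _)]
        exact ENNReal.toNNReal_mono (by
          exact ENNReal.add_ne_top.mpr ⟨lam_ne_top _, lam_ne_top _⟩)
          (lam_union_le _ _) } with hcon
  have hconK : ∀ K : TopologicalSpace.Compacts X, (con K : ℝ≥0∞) = lam K := by
    intro K
    simp only [hcon, Content.mk_apply]
    exact ENNReal.coe_toNNReal (lam_ne_top _)
  set μ : Measure X := con.measure with hμ
  have hμopen : ∀ U : Set X, (hU : IsOpen U) → μ U = con.innerContent ⟨U, hU⟩ := by
    intro U hU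
    rw [hμ, Content.measure_apply _ hU.measurableSet, con.outerMeasure_of_isOpen U hU]
  have hμinner : ∀ (U : Set X) (hU : IsOpen U) (K : Set X), IsCompact K → K ⊆ U →
      lam K ≤ μ U := by
    intro U hU K hKc hKU
    rw [hμopen U hU]
    have := con.le_innerContent ⟨K, hKc⟩ ⟨U, hU⟩ hKU
    rwa [hconK] at this
  have hμuniv : μ Set.univ = 1 := by
    have lamuniv : lam (Set.univ : Set X) = 1 := by
      refine le_antisymm (lam_le_one _) (lam_ge _ _ fun U hU hKU => ?_)
      rw [Set.univ_subset_iff.mp hKU, Luniv]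
    refine le_antisymm ?_ ?_
    · rw [hμopen Set.univ isOpen_univ]
      refine iSup_le fun K => iSup_le fun _ => ?_
      rw [hconK]
      exact lam_le_one _
    · rw [← lamuniv]
      exact hμinner Set.univ isOpen_univ Set.univ isCompact_univ subset_rfl
  have hμC : ∀ k, 0 < μ (C k) := by
    intro k
    have hk1 : lam (C k) ≤ μ (C k) := by
      rw [hμ, Content.measure_apply _ (hC k).measurableSet]
      have := con.le_outerMeasure_compacts ⟨C k, (hC k).isCompact⟩
      rwa [hconK] at this
    have hk2 : (2⁻¹:ℝ≥0∞)^(k+1) * ((p k : ℕ) : ℝ≥0∞)⁻¹ ≤ lam (C k) :=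
      lam_ge _ _ fun U hU hCU => LC k U hCU
    refine lt_of_lt_of_le ?_ (hk2.trans hk1)
    apply ENNReal.mul_pos
    · exact (pow_ne_zero _ (by norm_num))
    · simp only [ne_eq, ENNReal.inv_eq_zero]
      simp
  have hinvopen : ∀ U : Set X, IsOpen U → μ U ≤ μ (f ⁻¹' U) := by
    intro U hU
    rw [hμopen U hU]
    refine iSup_le fun K => iSup_le fun hKU => ?_
    rw [hconK]
    obtain ⟨V, hV, hKV, hVU⟩ := normal_exists_closure_subset K.2.isClosed hU hKU
    have h1 : lam (K : Set X) ≤ L V := lam_le _ _ hV hKV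
    have h2 : L V ≤ lam (f ⁻¹' closure V) :=
      lam_ge _ _ fun W hW hCW => Lshift V W hV.measurableSet
        ((Set.preimage_mono subset_closure).trans hCW)
    have h3 : lam (f ⁻¹' closure V) ≤ μ (f ⁻¹' U) :=
      hμinner _ (hU.preimage hf) _ ((isClosed_closure.preimage hf).isCompact)
        (Set.preimage_mono hVU)
    exact h1.trans (h2.trans h3)
  haveI hprob : IsProbabilityMeasure μ := ⟨hμuniv⟩
  have hmap : μ.map f = μ := by
    haveI : IsProbabilityMeasure (μ.map f) :=
      Measure.isProbabilityMeasure_map hf.measurable.aemeasurable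
    have step1 : ∀ A : Set X, MeasurableSet A → μ A ≤ (μ.map f) A := by
      intro A hA
      rw [Set.measure_eq_iInf_isOpen A (μ.map f)]
      refine le_iInf fun U => le_iInf fun hAU => le_iInf fun hU => ?_
      rw [Measure.map_apply hf.measurable hU.measurableSet]
      exact (measure_mono hAU).trans (hinvopen U hU)
    refine Measure.ext fun A hA => ?_
    have h1 := step1 A hA
    have h2 := step1 Aᶜ hA.compl
    have e1 : μ A + μ Aᶜ = (μ.map f) A + (μ.map f) Aᶜ := by
      rw [measure_add_measure_compl hA, measure_add_measure_compl hA]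
      simp
    exact (enn_eq_of_le_of_le h1 h2 e1 (by
      rw [measure_add_measure_compl hA]
      simp)).symm
  exact ⟨μ, hprob, hmap, hμC⟩

end MeasAux

end AuxDev

theorem exists_fullSupport_invariant_measure
    {X : Type*} [MetricSpace X] [CompactSpace X] [Nontrivial X]
    [MeasurableSpace X] [BorelSpace X]
    (f : X → X) (hf : Continuous f)
    (Xn : ℕ → Set X) (hmono : Monotone Xn)
    (hcomp : ∀ n, IsCompact (Xn n)) (hinv : ∀ n, Set.MapsTo f (Xn n) (Xn n))
    (hdense : closure (⋃ n, Xn n) = Set.univ)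
    (hshadow : ∀ n, ShadowingOn f (Xn n)) (htrans : ∀ n, TransitiveOn f (Xn n))
    (hper : ∃ x ∈ Xn 0, ∃ p : ℕ, 0 < p ∧ f^[p] x = x) :
    (∃ ν ∈ invMeasures f, measSupport ν.toMeasure = Set.univ) ∧
    closure {μ : ProbabilityMeasure X | μ ∈ invMeasures f ∧ μ.toMeasure (⋃ n, Xn n) = 1} ⊆
      closure {ν : ProbabilityMeasure X |
        ν ∈ invMeasures f ∧ measSupport ν.toMeasure = Set.univ} := by
  classical
  obtain ⟨x₀, hx₀, -⟩ := hper
  have hAsep : TopologicalSpace.IsSeparable (⋃ n, Xn n) :=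
    isCompact_univ.isSeparable.mono (Set.subset_univ _)
  obtain ⟨D, hDA, hDc, hDd⟩ := hAsep.exists_countable_dense_subset
  have hDne : D.Nonempty := by
    rcases D.eq_empty_or_nonempty with h | h
    · exfalso
      have := hDd (Set.mem_iUnion.mpr ⟨0, hx₀⟩)
      simp [h] at this
    · exact h
  obtain ⟨e, he⟩ := Set.Countable.exists_eq_range hDc hDne
  have heA : ∀ j, e j ∈ ⋃ n, Xn n := fun j => hDA (he ▸ Set.mem_range_self j)
  have hedense : closure (Set.range e) = Set.univ := by
    have h1 : (⋃ n, Xn n) ⊆ closure (Set.range e) := he ▸ hDd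
    have h2 := closure_mono h1
    rw [closure_closure] at h2
    exact Set.eq_univ_of_univ_subset (hdense ▸ h2)
  have hstep : ∀ k : ℕ, ∃ y : X, ∃ p : ℕ, 1 ≤ p ∧ ∀ i : ℕ,
      f^[i * p] y ∈ Metric.closedBall (e k.unpair.1) (2 * (1 / (k.unpair.2 + 1 : ℝ))) := by
    intro k
    obtain ⟨n, hn⟩ := Set.mem_iUnion.mp (heA k.unpair.1)
    obtain ⟨y, -, pp, hp1, hvis⟩ := exists_periodic_visits f (hinv n) (hshadow n) (htrans n) hn
      (ε := 1 / (k.unpair.2 + 1 : ℝ)) (by positivity)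
    exact ⟨y, pp, hp1, hvis⟩
  choose Y P hP1 hPvis using hstep
  obtain ⟨μ, hprob, hmap, hμC⟩ := exists_inv_measure f hf Y P hP1
    (fun k => Metric.closedBall (e k.unpair.1) (2 * (1 / (k.unpair.2 + 1 : ℝ))))
    (fun k => Metric.isClosed_closedBall) (fun k i => hPvis k i)
  have hfull : ∀ U : Set X, IsOpen U → U.Nonempty → 0 < μ U := by
    rintro U hU ⟨z, hz⟩
    obtain ⟨r, hr, hball⟩ := Metric.isOpen_iff.mp hU z hz
    have hz' : z ∈ closure (Set.range e) := by rw [hedense]; trivial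
    obtain ⟨w, hw, hwz⟩ := Metric.mem_closure_iff.mp hz' (r/2) (by positivity)
    obtain ⟨j, rfl⟩ := hw
    obtain ⟨m, hm⟩ := exists_nat_one_div_lt (show (0:ℝ) < r/4 by positivity)
    have hsub : Metric.closedBall (e ((Nat.pair j m).unpair.1))
        (2 * (1 / ((Nat.pair j m).unpair.2 + 1 : ℝ))) ⊆ U := by
      intro w' hw'
      rw [Nat.unpair_pair] at hw'
      apply hball
      rw [Metric.mem_ball]
      have h1 : dist w' (e j) ≤ 2 * (1/(m+1:ℝ)) := Metric.mem_closedBall.mp hw'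
      have h2 : dist w' z ≤ dist w' (e j) + dist z (e j) := by
        rw [dist_comm z (e j)]; exact dist_triangle _ _ _
      have hm' : 1/(m+1:ℝ) < r/4 := hm
      linarith
    exact lt_of_lt_of_le (hμC (Nat.pair j m)) (measure_mono hsub)
  set ν₀ : ProbabilityMeasure X := ⟨μ, hprob⟩ with hν₀
  have hν₀inv : ν₀ ∈ invMeasures f := hmap
  have hν₀supp : measSupport ν₀.toMeasure = Set.univ := by
    rw [Set.eq_univ_iff_forall]
    intro z U hU hzU
    exact hfull U hU ⟨z, hzU⟩
  refine ⟨⟨ν₀, hν₀inv, hν₀supp⟩, ?_⟩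
  have hsub : {μ' : ProbabilityMeasure X | μ' ∈ invMeasures f ∧ μ'.toMeasure (⋃ n, Xn n) = 1}
      ⊆ closure {ν : ProbabilityMeasure X |
        ν ∈ invMeasures f ∧ measSupport ν.toMeasure = Set.univ} := by
    intro ρ hρ
    set t : ℕ → ℝ≥0∞ := fun j => ((j+1 : ℕ) : ℝ≥0∞)⁻¹ with ht
    have ht1 : ∀ j, t j ≤ 1 := by
      intro j
      rw [ht]
      simp only [ENNReal.inv_le_one]
      exact_mod_cast Nat.one_le_iff_ne_zero.mpr (Nat.succ_ne_zero j)
    have ht0 : ∀ j, t j ≠ 0 := by intro j; rw [ht]; simp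
    have htt : ∀ j, t j ≠ ∞ := by
      intro j; rw [ht]; simp [ENNReal.inv_ne_top]
    have h1t : ∀ j, (1 - t j) ≠ ∞ := by
      intro j
      exact ((tsub_le_self).trans_lt ENNReal.one_lt_top).ne
    set σ : ℕ → Measure X := fun j => (1 - t j) • ρ.toMeasure + t j • μ with hσ
    have hσprob : ∀ j, IsProbabilityMeasure (σ j) := by
      intro j
      constructor
      rw [hσ]
      simp only [Measure.add_apply, Measure.smul_apply, smul_eq_mul, measure_univ, mul_one]
      exact tsub_add_cancel_of_le (ht1 j)
    set ρs : ℕ → ProbabilityMeasure X := fun j => ⟨σ j, hσprob j⟩ with hρs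
    have hmem : ∀ j, ρs j ∈ {ν : ProbabilityMeasure X |
        ν ∈ invMeasures f ∧ measSupport ν.toMeasure = Set.univ} := by
      intro j
      constructor
      · show (σ j).map f = σ j
        rw [hσ]
        rw [Measure.map_add _ _ hf.measurable, Measure.map_smul, Measure.map_smul,
          hρ.1, hmap]
      · rw [Set.eq_univ_iff_forall]
        intro z U hU hzU
        show 0 < σ j U
        have hpos : 0 < μ U := hfull U hU ⟨z, hzU⟩
        have : t j * μ U ≤ σ j U := by
          rw [hσ]
          simp only [Measure.add_apply, Measure.smul_apply, smul_eq_mul]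
          exact le_add_self
        refine lt_of_lt_of_le ?_ this
        exact ENNReal.mul_pos (ht0 j) hpos.ne'
    have htend : Tendsto ρs atTop (𝓝 ρ) := by
      rw [ProbabilityMeasure.tendsto_iff_forall_integral_tendsto]
      intro g
      have hint : ∀ j, ∫ x, g x ∂((ρs j) : Measure X)
          = (1 - t j).toReal * ∫ x, g x ∂(ρ : Measure X) + (t j).toReal * ∫ x, g x ∂μ := by
        intro j
        have h1 : Integrable g ((1 - t j) • ρ.toMeasure) :=
          (g.integrable _).smul_measure (h1t j)
        have h2 : Integrable g (t j • μ) := (g.integrable _).smul_measure (htt j)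
        show ∫ x, g x ∂(σ j) = _
        rw [hσ]
        rw [integral_add_measure h1 h2, integral_smul_measure, integral_smul_measure]
        simp [smul_eq_mul]
      simp only [hint]
      have htr : Tendsto (fun j => (t j).toReal) atTop (𝓝 0) := by
        have : ∀ j, (t j).toReal = 1 / ((j:ℝ) + 1) := by
          intro j
          rw [ht]
          simp only [ENNReal.toReal_inv, ENNReal.toReal_natCast]
          push_cast
          ring
        simp only [this]
        exact tendsto_one_div_add_atTop_nhds_zero_nat
      have h1tr : Tendsto (fun j => (1 - t j).toReal) atTop (𝓝 1) := by
        have : ∀ j, (1 - t j).toReal = 1 - (t j).toReal := by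
          intro j
          rw [ENNReal.toReal_sub_of_le (ht1 j) ENNReal.one_ne_top]
          simp
        simp only [this]
        have := htr.const_sub 1
        simpa using this
      have hconv : Tendsto (fun j => (1 - t j).toReal * ∫ x, g x ∂(ρ : Measure X)
          + (t j).toReal * ∫ x, g x ∂μ) atTop (𝓝 (1 * (∫ x, g x ∂(ρ : Measure X))
          + 0 * ∫ x, g x ∂μ)) :=
        (h1tr.mul (tendsto_const_nhds (x := ∫ x, g x ∂(ρ : Measure X)))).add
          (htr.mul (tendsto_const_nhds (x := ∫ x, g x ∂μ)))
      simpa using hconv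
    exact mem_closure_of_tendsto htend (Filter.Eventually.of_forall hmem)
  exact closure_minimal hsub isClosed_closure
end

section
/- Suppose (X,f) is a dynamical system admitting a nondecreasing sequence of f-invariant compact subsets X_n ⊆ X (n ∈ ℕ+) with closure(∪_{n≥1} X_n) = X, such that every subsystem (X_n, f|_{X_n}) has the shadowing property and is transitive, and f|_{X_1} has a periodic point. Then every point x whose forward orbit is dense in X is Banach upper recurrent, i.e. Trans ⊆ Rec_Ban^up. -/
open Filter Topology MeasureTheory
open scoped ENNReal NNReal

section Densities

open scoped Classical in
/-- The Banach upper density `B*(S) = limsup_{|I|→∞} |S ∩ I|/|I|`. -/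
noncomputable def upperBanachDensity (S : Set ℕ) : ℝ :=
  Filter.limsup (fun n : ℕ =>
    ⨆ a : ℕ, (((Finset.Ico a (a + n)).filter (fun i => i ∈ S)).card : ℝ) / n) Filter.atTop

variable {X : Type*} [MetricSpace X]

/-- The set of Banach upper recurrent points. -/
def RecBanUp (f : X → X) : Set X :=
  {x | ∀ ε > (0:ℝ), 0 < upperBanachDensity {n : ℕ | 1 ≤ n ∧ dist (f^[n] x) x < ε}}

end Densities


private lemma iter_unif {X : Type*} [MetricSpace X] [CompactSpace X] (f : X → X)
    (hf : Continuous f) (L : ℕ) {r : ℝ} (hr : 0 < r) :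
    ∃ η > (0:ℝ), ∀ u v : X, dist u v < η → ∀ i ≤ L, dist (f^[i] u) (f^[i] v) < r := by
  induction L with
  | zero =>
    exact ⟨r, hr, fun u v h i hi => by
      have : i = 0 := Nat.le_zero.mp hi
      simpa [this] using h⟩
  | succ L ih =>
    obtain ⟨η, hη, hgood⟩ := ih
    have hu : UniformContinuous (f^[L+1]) :=
      CompactSpace.uniformContinuous_of_continuous (hf.iterate _)
    obtain ⟨η', hη', hgood'⟩ := Metric.uniformContinuous_iff.mp hu r hr
    refine ⟨min η η', lt_min hη hη', fun u v h i hi => ?_⟩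
    by_cases hiL : i ≤ L
    · exact hgood u v (lt_of_lt_of_le h (min_le_left _ _)) i hiL
    · have : i = L + 1 := by omega
      subst this
      exact hgood' (lt_of_lt_of_le h (min_le_right _ _))

theorem trans_subset_recBanUp
    {X : Type*} [MetricSpace X] [CompactSpace X] [Nontrivial X]
    [MeasurableSpace X] [BorelSpace X]
    (f : X → X) (hf : Continuous f)
    (Xn : ℕ → Set X) (hmono : Monotone Xn)
    (hcomp : ∀ n, IsCompact (Xn n)) (hinv : ∀ n, Set.MapsTo f (Xn n) (Xn n))
    (hdense : closure (⋃ n, Xn n) = Set.univ)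
    (hshadow : ∀ n, ShadowingOn f (Xn n)) (htrans : ∀ n, TransitiveOn f (Xn n))
    (hper : ∃ x ∈ Xn 0, ∃ p : ℕ, 0 < p ∧ f^[p] x = x) :
    TransPts f ⊆ RecBanUp f := by
  intro x hx
  have hxd : Dense (Set.range fun n : ℕ => f^[n] x) := hx
  intro ε hε
  -- find z in some X_m close to x
  have hxcl : x ∈ closure (⋃ n, Xn n) := by rw [hdense]; trivial
  obtain ⟨z, hzU, hzx⟩ := Metric.mem_closure_iff.mp hxcl (ε/8) (by linarith)
  obtain ⟨m, hzm⟩ := Set.mem_iUnion.mp hzU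
  obtain ⟨δ, hδpos, hshad⟩ := hshadow m (ε/8) (by linarith)
  set δ' : ℝ := min (δ/2) (ε/8) with hδ'def
  have hδ'pos : 0 < δ' := lt_min (by linarith) (by linarith)
  obtain ⟨n₀, hn₀, a, ha⟩ := htrans m (Metric.ball z δ') (Metric.ball z δ')
    Metric.isOpen_ball Metric.isOpen_ball
    ⟨z, Metric.mem_ball_self hδ'pos, hzm⟩ ⟨z, Metric.mem_ball_self hδ'pos, hzm⟩
  obtain ⟨⟨haz, haA⟩, hafz⟩ := ha
  rw [Metric.mem_ball] at haz
  have hafz' : dist (f^[n₀] a) z < δ' := by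
    simpa [Metric.mem_ball] using hafz
  have hn₀pos : 0 < n₀ := hn₀
  -- periodic pseudo-orbit
  set w : ℕ → X := fun j => f^[j % n₀] a with hw
  have hwA : ∀ j, w j ∈ Xn m := fun j => ((hinv m).iterate _) haA
  have hwp : ∀ j, dist (w (j+1)) (f (w j)) < δ := by
    intro j
    have hjr : j % n₀ < n₀ := Nat.mod_lt _ hn₀pos
    have hfw : f (w j) = f^[j % n₀ + 1] a := by
      rw [hw]
      exact (Function.iterate_succ_apply' f (j % n₀) a).symm
    by_cases hcase : j % n₀ + 1 = n₀
    · have hdm := Nat.div_add_mod j n₀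
      have hj : j + 1 = n₀ * (j / n₀ + 1) := by
        calc j + 1 = n₀ * (j / n₀) + (j % n₀ + 1) := by omega
          _ = n₀ * (j / n₀) + n₀ := by rw [hcase]
          _ = n₀ * (j / n₀ + 1) := by ring
      have h1 : (j+1) % n₀ = 0 := by rw [hj]; exact Nat.mul_mod_right _ _
      have hw1 : w (j+1) = a := by rw [hw]; simp [h1]
      rw [hw1, hfw, hcase]
      calc dist a (f^[n₀] a) ≤ dist a z + dist z (f^[n₀] a) := dist_triangle _ _ _
        _ = dist a z + dist (f^[n₀] a) z := by rw [dist_comm z]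
        _ < δ' + δ' := by linarith
        _ ≤ δ := by
            have := min_le_left (δ/2) (ε/8)
            rw [hδ'def]; linarith [min_le_left (δ/2) (ε/8)]
    · have h2lt : 1 < n₀ := by omega
      have h1 : (j+1) % n₀ = j % n₀ + 1 := by
        rw [Nat.add_mod, Nat.mod_eq_of_lt h2lt, Nat.mod_eq_of_lt (by omega)]
      have hw1 : w (j+1) = f^[j % n₀ + 1] a := by rw [hw]; simp only [h1]
      rw [hw1, hfw, dist_self]
      exact hδpos
  obtain ⟨y, hyA, hsy⟩ := hshad w hwA hwp
  -- y returns near x along multiples of n₀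
  have hδ'ε : δ' ≤ ε/8 := min_le_right _ _
  have hkey : ∀ k : ℕ, dist (f^[k * n₀] y) x < 3 * ε / 8 := by
    intro k
    have h1 := hsy (k * n₀)
    have h2 : w (k * n₀) = a := by rw [hw]; simp [Nat.mul_mod_left]
    rw [h2] at h1
    calc dist (f^[k * n₀] y) x
        ≤ dist (f^[k * n₀] y) a + dist a z + dist z x := dist_triangle4 _ _ _ _
      _ = dist (f^[k * n₀] y) a + dist a z + dist x z := by rw [dist_comm z x]
      _ < ε/8 + δ' + ε/8 := by linarith
      _ ≤ 3 * ε / 8 := by linarith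
  -- now bound the Banach density
  have hS : ∀ n : ℕ, 2 * n₀ + 1 ≤ n →
      (1:ℝ)/(2*n₀) ≤ ⨆ a : ℕ, (((Finset.Ico a (a + n)).filter
        (fun i => i ∈ {n : ℕ | 1 ≤ n ∧ dist (f^[n] x) x < ε})).card : ℝ) / n := by
    intro n hn
    obtain ⟨η, hηpos, hgood⟩ := iter_unif f hf n (show (0:ℝ) < ε/2 by linarith)
    obtain ⟨p, hpball, hprange⟩ := (Metric.dense_iff.mp hxd) y η hηpos
    obtain ⟨M, rfl⟩ := hprange
    rw [Metric.mem_ball] at hpball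
    obtain ⟨K, hKdef⟩ : ∃ K, K = (n - 1) / n₀ := ⟨_, rfl⟩
    have hKmul : K * n₀ ≤ n - 1 := by rw [hKdef]; exact Nat.div_mul_le_self _ _
    have hnpos : 0 < n := by omega
    -- each time M + k*n₀ (1 ≤ k ≤ K) is a return time in the window
    have hmem : ∀ k, 1 ≤ k → k ≤ K →
        (M + k * n₀) ∈ (Finset.Ico M (M + n)).filter
          (fun i => i ∈ {n : ℕ | 1 ≤ n ∧ dist (f^[n] x) x < ε}) := by
      intro k hk1 hkK
      have hkn : k * n₀ ≤ n - 1 := le_trans (Nat.mul_le_mul_right _ hkK) hKmul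
      have hknn : k * n₀ ≤ n := by omega
      refine Finset.mem_filter.mpr ⟨Finset.mem_Ico.mpr ⟨by omega, by omega⟩, ?_⟩
      refine ⟨by nlinarith [hk1, hn₀pos], ?_⟩
      have heq : f^[M + k * n₀] x = f^[k * n₀] (f^[M] x) := by
        rw [add_comm, Function.iterate_add_apply]
      rw [heq]
      calc dist (f^[k * n₀] (f^[M] x)) x
          ≤ dist (f^[k * n₀] (f^[M] x)) (f^[k * n₀] y) + dist (f^[k * n₀] y) x :=
            dist_triangle _ _ _
        _ < ε/2 + 3 * ε / 8 := by
            have := hgood (f^[M] x) y hpball (k * n₀) hknn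
            linarith [hkey k]
        _ < ε := by linarith
    have hinj : Function.Injective (fun k : ℕ => M + k * n₀) := by
      intro k1 k2 h
      simp only [add_right_inj] at h
      exact Nat.eq_of_mul_eq_mul_right hn₀pos h
    have hsub : (Finset.Icc 1 K).image (fun k => M + k * n₀) ⊆
        (Finset.Ico M (M + n)).filter
          (fun i => i ∈ {n : ℕ | 1 ≤ n ∧ dist (f^[n] x) x < ε}) := by
      intro t ht
      obtain ⟨k, hk, rfl⟩ := Finset.mem_image.mp ht
      obtain ⟨hk1, hkK⟩ := Finset.mem_Icc.mp hk
      exact hmem k hk1 hkK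
    have hcard : K ≤ ((Finset.Ico M (M + n)).filter
        (fun i => i ∈ {n : ℕ | 1 ≤ n ∧ dist (f^[n] x) x < ε})).card := by
      calc K = ((Finset.Icc 1 K).image (fun k => M + k * n₀)).card := by
            rw [Finset.card_image_of_injective _ hinj, Nat.card_Icc]; omega
        _ ≤ _ := Finset.card_le_card hsub
    have hbdd : BddAbove (Set.range fun a : ℕ =>
        (((Finset.Ico a (a + n)).filter
          (fun i => i ∈ {n : ℕ | 1 ≤ n ∧ dist (f^[n] x) x < ε})).card : ℝ) / n) := by
      refine ⟨1, ?_⟩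
      rintro _ ⟨b, rfl⟩
      rw [div_le_one (by positivity)]
      calc ((((Finset.Ico b (b + n)).filter _).card : ℕ) : ℝ)
          ≤ ((Finset.Ico b (b + n)).card : ℝ) := by
            exact_mod_cast Finset.card_filter_le _ _
        _ = n := by simp [Nat.card_Ico]
    refine le_trans ?_ (le_ciSup hbdd M)
    -- 1/(2 n₀) ≤ K / n
    have hnat : n ≤ 2 * (n₀ * K) := by
      have hdm := Nat.div_add_mod (n-1) n₀
      have hmod : (n-1) % n₀ < n₀ := Nat.mod_lt _ hn₀pos
      have hK' : n₀ * K = n₀ * ((n-1)/n₀) := by rw [hKdef]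
      obtain ⟨P, hP⟩ : ∃ P, n₀ * ((n-1) / n₀) = P := ⟨_, rfl⟩
      obtain ⟨r, hr⟩ : ∃ r, (n-1) % n₀ = r := ⟨_, rfl⟩
      rw [hP, hr] at hdm
      rw [hr] at hmod
      rw [hK', hP]
      omega
    have h2 : (1:ℝ)/(2*n₀) ≤ (K:ℝ)/n := by
      rw [div_le_div_iff₀ (by positivity) (by positivity)]
      have : (n:ℝ) ≤ 2 * (n₀ * K) := by exact_mod_cast hnat
      nlinarith
    refine le_trans h2 ?_
    gcongr

  -- conclude via limsup
  have hUBD : upperBanachDensity {n : ℕ | 1 ≤ n ∧ dist (f^[n] x) x < ε} =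
      Filter.limsup (fun n : ℕ =>
        ⨆ a : ℕ, (((Finset.Ico a (a + n)).filter
          (fun i => i ∈ {n : ℕ | 1 ≤ n ∧ dist (f^[n] x) x < ε})).card : ℝ) / n)
        Filter.atTop := by
    unfold upperBanachDensity
    congr!
  rw [hUBD]
  have hc : (0:ℝ) < 1/(2*n₀) := by positivity
  refine lt_of_lt_of_le hc (Filter.le_limsup_of_frequently_le ?_ ?_)
  · exact ((Filter.eventually_atTop.mpr ⟨2*n₀+1, fun n hn => hS n hn⟩).frequently)
  · refine Filter.isBoundedUnder_of ⟨1, fun n => ?_⟩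
    refine ciSup_le (fun b => ?_)
    rcases Nat.eq_zero_or_pos n with h0 | h0
    · simp [h0]
    · rw [div_le_one (by positivity)]
      calc ((((Finset.Ico b (b + n)).filter _).card : ℕ) : ℝ)
          ≤ ((Finset.Ico b (b + n)).card : ℝ) := by
            exact_mod_cast Finset.card_filter_le _ _
        _ = n := by simp [Nat.card_Ico]
end

section
/- Let (X,f) be a dynamical system and Y ⊆ X a nonempty compact f-invariant subset. If there exists φ₀ ∈ C^0(Y,ℝ) with I_{φ₀}(f|_Y) ≠ ∅, then the set 𝒞* = {φ ∈ C^0(X,ℝ) : I_φ(f) ∩ Y ≠ ∅} is open and dense in C^0(X,ℝ) with the sup norm. -/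
open Filter Topology MeasureTheory
open scoped ENNReal NNReal

section Birkhoff

variable {X : Type*} [MetricSpace X]

/-- The Birkhoff average `(1/n) ∑_{i=0}^{n-1} φ(f^i(x))`. -/
noncomputable def birkhoffAvg (f : X → X) (φ : X → ℝ) (n : ℕ) (x : X) : ℝ :=
  (∑ i ∈ Finset.range n, φ (f^[i] x)) / n

/-- The `φ`-irregular set `I_φ(f)`. -/
def IrregularSet (f : X → X) (φ : X → ℝ) : Set X :=
  {x | ¬ ∃ c : ℝ, Tendsto (fun n => birkhoffAvg f φ n x) atTop (nhds c)}

end Birkhoff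

section Helpers

variable {X : Type*} [MetricSpace X]

lemma birkhoffAvg_abs_le [CompactSpace X] (f : X → X) (φ : C(X, ℝ)) (n : ℕ) (x : X) :
    |birkhoffAvg f ⇑φ n x| ≤ ‖φ‖ := by
  rcases Nat.eq_zero_or_pos n with rfl | hn
  · simp [birkhoffAvg, norm_nonneg]
  · have h1 : |∑ i ∈ Finset.range n, φ (f^[i] x)| ≤ n * ‖φ‖ := by
      calc |∑ i ∈ Finset.range n, φ (f^[i] x)|
          ≤ ∑ i ∈ Finset.range n, |φ (f^[i] x)| := Finset.abs_sum_le_sum_abs _ _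
        _ ≤ ∑ _i ∈ Finset.range n, ‖φ‖ :=
            Finset.sum_le_sum fun i _ => φ.norm_coe_le_norm (f^[i] x)
        _ = n * ‖φ‖ := by simp [Finset.sum_const, mul_comm]
    have hn' : (0 : ℝ) < n := by exact_mod_cast hn
    rw [birkhoffAvg, abs_div, abs_of_pos hn', div_le_iff₀ hn']
    linarith [h1]

lemma birkhoffAvg_add (f : X → X) (φ ψ : X → ℝ) (n : ℕ) (x : X) :
    birkhoffAvg f (fun z => φ z + ψ z) n x
      = birkhoffAvg f φ n x + birkhoffAvg f ψ n x := by
  simp [birkhoffAvg, Finset.sum_add_distrib, add_div]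

lemma birkhoffAvg_smul (f : X → X) (φ : X → ℝ) (c : ℝ) (n : ℕ) (x : X) :
    birkhoffAvg f (fun z => c * φ z) n x = c * birkhoffAvg f φ n x := by
  simp [birkhoffAvg, ← Finset.mul_sum, mul_div_assoc]

lemma liminf_lt_limsup_of_irregular {a : ℕ → ℝ} {M : ℝ} (hb : ∀ n, |a n| ≤ M)
    (h : ¬ ∃ c : ℝ, Tendsto a atTop (nhds c)) :
    liminf a atTop < limsup a atTop := by
  have hba : IsBoundedUnder (· ≤ ·) atTop a :=
    isBoundedUnder_of ⟨M, fun n => (abs_le.1 (hb n)).2⟩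
  have hbb : IsBoundedUnder (· ≥ ·) atTop a :=
    isBoundedUnder_of ⟨-M, fun n => (abs_le.1 (hb n)).1⟩
  rcases lt_or_eq_of_le (liminf_le_limsup hba hbb) with hlt | heq
  · exact hlt
  · exact absurd ⟨limsup a atTop, tendsto_of_liminf_eq_limsup heq rfl hba hbb⟩ h

lemma irregular_of_liminf_lt_limsup {a : ℕ → ℝ}
    (h : liminf a atTop < limsup a atTop) :
    ¬ ∃ c : ℝ, Tendsto a atTop (nhds c) := by
  rintro ⟨c, hc⟩
  rw [hc.liminf_eq, hc.limsup_eq] at h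
  exact lt_irrefl _ h

lemma restrict_iterate_coe {f : X → X} {Y : Set X} (hfY : Set.MapsTo f Y Y)
    (y : Y) (i : ℕ) : ((hfY.restrict)^[i] y : X) = f^[i] (y : X) := by
  induction i with
  | zero => rfl
  | succ n ih =>
      rw [Function.iterate_succ_apply', Function.iterate_succ_apply',
        Set.MapsTo.val_restrict_apply, ih]

end Helpers

theorem irregular_functions_open_dense
    {X : Type*} [MetricSpace X] [CompactSpace X] [Nontrivial X]
    (f : X → X) (hf : Continuous f)
    (Y : Set X) (hYne : Y.Nonempty) (hYcomp : IsCompact Y) (hfY : Set.MapsTo f Y Y)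
    (φ₀ : C(Y, ℝ))
    (h : ∃ y : Y, ¬ ∃ c : ℝ, Tendsto
      (fun n : ℕ => (∑ i ∈ Finset.range n, φ₀ ((hfY.restrict)^[i] y)) / n)
      atTop (nhds c)) :
    IsOpen {φ : C(X, ℝ) | (IrregularSet f ⇑φ ∩ Y).Nonempty} ∧
    Dense {φ : C(X, ℝ) | (IrregularSet f ⇑φ ∩ Y).Nonempty} := by
  constructor
  · -- Openness
    rw [Metric.isOpen_iff]
    rintro φ ⟨x, hxI, hxY⟩
    set a : ℕ → ℝ := fun n => birkhoffAvg f ⇑φ n x with ha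
    have hgap : liminf a atTop < limsup a atTop :=
      liminf_lt_limsup_of_irregular (fun n => birkhoffAvg_abs_le f φ n x) hxI
    set δ : ℝ := limsup a atTop - liminf a atTop with hδ
    have hδpos : 0 < δ := sub_pos.2 hgap
    refine ⟨δ / 4, by positivity, ?_⟩
    intro ψ hψ
    rw [Metric.mem_ball] at hψ
    set b : ℕ → ℝ := fun n => birkhoffAvg f ⇑ψ n x with hb
    set d : ℝ := ‖ψ - φ‖ with hd
    have hdδ : d < δ / 4 := by
      rw [hd, ← dist_eq_norm]; exact hψ
    have hdiff : ∀ n, |b n - a n| ≤ d := by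
      intro n
      have : b n - a n = birkhoffAvg f ⇑(ψ - φ) n x := by
        have hcoe : ⇑(ψ - φ) = fun z => ψ z + (-1 : ℝ) * φ z := by
          ext z; simp [sub_eq_add_neg]
        rw [hcoe, birkhoffAvg_add f (⇑ψ) (fun z => (-1 : ℝ) * φ z) n x,
          birkhoffAvg_smul f (⇑φ) (-1) n x]
        ring
      rw [this]
      exact birkhoffAvg_abs_le f (ψ - φ) n x
    -- boundedness facts
    have hbnd : ∀ n, |b n| ≤ ‖ψ‖ := fun n => birkhoffAvg_abs_le f ψ n x
    have hand : ∀ n, |a n| ≤ ‖φ‖ := fun n => birkhoffAvg_abs_le f φ n x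
    have hbba : IsBoundedUnder (· ≤ ·) atTop b :=
      isBoundedUnder_of ⟨‖ψ‖, fun n => (abs_le.1 (hbnd n)).2⟩
    have hbbb : IsBoundedUnder (· ≥ ·) atTop b :=
      isBoundedUnder_of ⟨-‖ψ‖, fun n => (abs_le.1 (hbnd n)).1⟩
    have haba : IsBoundedUnder (· ≤ ·) atTop a :=
      isBoundedUnder_of ⟨‖φ‖, fun n => (abs_le.1 (hand n)).2⟩
    have habb : IsBoundedUnder (· ≥ ·) atTop a :=
      isBoundedUnder_of ⟨-‖φ‖, fun n => (abs_le.1 (hand n)).1⟩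
    -- limsup a ≤ limsup b + d
    have h1 : limsup a atTop ≤ limsup b atTop + d := by
      have hle : ∀ n, a n ≤ b n + d := fun n => by
        have := (abs_le.1 (hdiff n)).1; linarith
      calc limsup a atTop ≤ limsup (fun n => b n + d) atTop :=
            limsup_le_limsup (Eventually.of_forall hle)
              habb.isCoboundedUnder_le
              (isBoundedUnder_of ⟨‖ψ‖ + d, fun n => by
                have := (abs_le.1 (hbnd n)).2; linarith⟩)
        _ = limsup b atTop + d :=
            limsup_add_const atTop b d hbba hbbb.isCoboundedUnder_le
    -- liminf b ≤ liminf a + d  (from liminf a ≥ liminf b - d):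
    have h2 : liminf b atTop ≤ liminf a atTop + d := by
      have hle : ∀ n, b n ≤ a n + d := fun n => by
        have := (abs_le.1 (hdiff n)).2; linarith
      calc liminf b atTop ≤ liminf (fun n => a n + d) atTop :=
            liminf_le_liminf (Eventually.of_forall hle)
              hbbb
              ((isBoundedUnder_of ⟨‖φ‖ + d, fun n => by
                  have := (abs_le.1 (hand n)).2; linarith⟩ :
                  IsBoundedUnder (· ≤ ·) atTop (fun n => a n + d)).isCoboundedUnder_ge)
        _ = liminf a atTop + d :=
            liminf_add_const atTop a d haba.isCoboundedUnder_ge habb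
    have hgap' : liminf b atTop < limsup b atTop := by
      have : liminf a atTop + d < limsup a atTop - d := by
        rw [hδ] at hdδ; linarith
      calc liminf b atTop ≤ liminf a atTop + d := h2
        _ < limsup a atTop - d := this
        _ ≤ limsup b atTop := by linarith [h1]
    exact ⟨x, irregular_of_liminf_lt_limsup hgap', hxY⟩
  · -- Density
    obtain ⟨y, hy⟩ := h
    obtain ⟨g, hg⟩ := ContinuousMap.exists_restrict_eq (Y := ℝ) hYcomp.isClosed φ₀
    have hgY : ∀ z : Y, g (z : X) = φ₀ z := fun z => by
      rw [← hg]; rfl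
    -- the Birkhoff averages of g along the orbit of y equal those of φ₀
    have hkey : ∀ n : ℕ, birkhoffAvg f ⇑g n (y : X)
        = (∑ i ∈ Finset.range n, φ₀ ((hfY.restrict)^[i] y)) / n := by
      intro n
      unfold birkhoffAvg
      congr 1
      apply Finset.sum_congr rfl
      intro i _
      rw [← restrict_iterate_coe hfY y i, hgY]
    rw [Metric.dense_iff]
    intro φ ε hε
    by_cases hφ : (y : X) ∈ IrregularSet f ⇑φ
    · exact ⟨φ, Metric.mem_ball_self hε, ⟨(y : X), hφ, y.2⟩⟩
    · simp only [IrregularSet, Set.mem_setOf_eq, not_not] at hφ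
      obtain ⟨c, hc⟩ := hφ
      set t : ℝ := ε / (2 * (‖g‖ + 1)) with ht
      have hgn : (0 : ℝ) < ‖g‖ + 1 := by positivity
      have htpos : 0 < t := by positivity
      refine ⟨φ + t • g, ?_, ⟨(y : X), ?_, y.2⟩⟩
      · rw [Metric.mem_ball, dist_eq_norm]
        have : φ + t • g - φ = t • g := by abel
        rw [this]
        have h0 : ‖t • g‖ ≤ |t| * ‖g‖ := by
          simpa [Real.norm_eq_abs] using norm_smul_le t g
        rw [abs_of_pos htpos] at h0
        have h1 : t * ‖g‖ ≤ t * (‖g‖ + 1) := by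
          apply mul_le_mul_of_nonneg_left (by linarith) htpos.le
        have h2 : t * (‖g‖ + 1) = ε / 2 := by
          rw [ht, div_mul_eq_mul_div, mul_div_mul_right _ _ hgn.ne']
        linarith
      · -- y is irregular for φ + t • g
        intro hcon
        obtain ⟨c', hc'⟩ := hcon
        apply hy
        refine ⟨(c' - c) / t, ?_⟩
        have hb : ∀ n, birkhoffAvg f ⇑(φ + t • g) n (y : X)
            = birkhoffAvg f ⇑φ n (y : X) + t * birkhoffAvg f ⇑g n (y : X) := by
          intro n
          have hcoe : ⇑(φ + t • g) = fun z => φ z + t * g z := by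
            ext z; simp
          rw [hcoe, birkhoffAvg_add f (⇑φ) (fun z => t * g z) n (y : X),
            birkhoffAvg_smul f (⇑g) t n (y : X)]
        have hgt : Tendsto (fun n => birkhoffAvg f ⇑g n (y : X)) atTop
            (nhds ((c' - c) / t)) := by
          have : (fun n => birkhoffAvg f ⇑g n (y : X))
              = fun n => (birkhoffAvg f ⇑(φ + t • g) n (y : X)
                  - birkhoffAvg f ⇑φ n (y : X)) / t := by
            ext n
            rw [hb n]
            field_simp
            ring
          rw [this]
          exact ((hc'.sub hc).div_const t)
        have : (fun n : ℕ => (∑ i ∈ Finset.range n, φ₀ ((hfY.restrict)^[i] y)) / n)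
            = fun n => birkhoffAvg f ⇑g n (y : X) := by
          ext n; rw [hkey n]
        rw [this]
        exact hgt
end

section
/- Suppose a dynamical system (X,f) is transitive and has the shadowing property. If there is a fixed point x₀ ∈ X (i.e. f(x₀) = x₀), then (X,f) is mixing. -/
open Filter Topology MeasureTheory
open scoped ENNReal NNReal

section MixDef

variable {X : Type*} [MetricSpace X]

/-- Topological mixing. -/
def Mixing (f : X → X) : Prop :=
  ∀ U V : Set X, IsOpen U → IsOpen V → U.Nonempty → V.Nonempty →
    ∃ N : ℕ, ∀ n ≥ N, (U ∩ f^[n] ⁻¹' V).Nonempty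

end MixDef

theorem mixing_of_transitive_shadowing_fixedPoint
    {X : Type*} [MetricSpace X] [CompactSpace X] [Nontrivial X]
    (f : X → X) (hf : Continuous f)
    (htrans : TopTransitive f) (hshadow : Shadowing f)
    (x₀ : X) (hx₀ : f x₀ = x₀) :
    Mixing f := by
  rintro U V hU hV ⟨u, hu⟩ ⟨v, hv⟩
  obtain ⟨ε, hε, hεU⟩ := Metric.isOpen_iff.1 hU u hu
  obtain ⟨ε', hε', hεV⟩ := Metric.isOpen_iff.1 hV v hv
  obtain ⟨δ, hδ, hsh⟩ := hshadow (min ε ε') (lt_min hε hε')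
  obtain ⟨η, hη, hηf⟩ := Metric.continuous_iff.1 hf u (δ/2) (by linarith)
  obtain ⟨k₁, hk₁, a, ha, hfa⟩ := htrans (Metric.ball u η) (Metric.ball x₀ (δ/2))
    Metric.isOpen_ball Metric.isOpen_ball ⟨u, Metric.mem_ball_self hη⟩
    ⟨x₀, Metric.mem_ball_self (by linarith)⟩
  obtain ⟨k₂, hk₂, b, hb, hfb⟩ := htrans (Metric.ball x₀ (δ/2)) (Metric.ball v (δ/2))
    Metric.isOpen_ball Metric.isOpen_ball ⟨x₀, Metric.mem_ball_self (by linarith)⟩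
    ⟨v, Metric.mem_ball_self (by linarith)⟩
  rw [Set.mem_preimage, Metric.mem_ball] at hfa hfb
  rw [Metric.mem_ball] at ha hb
  refine ⟨k₁ + k₂ + 1, fun n hn => ?_⟩
  set j := n - k₂ with hj
  have hjk : k₁ + 1 ≤ j := by omega
  have hjn : j < n := by omega
  have hnj : n - j = k₂ := by omega
  set x : ℕ → X := fun i =>
    if i = 0 then u
    else if i < k₁ then f^[i] a
    else if i < j then x₀
    else if i < n then f^[i - j] b
    else f^[i - n] v with hxdef
  have hx0 : x 0 = u := by simp [hxdef]
  have hxa : ∀ i, 1 ≤ i → i < k₁ → x i = f^[i] a := by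
    intro i h1 h2; simp only [hxdef]; rw [if_neg (by omega), if_pos h2]
  have hxo : ∀ i, k₁ ≤ i → i < j → x i = x₀ := by
    intro i h1 h2; simp only [hxdef]; rw [if_neg (by omega), if_neg (by omega), if_pos h2]
  have hxb : ∀ i, j ≤ i → i < n → x i = f^[i - j] b := by
    intro i h1 h2; simp only [hxdef]
    rw [if_neg (by omega), if_neg (by omega), if_neg (by omega), if_pos h2]
  have hxv : ∀ i, n ≤ i → x i = f^[i - n] v := by
    intro i h1; simp only [hxdef]
    rw [if_neg (by omega), if_neg (by omega), if_neg (by omega), if_neg (by omega)]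
  have hfix : ∀ m : ℕ, f^[m] x₀ = x₀ := by
    intro m; induction m with
    | zero => rfl
    | succ m ih => rw [Function.iterate_succ_apply', ih, hx₀]
  have hpseudo : ∀ i, dist (x (i + 1)) (f (x i)) < δ := by
    intro i
    rcases Nat.eq_zero_or_pos i with h0 | h0
    · subst h0
      rw [hx0]
      rcases lt_or_ge 1 k₁ with h1 | h1
      · rw [hxa 1 le_rfl h1]
        calc dist (f^[1] a) (f u) = dist (f a) (f u) := by rw [Function.iterate_one]
          _ < δ / 2 := hηf a ha
          _ < δ := by linarith
      · have hk1 : k₁ = 1 := by omega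
        rw [hxo 1 (by omega) (by omega)]
        calc dist x₀ (f u) ≤ dist x₀ (f a) + dist (f a) (f u) := dist_triangle _ _ _
          _ < δ / 2 + δ / 2 := by
              refine add_lt_add ?_ (hηf a ha)
              rw [dist_comm]
              simpa [hk1] using hfa
          _ = δ := by ring
    · rcases lt_or_ge (i + 1) k₁ with h1 | h1
      · rw [hxa (i+1) (by omega) h1, hxa i h0 (by omega), Function.iterate_succ_apply']
        simpa using hδ
      rcases Nat.lt_or_ge i k₁ with h2 | h2
      · -- i + 1 = k₁, i ≥ 1
        have hik : i + 1 = k₁ := by omega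
        rw [hxo (i+1) (by omega) (by omega), hxa i h0 h2, ← Function.iterate_succ_apply' f i a,
          Nat.succ_eq_add_one, hik, dist_comm]
        linarith [hfa]
      rcases lt_or_ge (i + 1) j with h3 | h3
      · rw [hxo (i+1) (by omega) h3, hxo i h2 (by omega), hx₀]
        simpa using hδ
      rcases Nat.lt_or_ge i j with h4 | h4
      · -- i + 1 = j
        have hij : i + 1 = j := by omega
        rw [hxb (i+1) (by omega) (by omega), hxo i (by omega) h4, hx₀, hij, Nat.sub_self]
        simp only [Function.iterate_zero, id_eq]
        linarith [hb]
      rcases lt_or_ge (i + 1) n with h5 | h5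
      · rw [hxb (i+1) (by omega) h5, hxb i h4 (by omega)]
        have he : i + 1 - j = (i - j) + 1 := by omega
        rw [he, Function.iterate_succ_apply']
        simpa using hδ
      rcases Nat.lt_or_ge i n with h6 | h6
      · -- i + 1 = n
        have hin : i + 1 = n := by omega
        rw [hxv (i+1) (by omega), hxb i h4 h6, hin, Nat.sub_self,
          ← Function.iterate_succ_apply' f (i - j) b]
        have he : i - j + 1 = n - j := by omega
        rw [Nat.succ_eq_add_one, he, hnj]
        simp only [Function.iterate_zero, id_eq]
        rw [dist_comm]
        linarith [hfb]
      · rw [hxv (i+1) (by omega), hxv i h6]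
        have he : i + 1 - n = (i - n) + 1 := by omega
        rw [he, Function.iterate_succ_apply']
        simpa using hδ
  obtain ⟨y, hy⟩ := hsh x hpseudo
  refine ⟨y, ?_, ?_⟩
  · apply hεU
    have := hy 0
    rw [hx0, Function.iterate_zero, id_eq] at this
    exact Metric.mem_ball.2 (lt_of_lt_of_le this (min_le_left _ _))
  · apply Set.mem_preimage.2
    apply hεV
    have := hy n
    rw [hxv n le_rfl, Nat.sub_self, Function.iterate_zero, id_eq] at this
    exact Metric.mem_ball.2 (lt_of_lt_of_le this (min_le_right _ _))
end
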